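/- arXiv:0710.5944 — 4 statements merged into one kernel-verified Lean document; each statement's English description precedes it below -/
import Mathlib

section
/- Let K be a compact Hausdorff space and (f_n) a uniformly bounded sequence of continuous real-valued functions on K which has no pointwise convergent subsequence. Then the family of all pointwise cluster points of (f_n) on K has cardinality at least 2^{𝔠}, where 𝔠 = 2^{ℵ₀}. -/
open Filter Topology

noncomputable section

namespace Stmt9

/-- `s` lists elements of `N` that lie below all other elements of `N`. -/
def IsInit (s : List ℕ) (N : Set ℕ) : Prop :=
  (∀ a ∈ s, a ∈ N) ∧ ∀ a ∈ N, a ∉ s → ∀ b ∈ s, b < a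

variable (F : Set (List ℕ))

def Hits (N : Set ℕ) : Prop := ∃ s ∈ F, IsInit s N

/-- all elements of `N` are above all elements of `s`. -/
def Ab (s : Finset ℕ) (N : Set ℕ) : Prop := ∀ a ∈ N, ∀ b ∈ s, b < a

def Acp (s : Finset ℕ) (M : Set ℕ) : Prop :=
  ∀ N ⊆ M, N.Infinite → Ab s N → Hits F (↑s ∪ N)

def Rej (s : Finset ℕ) (M : Set ℕ) : Prop :=
  ∀ N ⊆ M, N.Infinite → ¬ Acp F s N

variable {F}

lemma acp_mono {s : Finset ℕ} {M N : Set ℕ} (h : N ⊆ M) (ha : Acp F s M) : Acp F s N :=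
  fun P hP hPi hab => ha P (hP.trans h) hPi hab

lemma rej_mono {s : Finset ℕ} {M N : Set ℕ} (h : N ⊆ M) (hr : Rej F s M) : Rej F s N :=
  fun P hP => hr P (hP.trans h)

lemma decide_one (s : Finset ℕ) {M : Set ℕ} (hM : M.Infinite) :
    ∃ N, N ⊆ M ∧ N.Infinite ∧ (Acp F s N ∨ Rej F s N) := by
  by_cases h : Rej F s M
  · exact ⟨M, subset_rfl, hM, Or.inr h⟩
  · simp only [Rej, not_forall] at h
    obtain ⟨N, hNM, hNi, hacc⟩ := h
    exact ⟨N, hNM, hNi, Or.inl (not_not.mp hacc)⟩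

lemma decide_list (L : List (Finset ℕ)) {M : Set ℕ} (hM : M.Infinite) :
    ∃ N, N ⊆ M ∧ N.Infinite ∧ ∀ s ∈ L, Acp F s N ∨ Rej F s N := by
  induction L generalizing M with
  | nil => exact ⟨M, subset_rfl, hM, by simp⟩
  | cons a L ih =>
    obtain ⟨N, hNM, hNi, hN⟩ := ih hM
    obtain ⟨P, hPN, hPi, hP⟩ := decide_one a hNi
    refine ⟨P, hPN.trans hNM, hPi, ?_⟩
    intro s hs
    rcases List.mem_cons.mp hs with rfl | hs
    · exact hP
    · rcases hN s hs with h | h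
      · exact Or.inl (acp_mono hPN h)
      · exact Or.inr (rej_mono hPN h)

/-- the set of naturals above everything in `s`. -/
def Sa (s : Finset ℕ) : Set ℕ := {a | ∀ b ∈ s, b < a}

lemma sa_compl_finite (s : Finset ℕ) : ((Sa s)ᶜ).Finite := by
  have : (Sa s)ᶜ ⊆ ⋃ b ∈ (s : Set ℕ), Set.Iic b := by
    intro a ha
    simp only [Sa, Set.mem_compl_iff, Set.mem_setOf_eq, not_forall] at ha
    obtain ⟨b, hb, hba⟩ := ha
    exact Set.mem_biUnion hb (not_lt.mp hba)
  exact Set.Finite.subset (Set.Finite.biUnion s.finite_toSet (fun _ _ => Set.finite_Iic _)) this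

lemma ab_iff_subset_sa {s : Finset ℕ} {N : Set ℕ} : Ab s N ↔ N ⊆ Sa s := Iff.rfl

lemma acp_of_inter {s : Finset ℕ} {M : Set ℕ} (h : Acp F s (M ∩ Sa s)) : Acp F s M := by
  intro N hNM hNi hab
  exact h N (fun a ha => ⟨hNM ha, hab a ha⟩) hNi hab

lemma rej_of_inter {s : Finset ℕ} {M : Set ℕ} (h : Rej F s (M ∩ Sa s)) : Rej F s M := by
  intro N hNM hNi hacc
  refine h (N ∩ Sa s) (fun a ha => ⟨hNM ha.1, ha.2⟩) ?_ (acp_mono Set.inter_subset_left hacc)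
  have : N ∩ Sa s = N \ (Sa s)ᶜ := by ext a; simp [Set.mem_diff]
  rw [this]
  exact hNi.diff (sa_compl_finite s)


/-- State for the first fusion. -/
structure St (F : Set (List ℕ)) (M₀ : Set ℕ) where
  pick : Finset ℕ
  curr : Set ℕ
  inf : curr.Infinite
  ab : Ab pick curr
  sub : curr ⊆ M₀
  dec : ∀ s ∈ pick.powerset, Acp F s curr ∨ Rej F s curr

variable {M₀ : Set ℕ}

def StepSpec (σ σ' : St F M₀) : Prop :=
  σ'.pick = insert (sInf σ.curr) σ.pick ∧ σ'.curr ⊆ σ.curr ∩ Set.Ioi (sInf σ.curr)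

lemma exists_step (σ : St F M₀) : ∃ σ' : St F M₀, StepSpec σ σ' := by
  set m := sInf σ.curr with hm
  have hmm : m ∈ σ.curr := Nat.sInf_mem σ.inf.nonempty
  have h1 : (σ.curr ∩ Set.Ioi m).Infinite := by
    have : σ.curr ∩ Set.Ioi m = σ.curr \ Set.Iic m := by ext a; simp [Set.mem_diff, not_le]
    rw [this]; exact σ.inf.diff (Set.finite_Iic m)
  obtain ⟨N, hN, hNi, hNdec⟩ := decide_list (F := F) ((insert m σ.pick).powerset.toList) h1
  refine ⟨⟨insert m σ.pick, N, hNi, ?_, ?_, ?_⟩, rfl, hN⟩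
  · intro a ha b hb
    rcases Finset.mem_insert.mp hb with rfl | hb
    · exact (hN ha).2
    · exact σ.ab a ((hN ha).1) b hb
  · exact fun a ha => σ.sub ((hN ha).1)
  · intro s hs
    exact hNdec s (Finset.mem_toList.mpr hs)

variable (F)

def st0 (hM₀ : M₀.Infinite) : St F M₀ := by
  refine ⟨∅, (decide_one (F := F) ∅ hM₀).choose, (decide_one (F := F) ∅ hM₀).choose_spec.2.1,
    ?_, (decide_one (F := F) ∅ hM₀).choose_spec.1, ?_⟩
  · intro a _ b hb; simp at hb
  · intro s hs
    simp only [Finset.powerset_empty, Finset.mem_singleton] at hs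
    subst hs
    exact (decide_one (F := F) ∅ hM₀).choose_spec.2.2

def chain (hM₀ : M₀.Infinite) : ℕ → St F M₀
  | 0 => st0 F hM₀
  | k + 1 => (exists_step (chain hM₀ k)).choose

lemma chain_spec (hM₀ : M₀.Infinite) (k : ℕ) :
    StepSpec (chain F hM₀ k) (chain F hM₀ (k + 1)) :=
  (exists_step (chain F hM₀ k)).choose_spec

variable (hM₀ : M₀.Infinite)

def mval (k : ℕ) : ℕ := sInf (chain F hM₀ k).curr

lemma mval_mem (k : ℕ) : mval F hM₀ k ∈ (chain F hM₀ k).curr :=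
  Nat.sInf_mem (chain F hM₀ k).inf.nonempty

lemma curr_succ_sub (k : ℕ) :
    (chain F hM₀ (k + 1)).curr ⊆ (chain F hM₀ k).curr ∩ Set.Ioi (mval F hM₀ k) :=
  (chain_spec F hM₀ k).2

lemma curr_anti : ∀ {i j : ℕ}, i ≤ j → (chain F hM₀ j).curr ⊆ (chain F hM₀ i).curr := by
  intro i j hij
  induction j with
  | zero => cases Nat.le_zero.mp hij; exact subset_rfl
  | succ j ih =>
    rcases Nat.lt_or_ge i (j+1) with h | h
    · exact ((curr_succ_sub F hM₀ j).trans Set.inter_subset_left).trans (ih (Nat.lt_succ_iff.mp h))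
    · cases Nat.le_antisymm hij h; exact subset_rfl

lemma mval_strictMono : StrictMono (mval F hM₀) := by
  apply strictMono_nat_of_lt_succ
  intro k
  exact ((curr_succ_sub F hM₀ k) (mval_mem F hM₀ (k+1))).2

lemma pick_eq (k : ℕ) :
    (chain F hM₀ k).pick = (Finset.range k).image (mval F hM₀) := by
  induction k with
  | zero => simp [chain, st0]
  | succ k ih =>
    rw [(chain_spec F hM₀ k).1, ih, Finset.range_add_one, Finset.image_insert]
    rfl

def Mstar : Set ℕ := Set.range (mval F hM₀)

lemma Mstar_infinite : (Mstar F hM₀).Infinite :=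
  Set.infinite_range_of_injective (mval_strictMono F hM₀).injective

lemma Mstar_sub : Mstar F hM₀ ⊆ M₀ := by
  rintro a ⟨k, rfl⟩
  exact (chain F hM₀ k).sub (mval_mem F hM₀ k)

lemma mval_mem_curr {k i : ℕ} (h : k ≤ i) : mval F hM₀ i ∈ (chain F hM₀ k).curr :=
  curr_anti F hM₀ h (mval_mem F hM₀ i)

lemma decided_Mstar {s : Finset ℕ} (hs : ↑s ⊆ Mstar F hM₀) (hne : s.Nonempty) :
    Acp F s (Mstar F hM₀) ∨ Rej F s (Mstar F hM₀) := by
  -- index set of s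
  have hinj : Set.InjOn (mval F hM₀) ((mval F hM₀) ⁻¹' ↑s) :=
    ((mval_strictMono F hM₀).injective.injOn)
  set Jf : Finset ℕ := s.preimage (mval F hM₀) hinj with hJf
  have hmemJ : ∀ j, j ∈ Jf ↔ mval F hM₀ j ∈ s := by
    intro j; simp [hJf, Finset.mem_preimage]
  have hJne : Jf.Nonempty := by
    obtain ⟨a, ha⟩ := hne
    obtain ⟨k, rfl⟩ := hs ha
    exact ⟨k, (hmemJ k).mpr ha⟩
  set j := Jf.max' hJne with hj
  have hmjs : mval F hM₀ j ∈ s := (hmemJ j).mp (Jf.max'_mem hJne)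
  have hsub : ↑s ⊆ (chain F hM₀ (j+1)).pick := by
    intro a ha
    obtain ⟨k, rfl⟩ := hs ha
    have : k ∈ Jf := (hmemJ k).mpr ha
    rw [pick_eq]
    exact Finset.mem_image_of_mem _ (Finset.mem_range.mpr (Nat.lt_succ_of_le (Jf.le_max' k this)))
  have hdec := (chain F hM₀ (j+1)).dec s (Finset.mem_powerset.mpr (by exact_mod_cast hsub))
  have hkey : Mstar F hM₀ ∩ Sa s ⊆ (chain F hM₀ (j+1)).curr := by
    rintro a ⟨⟨i, rfl⟩, hsa⟩
    have : mval F hM₀ j < mval F hM₀ i := hsa _ hmjs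
    have hij : j + 1 ≤ i := (mval_strictMono F hM₀).lt_iff_lt.mp this
    exact mval_mem_curr F hM₀ hij
  rcases hdec with h | h
  · exact Or.inl (acp_of_inter (acp_mono hkey h))
  · exact Or.inr (rej_of_inter (rej_mono hkey h))

def BadSet (s : Finset ℕ) : Set ℕ :=
  {a | a ∈ Mstar F hM₀ ∧ (∀ b ∈ s, b < a) ∧ Acp F (insert a s) (Mstar F hM₀)}

lemma badSet_finite {s : Finset ℕ} (hR : Rej F s (Mstar F hM₀)) :
    (BadSet F hM₀ s).Finite := by
  by_contra hinf
  rw [← Set.not_infinite, not_not] at hinf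
  refine hR (BadSet F hM₀ s) (fun a ha => ha.1) hinf ?_
  intro N hN hNi hab
  have hmN : sInf N ∈ N := Nat.sInf_mem hNi.nonempty
  set m := sInf N with hm
  have hmB := hN hmN
  have hacc : Acp F (insert m s) (Mstar F hM₀) := hmB.2.2
  have h1 : N \ {m} ⊆ Mstar F hM₀ := fun a ha => (hN ha.1).1
  have h2 : (N \ {m}).Infinite := hNi.diff (Set.finite_singleton m)
  have h3 : Ab (insert m s) (N \ {m}) := by
    intro a ha b hb
    rcases Finset.mem_insert.mp hb with rfl | hb
    · exact lt_of_le_of_ne (Nat.sInf_le ha.1) (fun h => ha.2 h.symm)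
    · exact hab a ha.1 b hb
  have := hacc (N \ {m}) h1 h2 h3
  have heq : (↑(insert m s) : Set ℕ) ∪ (N \ {m}) = ↑s ∪ N := by
    ext a
    simp only [Finset.coe_insert, Set.mem_union, Set.mem_insert_iff, Set.mem_diff,
      Set.mem_singleton_iff, Finset.mem_coe]
    constructor
    · rintro (( rfl | h) | ⟨h, _⟩)
      · exact Or.inr hmN
      · exact Or.inl h
      · exact Or.inr h
    · rintro (h | h)
      · exact Or.inl (Or.inr h)
      · by_cases hh : a = m
        · exact Or.inl (Or.inl hh)
        · exact Or.inr ⟨h, hh⟩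
  rwa [heq] at this

structure St2 (F : Set (List ℕ)) (M₀ : Set ℕ) (hM₀ : M₀.Infinite) where
  pick : Finset ℕ
  sub : ↑pick ⊆ Mstar F hM₀
  rej : ∀ s ∈ pick.powerset, Rej F s (Mstar F hM₀)

def StepSpec2 (σ σ' : St2 F M₀ hM₀) : Prop :=
  ∃ a, σ'.pick = insert a σ.pick ∧ a ∈ Mstar F hM₀ ∧ ∀ c ∈ σ.pick, c < a

lemma exists_step2 (σ : St2 F M₀ hM₀) : ∃ σ', StepSpec2 F hM₀ σ σ' := by
  classical
  have hBfin : (⋃ s ∈ σ.pick.powerset, BadSet F hM₀ s).Finite :=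
    Set.Finite.biUnion (σ.pick.powerset.finite_toSet)
      (fun s hs => badSet_finite F hM₀ (σ.rej s (by exact_mod_cast hs)))
  have hfin : ((⋃ s ∈ σ.pick.powerset, BadSet F hM₀ s) ∪ ↑σ.pick).Finite :=
    hBfin.union σ.pick.finite_toSet
  obtain ⟨β, hβ⟩ := hfin.bddAbove
  obtain ⟨a, haM, haβ⟩ := (Mstar_infinite F hM₀).exists_gt β
  have hgt : ∀ x ∈ (⋃ s ∈ σ.pick.powerset, BadSet F hM₀ s) ∪ ↑σ.pick, x < a :=
    fun x hx => lt_of_le_of_lt (hβ hx) haβ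
  refine ⟨⟨insert a σ.pick, ?_, ?_⟩, a, rfl, haM, fun c hc => hgt c (Or.inr hc)⟩
  · intro c hc
    rcases Finset.mem_insert.mp (by exact_mod_cast hc) with rfl | hc'
    · exact haM
    · exact σ.sub hc'
  · intro s hs
    rw [Finset.mem_powerset] at hs
    by_cases hasin : a ∈ s
    · set s' := s.erase a with hs'
      have hs'sub : s' ⊆ σ.pick := by
        intro c hc
        have := hs (Finset.mem_of_mem_erase hc)
        rcases Finset.mem_insert.mp this with rfl | h
        · exact absurd rfl (Finset.ne_of_mem_erase hc)
        · exact h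
      have hrej' : Rej F s' (Mstar F hM₀) := σ.rej s' (Finset.mem_powerset.mpr hs'sub)
      have hanb : a ∉ BadSet F hM₀ s' := by
        intro hmem
        exact lt_irrefl a (hgt a (Or.inl (Set.mem_biUnion
          (Finset.mem_coe.mpr (Finset.mem_powerset.mpr hs'sub)) hmem)))
      have habove : ∀ b ∈ s', b < a := fun b hb => hgt b (Or.inr (hs'sub hb))
      have hseq : s = insert a s' := by
        rw [hs', Finset.insert_erase hasin]
      have hsubM : ↑(insert a s') ⊆ Mstar F hM₀ := by
        intro c hc
        rcases Finset.mem_insert.mp (by exact_mod_cast hc) with rfl | h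
        · exact haM
        · exact σ.sub (hs'sub h)
      have hdec := decided_Mstar F hM₀ hsubM (Finset.insert_nonempty a s')
      rcases hdec with hA | hR
      · exact absurd ⟨haM, habove, hA⟩ hanb
      · rwa [hseq]
    · exact σ.rej s (Finset.mem_powerset.mpr (fun c hc => by
        rcases Finset.mem_insert.mp (hs hc) with rfl | h
        · exact absurd hc hasin
        · exact h))

variable (hRej : Rej F ∅ (Mstar F hM₀))

def st20 : St2 F M₀ hM₀ := by
  refine ⟨∅, by simp, ?_⟩
  intro s hs
  simp only [Finset.powerset_empty, Finset.mem_singleton] at hs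
  subst hs; exact hRej

def chain2 : ℕ → St2 F M₀ hM₀
  | 0 => st20 F hM₀ hRej
  | k + 1 => (exists_step2 F hM₀ (chain2 k)).choose

lemma chain2_spec (k : ℕ) :
    StepSpec2 F hM₀ (chain2 F hM₀ hRej k) (chain2 F hM₀ hRej (k + 1)) :=
  (exists_step2 F hM₀ (chain2 F hM₀ hRej k)).choose_spec

def bb (k : ℕ) : ℕ := (chain2_spec F hM₀ hRej k).choose

lemma bb_spec (k : ℕ) :
    (chain2 F hM₀ hRej (k+1)).pick = insert (bb F hM₀ hRej k) (chain2 F hM₀ hRej k).pick ∧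
    bb F hM₀ hRej k ∈ Mstar F hM₀ ∧ ∀ c ∈ (chain2 F hM₀ hRej k).pick, c < bb F hM₀ hRej k :=
  (chain2_spec F hM₀ hRej k).choose_spec

lemma pick2_mono {i j : ℕ} (h : i ≤ j) :
    (chain2 F hM₀ hRej i).pick ⊆ (chain2 F hM₀ hRej j).pick := by
  induction j with
  | zero => cases Nat.le_zero.mp h; exact subset_rfl
  | succ j ih =>
    rcases Nat.lt_or_ge i (j+1) with hh | hh
    · refine (ih (Nat.lt_succ_iff.mp hh)).trans ?_
      rw [(bb_spec F hM₀ hRej j).1]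
      exact Finset.subset_insert _ _
    · cases Nat.le_antisymm h hh; exact subset_rfl

lemma bb_mem_pick (k : ℕ) : bb F hM₀ hRej k ∈ (chain2 F hM₀ hRej (k+1)).pick := by
  rw [(bb_spec F hM₀ hRej k).1]; exact Finset.mem_insert_self _ _

lemma bb_strictMono : StrictMono (bb F hM₀ hRej) := by
  apply strictMono_nat_of_lt_succ
  intro k
  exact (bb_spec F hM₀ hRej (k+1)).2.2 _ (bb_mem_pick F hM₀ hRej k)

lemma rej_of_sub_range {t : Finset ℕ} (ht : ↑t ⊆ Set.range (bb F hM₀ hRej)) :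
    Rej F t (Mstar F hM₀) := by
  rcases t.eq_empty_or_nonempty with rfl | hne
  · exact hRej
  · have hinj : Set.InjOn (bb F hM₀ hRej) ((bb F hM₀ hRej) ⁻¹' ↑t) :=
      (bb_strictMono F hM₀ hRej).injective.injOn
    set Jf : Finset ℕ := t.preimage (bb F hM₀ hRej) hinj with hJf
    have hmemJ : ∀ j, j ∈ Jf ↔ bb F hM₀ hRej j ∈ t := by
      intro j; simp [hJf, Finset.mem_preimage]
    have hJne : Jf.Nonempty := by
      obtain ⟨a, ha⟩ := hne
      obtain ⟨k, rfl⟩ := ht ha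
      exact ⟨k, (hmemJ k).mpr ha⟩
    set j := Jf.max' hJne with hj
    have hsub : t ⊆ (chain2 F hM₀ hRej (j+1)).pick := by
      intro a ha
      obtain ⟨k, rfl⟩ := ht ha
      have hk : k ∈ Jf := (hmemJ k).mpr ha
      exact pick2_mono F hM₀ hRej (Nat.succ_le_succ (Jf.le_max' k hk))
        (bb_mem_pick F hM₀ hRej k)
    exact (chain2 F hM₀ hRej (j+1)).rej t (Finset.mem_powerset.mpr hsub)

theorem gp (F : Set (List ℕ)) {M₀ : Set ℕ} (hM₀ : M₀.Infinite) :
    ∃ M, M ⊆ M₀ ∧ M.Infinite ∧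
      ((∀ N, N ⊆ M → N.Infinite → Hits F N) ∨
       (∀ N, N ⊆ M → N.Infinite → ¬ Hits F N)) := by
  by_cases h : Rej F ∅ (Mstar F hM₀)
  · refine ⟨Set.range (bb F hM₀ h), ?_, ?_, Or.inr ?_⟩
    · rintro a ⟨k, rfl⟩
      exact Mstar_sub F hM₀ (bb_spec F hM₀ h k).2.1
    · exact Set.infinite_range_of_injective (bb_strictMono F hM₀ h).injective
    · rintro N hN hNi ⟨s, hsF, hsInit⟩
      classical
      have hts : ↑s.toFinset ⊆ Set.range (bb F hM₀ h) := by
        intro a ha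
        exact hN (hsInit.1 a (List.mem_toFinset.mp ha))
      have hRej := rej_of_sub_range F hM₀ h hts
      have hAcp : Acp F s.toFinset (Mstar F hM₀) := by
        intro P hP hPi hab
        refine ⟨s, hsF, ?_, ?_⟩
        · intro a ha
          exact Or.inl (by exact_mod_cast List.mem_toFinset.mpr ha)
        · rintro a (ha | ha) hns b hb
          · exact absurd (List.mem_toFinset.mp (by exact_mod_cast ha)) hns
          · exact hab a ha b (List.mem_toFinset.mpr hb)
      exact hRej (Mstar F hM₀) subset_rfl (Mstar_infinite F hM₀) hAcp
  · simp only [Rej, not_forall, not_not] at h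
    obtain ⟨N, hNM, hNi, hacc⟩ := h
    refine ⟨N, hNM.trans (Mstar_sub F hM₀), hNi, Or.inl ?_⟩
    intro N' hN' hN'i
    have := hacc N' hN' hN'i (by intro a _ b hb; simp at hb)
    simpa using this

section Alt

variable {X : Type*} (A B : ℕ → Set X)

def altInter : List ℕ → Bool → Set X
  | [], _ => Set.univ
  | i :: l, b => (bif b then B i else A i) ∩ altInter l (!b)

lemma altInter_append (l₁ l₂ : List ℕ) (b : Bool) :
    altInter A B (l₁ ++ l₂) b = altInter A B l₁ b ∩ altInter A B l₂ (xor l₁.length.bodd b) := by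
  induction l₁ generalizing b with
  | nil => simp [altInter]
  | cons i l ih =>
    simp only [List.cons_append, altInter, List.length_cons, Nat.bodd_succ, List.append_eq]
    rw [ih (!b), Set.inter_assoc]
    congr 2
    cases l.length.bodd <;> cases b <;> rfl

def Bad : Set (List ℕ) := {l | l.Pairwise (· < ·) ∧ altInter A B l false = ∅}

end Alt

lemma sorted_lt_nodup {l : List ℕ} (h : l.Pairwise (· < ·)) : l.Nodup :=
  h.imp (fun hlt => ne_of_lt hlt)

lemma sorted_eq_of_mem_iff {l₁ l₂ : List ℕ} (h₁ : l₁.Pairwise (· < ·)) (h₂ : l₂.Pairwise (· < ·))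
    (h : ∀ a, a ∈ l₁ ↔ a ∈ l₂) : l₁ = l₂ := by
  classical
  haveI : IsAntisymm ℕ (· < ·) := ⟨fun a b h1 h2 => absurd h2 (asymm h1)⟩
  refine List.Perm.eq_of_pairwise (fun a _ b _ h1 h2 => absurd h2 (asymm h1)) h₁ h₂ ?_
  refine List.perm_of_nodup_nodup_toFinset_eq (sorted_lt_nodup h₁) (sorted_lt_nodup h₂) ?_
  ext a
  simp [h a]

lemma downclosed_eq_range {s : Finset ℕ} (h : ∀ j ∈ s, ∀ i, i < j → i ∈ s) :
    s = Finset.range s.card := by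
  have hsub : s ⊆ Finset.range s.card := by
    intro j hj
    rw [Finset.mem_range]
    by_contra hge
    push_neg at hge
    have hsubr : Finset.range (j+1) ⊆ s := by
      intro i hi
      rcases Nat.lt_succ_iff_lt_or_eq.mp (Finset.mem_range.mp hi) with hlt | rfl
      · exact h j hj i hlt
      · exact hj
    have := Finset.card_le_card hsubr
    rw [Finset.card_range] at this
    omega
  exact Finset.eq_of_subset_of_card_le hsub (by rw [Finset.card_range])

variable {X : Type*}

theorem dichotomy (A B : ℕ → Set X) {M₀ : Set ℕ} (hM₀ : M₀.Infinite) :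
    (∃ n : ℕ → ℕ, StrictMono n ∧ ∀ (m : ℕ) (ε : ℕ → Bool),
        (⋂ k ∈ Finset.range m, (bif ε k then B (n k) else A (n k))).Nonempty) ∨
    (∃ M, M ⊆ M₀ ∧ M.Infinite ∧ ∀ x : X,
        ¬({i | i ∈ M ∧ x ∈ A i}.Infinite ∧ {i | i ∈ M ∧ x ∈ B i}.Infinite)) := by
  obtain ⟨M, hMM₀, hMi, hcase⟩ := gp (Bad A B) hM₀
  rcases hcase with hHit | hMiss
  · -- limsup branch
    right
    refine ⟨M, hMM₀, hMi, ?_⟩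
    rintro x ⟨hP, hQ⟩
    set P := {i | i ∈ M ∧ x ∈ A i} with hPdef
    set Q := {i | i ∈ M ∧ x ∈ B i} with hQdef
    have hstep : ∀ (v j : ℕ), ∃ w, w ∈ (bif j.bodd then Q else P) ∧ v < w := by
      intro v j
      cases hb : j.bodd
      · obtain ⟨w, hw, hvw⟩ := hP.exists_gt v
        exact ⟨w, by simpa using hw, hvw⟩
      · obtain ⟨w, hw, hvw⟩ := hQ.exists_gt v
        exact ⟨w, by simpa using hw, hvw⟩
    let c : ℕ → ℕ := fun j =>
      Nat.rec (hstep 0 0).choose (fun j' prev => (hstep prev (j'+1)).choose) j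
    have hcmem : ∀ j, c j ∈ (bif j.bodd then Q else P) := by
      intro j
      cases j with
      | zero => exact (hstep 0 0).choose_spec.1
      | succ j' => exact (hstep (c j') (j'+1)).choose_spec.1
    have hcmono : StrictMono c := by
      apply strictMono_nat_of_lt_succ
      intro j
      exact (hstep (c j) (j+1)).choose_spec.2
    have hcM : ∀ j, c j ∈ M := by
      intro j
      have := hcmem j
      cases hb : j.bodd <;> rw [hb] at this
      · exact (by simpa using this : c j ∈ P).1
      · exact (by simpa using this : c j ∈ Q).1
    have hNM : Set.range c ⊆ M := by rintro a ⟨j, rfl⟩; exact hcM j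
    have hNi : (Set.range c).Infinite := Set.infinite_range_of_injective hcmono.injective
    obtain ⟨t, ⟨htS, htE⟩, htInit⟩ := hHit (Set.range c) hNM hNi
    classical
    have hinj : Set.InjOn c (c ⁻¹' ↑t.toFinset) := hcmono.injective.injOn
    set Jf : Finset ℕ := t.toFinset.preimage c hinj with hJf
    have hJmem : ∀ j, j ∈ Jf ↔ c j ∈ t := by
      intro j; simp [hJf, Finset.mem_preimage]
    have hdc : ∀ j ∈ Jf, ∀ i, i < j → i ∈ Jf := by
      intro j hj i hij
      rw [hJmem] at hj ⊢
      by_contra hct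
      have := htInit.2 (c i) ⟨i, rfl⟩ hct (c j) hj
      exact absurd (hcmono hij) (asymm this)
    have hJr : Jf = Finset.range Jf.card := downclosed_eq_range hdc
    set k := Jf.card with hk
    have hmapS : ((List.range k).map c).Pairwise (· < ·) := by
      refine List.Pairwise.map _ (fun a b hab => hcmono hab) ?_
      exact List.pairwise_lt_range (n := k)
    have hteq : t = (List.range k).map c := by
      refine sorted_eq_of_mem_iff htS hmapS ?_
      intro a
      constructor
      · intro ha
        obtain ⟨j, rfl⟩ := htInit.1 a ha
        have hj : j ∈ Jf := (hJmem j).mpr ha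
        rw [hJr, Finset.mem_range] at hj
        simp only [List.mem_map, List.mem_range]
        exact ⟨j, hj, rfl⟩
      · intro ha
        simp only [List.mem_map, List.mem_range] at ha
        obtain ⟨j, hj, rfl⟩ := ha
        have : j ∈ Jf := by rw [hJr, Finset.mem_range]; exact hj
        exact (hJmem j).mp this
    have hxmem : ∀ (len st : ℕ), x ∈ altInter A B ((List.range' st len).map c) st.bodd := by
      intro len
      induction len with
      | zero => intro st; simp [altInter]
      | succ len ih =>
        intro st
        rw [List.range'_succ]
        refine ⟨?_, ?_⟩
        · have := hcmem st
          cases hb : st.bodd <;> rw [hb] at this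
          · exact (by simpa using this : c st ∈ P).2
          · exact (by simpa using this : c st ∈ Q).2
        · have := ih (st + 1)
          rwa [Nat.bodd_succ] at this
    have := hxmem k 0
    rw [← List.range_eq_range'] at this
    rw [hteq] at htE
    have hb0 : (0 : ℕ).bodd = false := rfl
    rw [hb0] at this
    rw [htE] at this
    exact this
  · -- independent branch
    left
    have hset : {a | a ∈ M}.Infinite := hMi
    set e := Nat.nth (· ∈ M) with he
    have hemono : StrictMono e := Nat.nth_strictMono hset
    have hemem : ∀ i, e i ∈ M := Nat.nth_mem_of_infinite hset
    have hn : StrictMono (fun k => e (2*k+2)) :=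
      hemono.comp (fun a b hab => by omega)
    refine ⟨fun k => e (2*k+2), hn, ?_⟩
    have good : ∀ l : List ℕ, l.Pairwise (· < ·) → (∀ a ∈ l, a ∈ M) →
        (altInter A B l false).Nonempty := by
      intro l hs hm
      by_contra hempty
      rw [Set.not_nonempty_iff_eq_empty] at hempty
      set N := {a | a ∈ l} ∪ {a | a ∈ M ∧ ∀ b ∈ l, b < a} with hN
      have hNM : N ⊆ M := by
        rintro a (ha | ha)
        · exact hm a ha
        · exact ha.1
      have hNinf : N.Infinite := by
        refine Set.Infinite.mono (Set.subset_union_right) ?_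
        have hfin : ({a | ∃ b ∈ l, a ≤ b} : Set ℕ).Finite := by
          refine Set.Finite.subset (Set.Finite.biUnion l.finite_toSet
            (fun b _ => Set.finite_Iic b)) ?_
          rintro a ⟨b, hb, hab⟩
          exact Set.mem_biUnion hb hab
        refine Set.Infinite.mono ?_ (hMi.diff hfin)
        rintro a ⟨haM, hna⟩
        refine ⟨haM, fun b hb => ?_⟩
        simp only [Set.mem_setOf_eq, not_exists, not_and, not_le] at hna
        exact hna b hb
      refine hMiss N hNM hNinf ⟨l, ⟨hs, hempty⟩, fun a ha => Or.inl ha, ?_⟩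
      rintro a (ha | ha) hal b hb
      · exact absurd ha hal
      · exact ha.2 b hb
    intro m ε
    set bpre : ℕ → Bool := fun k => if k = 0 then false else !(ε (k-1)) with hbpre
    set chunk : ℕ → List ℕ :=
      fun k => if bpre k = ε k then [e (2*k+2)] else [e (2*k+1), e (2*k+2)] with hchunk
    set L : ℕ → List ℕ := fun m' => Nat.rec [] (fun k l => l ++ chunk k) m' with hL
    have hchunkmem : ∀ k, ∀ a ∈ chunk k, a = e (2*k+1) ∨ a = e (2*k+2) := by
      intro k a ha
      simp only [hchunk] at ha
      split_ifs at ha <;> simp at ha <;> tauto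
    have main : ∀ m', ((L m').Pairwise (· < ·)) ∧ (∀ a ∈ L m', a ∈ M ∧ a < e (2*m'+1)) ∧
        ((L m').length.bodd = bpre m') ∧
        (∀ y : X, y ∈ altInter A B (L m') false → ∀ k, k < m' →
          y ∈ (bif ε k then B (e (2*k+2)) else A (e (2*k+2)))) := by
      intro m'
      induction m' with
      | zero =>
        refine ⟨by simp [hL], by simp [hL], by simp [hL, hbpre], ?_⟩
        intro y _ k hk
        omega
      | succ m' ih =>
        obtain ⟨ihS, ihB, ihP, ihA⟩ := ih
        have hLsucc : L (m'+1) = L m' ++ chunk m' := rfl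
        have hchunkS : (chunk m').Pairwise (· < ·) := by
          simp only [hchunk]
          split_ifs
          · simp
          · simp [List.Pairwise]
            exact hemono (by omega)
        have hcross : ∀ a ∈ L m', ∀ b ∈ chunk m', a < b := by
          intro a ha b hb
          have h1 := (ihB a ha).2
          rcases hchunkmem m' b hb with rfl | rfl
          · exact h1
          · exact lt_of_lt_of_le h1 (le_of_lt (hemono (by omega)))
        constructor
        · rw [hLsucc, List.pairwise_append]
          exact ⟨ihS, hchunkS, hcross⟩
        refine ⟨?_, ?_, ?_⟩
        · intro a ha
          rw [hLsucc, List.mem_append] at ha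
          rcases ha with ha | ha
          · refine ⟨(ihB a ha).1, lt_trans (ihB a ha).2 (hemono (by omega))⟩
          · rcases hchunkmem m' a ha with rfl | rfl
            · exact ⟨hemem _, hemono (by omega)⟩
            · exact ⟨hemem _, hemono (by omega)⟩
        · have hlen : (chunk m').length = if bpre m' = ε m' then 1 else 2 := by
            simp only [hchunk]
            split_ifs <;> rfl
          rw [hLsucc, List.length_append, hlen]
          have hbpre1 : bpre (m'+1) = !ε m' := by simp [hbpre]
          split_ifs with hcnd
          · rw [Nat.bodd_add, ihP, hbpre1, hcnd]
            cases ε m' <;> rfl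
          · have hbp : bpre m' = !ε m' := Bool.eq_not_of_ne hcnd
            rw [Nat.bodd_add, ihP, hbpre1, hbp]
            cases ε m' <;> rfl
        · intro y hy k hk
          rw [hLsucc, altInter_append, ihP, Bool.xor_false] at hy
          rcases Nat.lt_succ_iff_lt_or_eq.mp hk with hk' | rfl
          · exact ihA y hy.1 k hk'
          · have hy2 := hy.2
            by_cases hcnd : bpre k = ε k
            · have hch : chunk k = [e (2*k+2)] := by
                simp only [hchunk]; rw [if_pos hcnd]
              rw [hch] at hy2
              rw [← hcnd]
              exact hy2.1
            · have hch : chunk k = [e (2*k+1), e (2*k+2)] := by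
                simp only [hchunk]; rw [if_neg hcnd]
              rw [hch] at hy2
              have hnb : (bpre k).not = ε k := by
                rw [Bool.eq_not_of_ne hcnd, Bool.not_not]
              have hy3 := hy2.2.1
              rw [hnb] at hy3
              exact hy3
    obtain ⟨hS, hB, _, hA⟩ := main m
    obtain ⟨y, hy⟩ := good (L m) hS (fun a ha => (hB a ha).1)
    refine ⟨y, ?_⟩
    rw [Set.mem_iInter₂]
    intro k hk
    exact hA y hy k (Finset.mem_range.mp hk)

section Indep

abbrev Idx : Type := (Finset ℚ × Finset (Finset ℚ)) × ℕ

instance : Infinite Idx := by infer_instance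
instance : Encodable Idx := by infer_instance
instance : Denumerable Idx := Denumerable.ofEncodableOfInfinite Idx

def eIdx : ℕ ≃ Idx := (Denumerable.eqv Idx).symm

open Classical in
def rfilter (t : ℝ) (F : Finset ℚ) : Finset ℚ := F.filter fun q => (q : ℝ) < t

def SS (t : ℝ) : Set ℕ := {j | rfilter t (eIdx j).1.1 ∈ (eIdx j).1.2}

lemma indep_infinite (T₁ T₂ : Finset ℝ) (hdis : ∀ t ∈ T₁, t ∉ T₂) :
    ((⋂ t ∈ T₁, SS t) ∩ ⋂ t ∈ T₂, (SS t)ᶜ).Infinite := by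
  classical
  set u : Finset ℝ := T₁ ∪ T₂ with hu
  set qpick : ℝ → ℝ → ℚ := fun a b => if h : a < b then (exists_rat_btwn h).choose else 0
    with hqpick
  set F : Finset ℚ := (u ×ˢ u).image fun p => qpick p.1 p.2 with hF
  have key : ∀ t ∈ u, ∀ t' ∈ u, t < t' → rfilter t F ≠ rfilter t' F := by
    intro t ht t' ht' hlt
    have hq1 : (t : ℝ) < ((exists_rat_btwn hlt).choose : ℝ) := (exists_rat_btwn hlt).choose_spec.1
    have hq2 : (((exists_rat_btwn hlt).choose : ℝ)) < t' := (exists_rat_btwn hlt).choose_spec.2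
    set q : ℚ := (exists_rat_btwn hlt).choose with hqdef
    have hqpickeq : qpick t t' = q := by rw [hqpick]; simp only [dif_pos hlt]; rfl
    have hqF : q ∈ F := by
      rw [hF]
      refine Finset.mem_image.mpr ⟨(t, t'), Finset.mem_product.mpr ⟨ht, ht'⟩, hqpickeq⟩
    have h1 : q ∈ rfilter t' F := by
      rw [rfilter, Finset.mem_filter]
      exact ⟨hqF, hq2⟩
    have h2 : q ∉ rfilter t F := by
      rw [rfilter, Finset.mem_filter]
      rintro ⟨-, hqt⟩
      exact absurd hq1 (not_lt.mpr (le_of_lt hqt))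
    intro heq
    rw [heq] at h2
    exact h2 h1
  have inj : ∀ t ∈ u, ∀ t' ∈ u, rfilter t F = rfilter t' F → t = t' := by
    intro t ht t' ht' heq
    rcases lt_trichotomy t t' with h | h | h
    · exact absurd heq (key t ht t' ht' h)
    · exact h
    · exact absurd heq.symm (key t' ht' t ht h)
  set Φ : Finset (Finset ℚ) := T₁.image fun t => rfilter t F with hΦ
  have hpat : ∀ j, (eIdx j).1 = (F, Φ) →
      j ∈ (⋂ t ∈ T₁, SS t) ∩ ⋂ t ∈ T₂, (SS t)ᶜ := by
    intro j hj
    constructor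
    · rw [Set.mem_iInter₂]
      intro t ht
      show rfilter t (eIdx j).1.1 ∈ (eIdx j).1.2
      rw [hj]
      exact Finset.mem_image_of_mem _ ht
    · rw [Set.mem_iInter₂]
      intro t' ht'
      intro hmem
      have : rfilter t' (eIdx j).1.1 ∈ (eIdx j).1.2 := hmem
      rw [hj] at this
      obtain ⟨t, ht, heq⟩ := Finset.mem_image.mp this
      have := inj t (Finset.mem_union_left _ ht) t' (Finset.mem_union_right _ ht') heq
      subst this
      exact hdis t ht ht'
  have hinj : Function.Injective (fun m : ℕ => eIdx.symm ((F, Φ), m)) := by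
    intro a b hab
    have := eIdx.symm.injective hab
    exact (Prod.mk.injEq _ _ _ _).mp this |>.2
  refine Set.infinite_of_injective_forall_mem hinj ?_
  intro m
  apply hpat
  simp [eIdx]

lemma exists_ultra (T : Set ℝ) :
    ∃ U : Ultrafilter ℕ, (↑U : Filter ℕ) ≤ Filter.cofinite ∧
      (∀ t ∈ T, SS t ∈ U) ∧ (∀ t ∉ T, (SS t)ᶜ ∈ U) := by
  classical
  set 𝒞 : Set (Set ℕ) := ((fun t => SS t) '' T) ∪ ((fun t => (SS t)ᶜ) '' Tᶜ) with h𝒞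
  have hfip : ∀ 𝒯 : Set (Set ℕ), 𝒯 ⊆ 𝒞 → 𝒯.Finite → (⋂₀ 𝒯).Infinite := by
    intro 𝒯 hsub hfin
    have hexists : ∀ 𝒯 : Set (Set ℕ), 𝒯.Finite → 𝒯 ⊆ 𝒞 →
        ∃ T₁ T₂ : Finset ℝ, (∀ t ∈ T₁, t ∈ T) ∧ (∀ t ∈ T₂, t ∉ T) ∧
        ((⋂ t ∈ T₁, SS t) ∩ ⋂ t ∈ T₂, (SS t)ᶜ) ⊆ ⋂₀ 𝒯 := by
      intro 𝒯 hfin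
      refine Set.Finite.induction_on
        (motive := fun S _ => S ⊆ 𝒞 → ∃ T₁ T₂ : Finset ℝ, (∀ t ∈ T₁, t ∈ T) ∧ (∀ t ∈ T₂, t ∉ T) ∧
          ((⋂ t ∈ T₁, SS t) ∩ ⋂ t ∈ T₂, (SS t)ᶜ) ⊆ ⋂₀ S) _ hfin
        (fun _ => ⟨∅, ∅, by simp, by simp, by simp⟩) ?_
      clear hsub hfin 𝒯
      intro X 𝒯' hX h𝒯' ih hsub
      obtain ⟨T₁, T₂, h1, h2, h3⟩ := ih (fun x hx => hsub (Set.mem_insert_of_mem X hx))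
      have hXin : X ∈ 𝒞 := hsub (Set.mem_insert X 𝒯')
      rw [h𝒞] at hXin
      rcases hXin with ⟨t, ht, rfl⟩ | ⟨t, ht, rfl⟩
      · refine ⟨insert t T₁, T₂, ?_, h2, ?_⟩
        · intro t' ht'
          rcases Finset.mem_insert.mp ht' with rfl | ht'
          · exact ht
          · exact h1 t' ht'
        · rw [Set.sInter_insert]
          intro x hx
          refine ⟨?_, h3 ⟨?_, hx.2⟩⟩
          · exact (Set.mem_iInter₂.mp hx.1) t (Finset.mem_insert_self t T₁)
          · rw [Set.mem_iInter₂]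
            intro t' ht'
            exact (Set.mem_iInter₂.mp hx.1) t' (Finset.mem_insert_of_mem ht')
      · refine ⟨T₁, insert t T₂, h1, ?_, ?_⟩
        · intro t' ht'
          rcases Finset.mem_insert.mp ht' with rfl | ht'
          · exact ht
          · exact h2 t' ht'
        · rw [Set.sInter_insert]
          intro x hx
          refine ⟨?_, h3 ⟨hx.1, ?_⟩⟩
          · exact (Set.mem_iInter₂.mp hx.2) t (Finset.mem_insert_self t T₂)
          · rw [Set.mem_iInter₂]
            intro t' ht'
            exact (Set.mem_iInter₂.mp hx.2) t' (Finset.mem_insert_of_mem ht')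
    obtain ⟨T₁, T₂, h1, h2, h3⟩ := hexists 𝒯 hfin hsub
    refine Set.Infinite.mono h3 (indep_infinite T₁ T₂ ?_)
    intro t ht1 ht2
    exact h2 t ht2 (h1 t ht1)
  have hne : (Filter.cofinite ⊓ Filter.generate 𝒞 : Filter ℕ).NeBot := by
    rw [← Filter.forall_mem_nonempty_iff_neBot]
    intro s hs
    rw [Filter.mem_inf_iff] at hs
    obtain ⟨t₁, ht₁, t₂, ht₂, rfl⟩ := hs
    rw [Filter.mem_generate_iff] at ht₂
    obtain ⟨𝒯, h𝒯sub, h𝒯fin, h𝒯⟩ := ht₂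
    have hinf := hfip 𝒯 h𝒯sub h𝒯fin
    have : ((⋂₀ 𝒯) \ t₁ᶜ).Infinite := hinf.diff (Filter.mem_cofinite.mp ht₁)
    obtain ⟨x, hx⟩ := this.nonempty
    exact ⟨x, by simp at hx; exact ⟨hx.2, h𝒯 hx.1⟩⟩
  refine ⟨@Ultrafilter.of _ _ hne, ?_, ?_, ?_⟩
  · exact le_trans (Ultrafilter.of_le _) inf_le_left
  · intro t ht
    have h1 : SS t ∈ Filter.generate 𝒞 :=
      Filter.mem_generate_of_mem (Set.mem_union_left _ ⟨t, ht, rfl⟩)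
    exact (le_trans (Ultrafilter.of_le _) inf_le_right) h1
  · intro t ht
    have h1 : (SS t)ᶜ ∈ Filter.generate 𝒞 :=
      Filter.mem_generate_of_mem (Set.mem_union_right _ ⟨t, ht, rfl⟩)
    exact (le_trans (Ultrafilter.of_le _) inf_le_right) h1

end Indep

end Stmt9

/-- If `K` is a compact Hausdorff space and `(f_n)` is a uniformly bounded
sequence of continuous real-valued functions on `K` with no pointwise convergent
subsequence, then the family of pointwise cluster points of `(f_n)` has cardinality at
least `2 ^ 𝔠`. -/
theorem card_clusterPoints_ge_two_pow_continuum
    (K : Type*) [TopologicalSpace K] [CompactSpace K] [T2Space K]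
    (f : ℕ → K → ℝ) (hcont : ∀ n, Continuous (f n))
    (hbdd : ∃ C : ℝ, ∀ n k, |f n k| ≤ C)
    (hdiv : ¬ ∃ φ : ℕ → ℕ, StrictMono φ ∧
      ∀ k : K, ∃ L : ℝ, Tendsto (fun j => f (φ j) k) atTop (𝓝 L)) :
    2 ^ Cardinal.continuum ≤ Cardinal.mk {g : K → ℝ | MapClusterPt g atTop f} := by
  classical
  obtain ⟨C, hC⟩ := hbdd
  -- Step 1: extract an independent subsequence
  have main : ∃ (r s : ℚ), (r : ℝ) < (s : ℝ) ∧ ∃ n : ℕ → ℕ, StrictMono n ∧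
      ∀ (m : ℕ) (ε : ℕ → Bool),
        (⋂ k ∈ Finset.range m,
          (bif ε k then {y : K | (s:ℝ) ≤ f (n k) y} else {y : K | f (n k) y ≤ (r:ℝ)})).Nonempty := by
    by_contra hP
    have star_step : ∀ (r s : ℚ), (r:ℝ) < (s:ℝ) → ∀ M₀ : Set ℕ, M₀.Infinite →
        ∃ M, M ⊆ M₀ ∧ M.Infinite ∧ ∀ x : K,
          ¬({i | i ∈ M ∧ x ∈ {y : K | f i y ≤ (r:ℝ)}}.Infinite ∧
            {i | i ∈ M ∧ x ∈ {y : K | (s:ℝ) ≤ f i y}}.Infinite) := by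
      intro r s hrs M₀ hM₀
      rcases Stmt9.dichotomy (fun i => {y : K | f i y ≤ (r:ℝ)})
          (fun i => {y : K | (s:ℝ) ≤ f i y}) hM₀ with ⟨n, hn, hpat⟩ | h
      · exact absurd ⟨r, s, hrs, n, hn, hpat⟩ hP
      · exact h
    set pr : ℕ ≃ ℚ × ℚ := (Denumerable.eqv (ℚ × ℚ)).symm with hprdef
    have step : ∀ (i : ℕ) (M : Set ℕ), M.Infinite → ∃ M', M' ⊆ M ∧ M'.Infinite ∧
        (((pr i).1 : ℝ) < (((pr i).2 : ℚ) : ℝ) → ∀ x : K,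
          ¬({j | j ∈ M' ∧ x ∈ {y : K | f j y ≤ (((pr i).1 : ℚ):ℝ)}}.Infinite ∧
            {j | j ∈ M' ∧ x ∈ {y : K | (((pr i).2 : ℚ):ℝ) ≤ f j y}}.Infinite)) := by
      intro i M hM
      by_cases hlt : (((pr i).1 : ℚ) : ℝ) < (((pr i).2 : ℚ) : ℝ)
      · obtain ⟨M', h1, h2, h3⟩ := star_step (pr i).1 (pr i).2 hlt M hM
        exact ⟨M', h1, h2, fun _ => h3⟩
      · exact ⟨M, subset_rfl, hM, fun h => absurd h hlt⟩
    set Mc : ℕ → {S : Set ℕ // S.Infinite} := fun i => Nat.rec ⟨Set.univ, Set.infinite_univ⟩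
      (fun i' prev => ⟨(step i' prev.1 prev.2).choose,
        (step i' prev.1 prev.2).choose_spec.2.1⟩) i with hMc
    have hMcsub : ∀ i, (Mc (i+1)).1 ⊆ (Mc i).1 :=
      fun i => (step i (Mc i).1 (Mc i).2).choose_spec.1
    have hMcstar : ∀ i, (((pr i).1 : ℚ) : ℝ) < (((pr i).2 : ℚ) : ℝ) → ∀ x : K,
        ¬({j | j ∈ (Mc (i+1)).1 ∧ x ∈ {y : K | f j y ≤ (((pr i).1 : ℚ):ℝ)}}.Infinite ∧
          {j | j ∈ (Mc (i+1)).1 ∧ x ∈ {y : K | (((pr i).2 : ℚ):ℝ) ≤ f j y}}.Infinite) :=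
      fun i => (step i (Mc i).1 (Mc i).2).choose_spec.2.2
    have hMcmono : ∀ i j, i ≤ j → (Mc j).1 ⊆ (Mc i).1 := by
      intro i j hij
      induction j with
      | zero => cases Nat.le_zero.mp hij; exact subset_rfl
      | succ j ih =>
        rcases Nat.lt_or_ge i (j+1) with h | h
        · exact (hMcsub j).trans (ih (Nat.lt_succ_iff.mp h))
        · cases Nat.le_antisymm hij h; exact subset_rfl
    have hd : ∀ (v i : ℕ), ∃ w, w ∈ (Mc i).1 ∧ v < w := fun v i => (Mc i).2.exists_gt v
    set d : ℕ → ℕ := fun j =>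
      Nat.rec (hd 0 0).choose (fun j' prev => (hd prev (j'+1)).choose) j with hddef
    have hdmem : ∀ j, d j ∈ (Mc j).1 := by
      intro j
      cases j with
      | zero => exact (hd 0 0).choose_spec.1
      | succ j' => exact (hd (d j') (j'+1)).choose_spec.1
    have hdmono : StrictMono d :=
      strictMono_nat_of_lt_succ (fun j => (hd (d j) (j+1)).choose_spec.2)
    refine hdiv ⟨d, hdmono, ?_⟩
    intro x
    have hble : Filter.IsBoundedUnder (· ≤ ·) atTop (fun j => f (d j) x) :=
      Filter.isBoundedUnder_of ⟨C, fun j => (abs_le.mp (hC (d j) x)).2⟩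
    have hbge : Filter.IsBoundedUnder (· ≥ ·) atTop (fun j => f (d j) x) :=
      Filter.isBoundedUnder_of ⟨-C, fun j => (abs_le.mp (hC (d j) x)).1⟩
    by_cases heq2 : Filter.liminf (fun j => f (d j) x) atTop
        = Filter.limsup (fun j => f (d j) x) atTop
    · exact ⟨_, tendsto_of_liminf_eq_limsup heq2 rfl hble hbge⟩
    · have hlt := lt_of_le_of_ne (Filter.liminf_le_limsup hble hbge) heq2
      obtain ⟨r, hr1, hr2⟩ := exists_rat_btwn hlt
      obtain ⟨s, hs1, hs2⟩ := exists_rat_btwn hr2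
      set i := pr.symm (r, s) with hidef
      have hpr1 : (pr i).1 = r := by rw [hidef, Equiv.apply_symm_apply]
      have hpr2 : (pr i).2 = s := by rw [hidef, Equiv.apply_symm_apply]
      have hco1 : Filter.IsCoboundedUnder (· ≥ ·) atTop (fun j => f (d j) x) :=
        hble.isCoboundedUnder_flip
      have hco2 : Filter.IsCoboundedUnder (· ≤ ·) atTop (fun j => f (d j) x) :=
        hbge.isCoboundedUnder_flip
      have hfreq1 : {j | f (d j) x < (r:ℝ)}.Infinite :=
        Nat.frequently_atTop_iff_infinite.mp (Filter.frequently_lt_of_liminf_lt hco1 hr1)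
      have hfreq2 : {j | (s:ℝ) < f (d j) x}.Infinite :=
        Nat.frequently_atTop_iff_infinite.mp (Filter.frequently_lt_of_lt_limsup hco2 hs2)
      have hst := hMcstar i (by rw [hpr1, hpr2]; exact hs1) x
      rw [hpr1, hpr2] at hst
      have hinf1 : {j | j ∈ (Mc (i+1)).1 ∧ x ∈ {y : K | f j y ≤ (r:ℝ)}}.Infinite := by
        have hbase : ({j | f (d j) x < (r:ℝ)} \ Set.Iio (i+1)).Infinite :=
          hfreq1.diff (Set.finite_Iio _)
        have himg := hbase.image (hdmono.injective.injOn)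
        refine himg.mono ?_
        rintro a ⟨j, ⟨hj1, hj2⟩, rfl⟩
        simp only [Set.mem_Iio, not_lt] at hj2
        refine ⟨hMcmono (i+1) j hj2 (hdmem j), ?_⟩
        have hj1' : f (d j) x < (r:ℝ) := hj1
        exact le_of_lt hj1'
      have hinf2 : {j | j ∈ (Mc (i+1)).1 ∧ x ∈ {y : K | (s:ℝ) ≤ f j y}}.Infinite := by
        have hbase : ({j | (s:ℝ) < f (d j) x} \ Set.Iio (i+1)).Infinite :=
          hfreq2.diff (Set.finite_Iio _)
        have himg := hbase.image (hdmono.injective.injOn)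
        refine himg.mono ?_
        rintro a ⟨j, ⟨hj1, hj2⟩, rfl⟩
        simp only [Set.mem_Iio, not_lt] at hj2
        refine ⟨hMcmono (i+1) j hj2 (hdmem j), ?_⟩
        have hj1' : (s:ℝ) < f (d j) x := hj1
        exact le_of_lt hj1'
      exact absurd ⟨hinf1, hinf2⟩ hst
  obtain ⟨r, s, hrs, n, hn, hpat⟩ := main
  -- Step 2: compactness points for every S ⊆ ℕ
  have hxS : ∀ S : Set ℕ, ∃ x : K,
      (∀ k, k ∈ S → f (n k) x ≤ (r:ℝ)) ∧ (∀ k, k ∉ S → (s:ℝ) ≤ f (n k) x) := by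
    intro S
    set ε : ℕ → Bool := fun k => decide (k ∉ S) with hε
    set D : ℕ → Set K := fun k =>
      bif ε k then {y : K | (s:ℝ) ≤ f (n k) y} else {y : K | f (n k) y ≤ (r:ℝ)} with hD
    set E : ℕ → Set K := fun m => ⋂ k ∈ Finset.range m, D k with hE
    have hEanti : ∀ m, E (m+1) ⊆ E m := by
      intro m y hy
      rw [hE, Set.mem_iInter₂] at hy ⊢
      intro k hk
      exact hy k (Finset.mem_range.mpr (Nat.lt_succ_of_lt (Finset.mem_range.mp hk)))
    have hEne : ∀ m, (E m).Nonempty := fun m => hpat m ε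
    have hDcl : ∀ k, IsClosed (D k) := by
      intro k
      cases hb : ε k
      · have : D k = {y : K | f (n k) y ≤ (r:ℝ)} := by simp only [hD, hb, cond_false]
        rw [this]
        exact isClosed_le (hcont (n k)) continuous_const
      · have : D k = {y : K | (s:ℝ) ≤ f (n k) y} := by simp only [hD, hb, cond_true]
        rw [this]
        exact isClosed_le continuous_const (hcont (n k))
    have hEcl : ∀ m, IsClosed (E m) := fun m => isClosed_biInter (fun k _ => hDcl k)
    have hEcomp : IsCompact (E 0) := by
      rw [hE]
      simp only [Finset.range_zero]
      simp only [Finset.notMem_empty, Set.iInter_of_empty, Set.iInter_univ]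
      exact isCompact_univ
    obtain ⟨x, hx⟩ := IsCompact.nonempty_iInter_of_sequence_nonempty_isCompact_isClosed
      E hEanti hEne hEcomp hEcl
    rw [Set.mem_iInter] at hx
    refine ⟨x, ?_, ?_⟩
    · intro k hk
      have := hx (k+1)
      rw [hE, Set.mem_iInter₂] at this
      have hxD := this k (Finset.mem_range.mpr (Nat.lt_succ_self k))
      have hck : ε k = false := by rw [hε]; exact decide_eq_false (not_not_intro hk)
      have hDk : D k = {y : K | f (n k) y ≤ (r:ℝ)} := by simp only [hD, hck, cond_false]
      rw [hDk] at hxD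
      exact hxD
    · intro k hk
      have := hx (k+1)
      rw [hE, Set.mem_iInter₂] at this
      have hxD := this k (Finset.mem_range.mpr (Nat.lt_succ_self k))
      have hck : ε k = true := by rw [hε]; exact decide_eq_true hk
      have hDk : D k = {y : K | (s:ℝ) ≤ f (n k) y} := by simp only [hD, hck, cond_true]
      rw [hDk] at hxD
      exact hxD
  choose xpt hxpt1 hxpt2 using hxS
  -- Step 3: ultrafilter limits
  choose U hUcof hUT hUTc using Stmt9.exists_ultra
  have hglim : ∀ (T : Set ℝ) (x : K),
      ∃ L : ℝ, Tendsto (fun k => f (n k) x) (U T) (𝓝 L) := by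
    intro T x
    have hmap : (↑(Ultrafilter.map (fun k => f (n k) x) (U T)) : Filter ℝ)
        ≤ 𝓟 (Set.Icc (-C) C) := by
      rw [Filter.le_principal_iff]
      show (fun k => f (n k) x) ⁻¹' (Set.Icc (-C) C) ∈ (U T : Filter ℕ)
      refine Filter.mem_of_superset Filter.univ_mem ?_
      intro k _
      exact ⟨(abs_le.mp (hC (n k) x)).1, (abs_le.mp (hC (n k) x)).2⟩
    obtain ⟨L, _, hL⟩ := isCompact_Icc.ultrafilter_le_nhds _ hmap
    exact ⟨L, hL⟩
  choose g hg using hglim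
  -- Step 4: each limit is a cluster point
  have hcl : ∀ T : Set ℝ, MapClusterPt (g T) atTop f := by
    intro T
    have h1 : Tendsto (fun k => f (n k)) (U T) (𝓝 (g T)) :=
      tendsto_pi_nhds.mpr (fun x => hg T x)
    have h2 : (↑(U T) : Filter ℕ) ≤ atTop := by
      rw [← Nat.cofinite_eq_atTop]; exact hUcof T
    have h3 : Tendsto n (U T) atTop := (hn.tendsto_atTop).mono_left h2
    have h4 : Filter.map (fun k => f (n k)) (U T) ≤ Filter.map f atTop := by
      have : Filter.map (fun k => f (n k)) (U T : Filter ℕ)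
          = Filter.map f (Filter.map n (U T)) := (Filter.map_map).symm
      rw [this]
      exact Filter.map_mono h3
    have h5 : Filter.map (fun k => f (n k)) (U T : Filter ℕ) ≤ 𝓝 (g T) ⊓ Filter.map f atTop :=
      le_inf h1 h4
    haveI : (Filter.map (fun k => f (n k)) (U T : Filter ℕ)).NeBot := Filter.map_neBot
    exact Filter.neBot_of_le h5
  -- Step 5: separation
  have hsep : ∀ (T T' : Set ℝ) (t : ℝ), t ∈ T → t ∉ T' → g T ≠ g T' := by
    intro T T' t ht ht' heq
    set x := xpt (Stmt9.SS t) with hxdef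
    have h1 : g T x ≤ (r:ℝ) := by
      refine le_of_tendsto (hg T x) ?_
      refine Filter.mem_of_superset (hUT T t ht) ?_
      intro k hk
      exact hxpt1 (Stmt9.SS t) k hk
    have h2 : (s:ℝ) ≤ g T' x := by
      refine ge_of_tendsto (hg T' x) ?_
      refine Filter.mem_of_superset (hUTc T' t ht') ?_
      intro k hk
      exact hxpt2 (Stmt9.SS t) k hk
    have : g T x < g T' x := lt_of_le_of_lt h1 (lt_of_lt_of_le hrs h2)
    rw [heq] at this
    exact lt_irrefl _ this
  -- Step 6: cardinality
  set G : Set ℝ → {g0 : K → ℝ | MapClusterPt g0 atTop f} := fun T => ⟨g T, hcl T⟩ with hG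
  have hGinj : Function.Injective G := by
    intro T T' hTT
    have hgeq : g T = g T' := congrArg Subtype.val hTT
    by_contra hne
    have hexists : ∃ t, (t ∈ T ∧ t ∉ T') ∨ (t ∈ T' ∧ t ∉ T) := by
      by_contra hno
      push_neg at hno
      apply hne
      ext t
      exact ⟨fun h => (hno t).1 h, fun h => (hno t).2 h⟩
    obtain ⟨t, h | h⟩ := hexists
    · exact hsep T T' t h.1 h.2 hgeq
    · exact hsep T' T t h.1 h.2 hgeq.symm
  have hle := Cardinal.lift_mk_le'.mpr ⟨⟨G, hGinj⟩⟩
  rw [Cardinal.mk_set, Cardinal.mk_real] at hle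
  rw [Cardinal.lift_two_power, Cardinal.lift_continuum, Cardinal.lift_id'] at hle
  convert hle using 1
end
end

section
/- Let W be a weakly precompact subset of a real Banach space X. Then the norm-closed convex hull of W is weakly precompact. -/
open Filter Topology

noncomputable section

namespace WPCaux

variable {S : Type*} (A B : ℕ → Set S)

def InfOn (A : ℕ → Set S) (M : Set ℕ) (x : S) : Prop := {n | n ∈ M ∧ x ∈ A n}.Infinite

def dlim (F G : Finset ℕ) (M : Set ℕ) : Set S :=
  {x | (∀ n ∈ F, x ∈ A n) ∧ (∀ n ∈ G, x ∈ B n) ∧ InfOn A M x ∧ InfOn B M x}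

def Rich (F G : Finset ℕ) (M : Set ℕ) : Prop :=
  ∀ M', M' ⊆ M → M'.Infinite → (dlim A B F G M').Nonempty

variable {A B}

theorem infOn_mono {A : ℕ → Set S} {M M' : Set ℕ} {x : S} (h : M ⊆ M') (hx : InfOn A M x) :
    InfOn A M' x :=
  Set.Infinite.mono (fun _ hn => ⟨h hn.1, hn.2⟩) hx

theorem dlim_mono {F G : Finset ℕ} {M M' : Set ℕ} (h : M ⊆ M') :
    dlim A B F G M ⊆ dlim A B F G M' :=
  fun _ hx => ⟨hx.1, hx.2.1, infOn_mono h hx.2.2.1, infOn_mono h hx.2.2.2⟩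

theorem Rich.mono {F G : Finset ℕ} {M M' : Set ℕ} (h : M' ⊆ M) (hR : Rich A B F G M) :
    Rich A B F G M' :=
  fun M'' h'' hinf => hR M'' (h''.trans h) hinf

theorem dichotomy (F G : Finset ℕ) (M : Set ℕ) :
    Rich A B F G M ∨ ∃ M', M' ⊆ M ∧ M'.Infinite ∧ dlim A B F G M' = ∅ := by
  by_cases h : Rich A B F G M
  · exact Or.inl h
  · right
    unfold Rich at h
    push_neg at h
    obtain ⟨M', h1, h2, h3⟩ := h
    exact ⟨M', h1, h2, h3⟩

theorem chain (L : List (Finset ℕ × Finset ℕ)) :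
    ∀ (M : Set ℕ), M.Infinite →
      (∃ M', M' ⊆ M ∧ M'.Infinite ∧ ∀ p ∈ L, Rich A B p.1 p.2 M') ∨
      (∃ p ∈ L, ∃ M', M' ⊆ M ∧ M'.Infinite ∧ dlim A B p.1 p.2 M' = ∅) := by
  induction L with
  | nil => exact fun M hM => Or.inl ⟨M, subset_rfl, hM, by simp⟩
  | cons p L ih =>
    intro M hM
    rcases dichotomy p.1 p.2 M with hR | ⟨M', h1, h2, h3⟩
    · rcases ih M hM with ⟨M', h1, h2, h3⟩ | ⟨q, hq, M', h1, h2, h3⟩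
      · refine Or.inl ⟨M', h1, h2, ?_⟩
        intro q hq
        rcases List.mem_cons.1 hq with rfl | hq'
        · exact hR.mono h1
        · exact h3 q hq'
      · exact Or.inr ⟨q, List.mem_cons_of_mem _ hq, M', h1, h2, h3⟩
    · exact Or.inr ⟨p, List.mem_cons_self, M', h1, h2, h3⟩

variable (A B) in
def Inv (T : Finset ℕ) (M : Set ℕ) : Prop :=
  M.Infinite ∧ ∀ F G : Finset ℕ, F ⊆ T → G ⊆ T → Disjoint F G → Rich A B F G M

theorem Inv.mono {T : Finset ℕ} {M M' : Set ℕ} (h : M' ⊆ M) (hinf : M'.Infinite)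
    (hI : Inv A B T M) : Inv A B T M' :=
  ⟨hinf, fun F G hF hG hd => (hI.2 F G hF hG hd).mono h⟩

theorem exists_infinite_fiber' {α : Type*} (f : ℕ → α) (V : Set α) (hV : V.Finite)
    (hf : ∀ k, f k ∈ V) : ∃ v, {k | f k = v}.Infinite := by
  by_contra h
  push_neg at h
  have hsub : (Set.univ : Set ℕ) ⊆ ⋃ v ∈ V, f ⁻¹' {v} := fun k _ => Set.mem_biUnion (hf k) rfl
  exact Set.infinite_univ ((hV.biUnion (fun v _ => h v)).subset hsub)

/-- The inductive step: an invariant reservoir can absorb one more index. -/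
theorem step {T : Finset ℕ} {M : Set ℕ} (hInv : Inv A B T M) (b : ℕ) :
    ∃ n ∈ M, b < n ∧ ∃ M', M' ⊆ M ∧ Inv A B (insert n T) M' := by
  classical
  by_contra hcon
  push_neg at hcon
  -- pattern library
  set PP : List (Finset ℕ × Finset ℕ) :=
    ((T.powerset ×ˢ T.powerset).filter fun q => Disjoint q.1 q.2).toList with hPP
  have hPPmem : ∀ q ∈ PP, q.1 ⊆ T ∧ q.2 ⊆ T ∧ Disjoint q.1 q.2 := by
    intro q hq
    rw [hPP, Finset.mem_toList, Finset.mem_filter, Finset.mem_product] at hq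
    exact ⟨Finset.mem_powerset.1 hq.1.1, Finset.mem_powerset.1 hq.1.2, hq.2⟩
  have hPPall : ∀ F G : Finset ℕ, F ⊆ T → G ⊆ T → Disjoint F G → (F, G) ∈ PP := by
    intro F G hF hG hd
    rw [hPP, Finset.mem_toList, Finset.mem_filter, Finset.mem_product]
    exact ⟨⟨Finset.mem_powerset.2 hF, Finset.mem_powerset.2 hG⟩, hd⟩
  -- the recording step
  have record : ∀ (Mc : Set ℕ) (lb : ℕ),
      ∃ d : ℕ × Finset ℕ × Finset ℕ × Bool × Set ℕ, (Mc ⊆ M → Mc.Infinite →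
        (d.1 ∈ Mc ∧ lb < d.1 ∧ d.2.2.2.2 ⊆ Mc ∧ d.2.2.2.2.Infinite ∧
          (∀ m ∈ d.2.2.2.2, d.1 < m) ∧ d.2.1 ⊆ T ∧ d.2.2.1 ⊆ T ∧ Disjoint d.2.1 d.2.2.1 ∧
          dlim A B (if d.2.2.2.1 then insert d.1 d.2.1 else d.2.1)
            (if d.2.2.2.1 then d.2.2.1 else insert d.1 d.2.2.1) d.2.2.2.2 = ∅)) := by
    intro Mc lb
    by_cases hMcM : Mc ⊆ M
    swap
    · exact ⟨(0, ∅, ∅, true, ∅), fun h => absurd h hMcM⟩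
    by_cases hMcInf : Mc.Infinite
    swap
    · exact ⟨(0, ∅, ∅, true, ∅), fun _ h => absurd h hMcInf⟩
    obtain ⟨n, hnMc, hn⟩ := hMcInf.exists_gt (max b lb)
    have hb : b < n := lt_of_le_of_lt (le_max_left _ _) hn
    have hlb : lb < n := lt_of_le_of_lt (le_max_right _ _) hn
    set Mc' : Set ℕ := Mc \ Set.Iic n with hMc'
    have hMc'inf : Mc'.Infinite := hMcInf.diff (Set.finite_Iic n)
    have hMc'sub : Mc' ⊆ Mc := Set.diff_subset
    have hgtMc' : ∀ m ∈ Mc', n < m := fun m hm => not_le.1 hm.2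
    set L : List (Finset ℕ × Finset ℕ) :=
      (PP.map fun q => (insert n q.1, q.2)) ++ (PP.map fun q => (q.1, insert n q.2)) with hL
    rcases chain L Mc' hMc'inf with ⟨M', h1, h2, h3⟩ | ⟨p, hpL, M', h1, h2, h3⟩
    · -- impossible: we can build `Inv (insert n T) M'`, contradicting `hcon`
      exfalso
      have hsubM : M' ⊆ M := (h1.trans hMc'sub).trans hMcM
      apply hcon n (hMcM hnMc) hb M' hsubM
      refine ⟨h2, ?_⟩
      intro F G hF hG hd
      by_cases hnF : n ∈ F
      · have hFT : F.erase n ⊆ T := by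
          intro x hx
          rcases Finset.mem_insert.1 (hF (Finset.mem_of_mem_erase hx)) with rfl | h
          · exact absurd rfl (Finset.ne_of_mem_erase hx)
          · exact h
        have hnG : n ∉ G := fun h => (Finset.disjoint_left.1 hd) hnF h
        have hGT : G ⊆ T := by
          intro x hx
          rcases Finset.mem_insert.1 (hG hx) with rfl | h
          · exact absurd hx hnG
          · exact h
        have hmem : ((F.erase n), G) ∈ PP :=
          hPPall _ _ hFT hGT (hd.mono_left (Finset.erase_subset _ _))
        have hmemL : (insert n (F.erase n), G) ∈ L := by
          rw [hL]; exact List.mem_append_left _ (List.mem_map.2 ⟨_, hmem, rfl⟩)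
        have := h3 _ hmemL
        rwa [Finset.insert_erase hnF] at this
      · by_cases hnG : n ∈ G
        · have hGT : G.erase n ⊆ T := by
            intro x hx
            rcases Finset.mem_insert.1 (hG (Finset.mem_of_mem_erase hx)) with rfl | h
            · exact absurd rfl (Finset.ne_of_mem_erase hx)
            · exact h
          have hFT : F ⊆ T := by
            intro x hx
            rcases Finset.mem_insert.1 (hF hx) with rfl | h
            · exact absurd hx hnF
            · exact h
          have hmem : (F, G.erase n) ∈ PP :=
            hPPall _ _ hFT hGT (hd.mono_right (Finset.erase_subset _ _))
          have hmemL : (F, insert n (G.erase n)) ∈ L := by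
            rw [hL]; exact List.mem_append_right _ (List.mem_map.2 ⟨_, hmem, rfl⟩)
          have := h3 _ hmemL
          rwa [Finset.insert_erase hnG] at this
        · have hFT : F ⊆ T := by
            intro x hx
            rcases Finset.mem_insert.1 (hF hx) with rfl | h
            · exact absurd hx hnF
            · exact h
          have hGT : G ⊆ T := by
            intro x hx
            rcases Finset.mem_insert.1 (hG hx) with rfl | h
            · exact absurd hx hnG
            · exact h
          exact (hInv.2 F G hFT hGT hd).mono hsubM
    · -- found a recorded bad pattern
      rw [hL] at hpL
      rcases List.mem_append.1 hpL with hp | hp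
      · rcases List.mem_map.1 hp with ⟨q, hq, rfl⟩
        obtain ⟨hqF, hqG, hqd⟩ := hPPmem q hq
        refine ⟨(n, q.1, q.2, true, M'), fun _ _ => ?_⟩
        exact ⟨hnMc, hlb, h1.trans hMc'sub, h2, fun m hm => hgtMc' m (h1 hm),
          hqF, hqG, hqd, by simpa using h3⟩
      · rcases List.mem_map.1 hp with ⟨q, hq, rfl⟩
        obtain ⟨hqF, hqG, hqd⟩ := hPPmem q hq
        refine ⟨(n, q.1, q.2, false, M'), fun _ _ => ?_⟩
        exact ⟨hnMc, hlb, h1.trans hMc'sub, h2, fun m hm => hgtMc' m (h1 hm),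
          hqF, hqG, hqd, by simpa using h3⟩
  choose dfun hdfun using record
  -- iterate
  let pk : ℕ → Set ℕ × ℕ := fun k =>
    Nat.rec (M, 0) (fun _ c => ((dfun c.1 c.2).2.2.2.2, (dfun c.1 c.2).1)) k
  have hpk : ∀ k, pk (k + 1) = ((dfun (pk k).1 (pk k).2).2.2.2.2, (dfun (pk k).1 (pk k).2).1) :=
    fun _ => rfl
  have hgood : ∀ k, (pk k).1 ⊆ M ∧ (pk k).1.Infinite := by
    intro k
    induction k with
    | zero => exact ⟨subset_rfl, hInv.1⟩
    | succ k ih =>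
      have hd := hdfun (pk k).1 (pk k).2 ih.1 ih.2
      rw [hpk k]
      exact ⟨hd.2.2.1.trans ih.1, hd.2.2.2.1⟩
  have spec := fun k => hdfun (pk k).1 (pk k).2 (hgood k).1 (hgood k).2
  set nseq : ℕ → ℕ := fun k => (dfun (pk k).1 (pk k).2).1 with hnseq
  set Fseq : ℕ → Finset ℕ := fun k => (dfun (pk k).1 (pk k).2).2.1 with hFseq
  set Gseq : ℕ → Finset ℕ := fun k => (dfun (pk k).1 (pk k).2).2.2.1 with hGseq
  set roseq : ℕ → Bool := fun k => (dfun (pk k).1 (pk k).2).2.2.2.1 with hroseq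
  set Mres : ℕ → Set ℕ := fun k => (dfun (pk k).1 (pk k).2).2.2.2.2 with hMres
  have hpk1 : ∀ k, (pk (k+1)).1 = Mres k := fun k => by rw [hpk k]
  have hpk2 : ∀ k, (pk (k+1)).2 = nseq k := fun k => by rw [hpk k]
  have hmono : ∀ k, nseq k < nseq (k + 1) := by
    intro k
    have := (spec (k+1)).2.1
    rwa [hpk2 k] at this
  have hsm : StrictMono nseq := strictMono_nat_of_lt_succ hmono
  have hmem1 : ∀ k, nseq (k+1) ∈ Mres k := by
    intro k
    have := (spec (k+1)).1
    rwa [hpk1 k] at this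
  have hres : ∀ k, Mres (k+1) ⊆ Mres k := by
    intro k
    have := (spec (k+1)).2.2.1
    rwa [hpk1 k] at this
  have hchain : ∀ k j, k ≤ j → Mres j ⊆ Mres k := by
    intro k j hkj
    induction j, hkj using Nat.le_induction with
    | base => exact subset_rfl
    | succ j _ ih => exact (hres j).trans ih
  have hmemchain : ∀ k j, k < j → nseq j ∈ Mres k := by
    intro k j hkj
    obtain ⟨j', rfl⟩ := Nat.exists_eq_add_of_lt hkj
    exact hchain k (k + j') (Nat.le_add_right _ _) (by simpa [Nat.add_assoc] using hmem1 (k + j'))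
  have hnM : ∀ k, nseq k ∈ M := fun k => (hgood k).1 (spec k).1
  -- pigeonhole on the recorded templates
  obtain ⟨v, hv⟩ := exists_infinite_fiber' (fun k => (Fseq k, Gseq k, roseq k))
    ((T.powerset ×ˢ T.powerset ×ˢ ({true, false} : Finset Bool) : Finset _) : Set _)
    (Finset.finite_toSet _)
    (by
      intro k
      have h1 := (spec k).2.2.2.2.2.1
      have h2 := (spec k).2.2.2.2.2.2.1
      simp only [Finset.coe_product, Set.mem_prod, Finset.mem_coe, Finset.mem_powerset,
        Finset.mem_insert, Finset.mem_singleton]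
      exact ⟨h1, h2, Or.symm (Bool.dichotomy _)⟩)
  obtain ⟨Fv, Gv, rov⟩ := v
  have hfib : ∀ k ∈ {k | (Fseq k, Gseq k, roseq k) = (Fv, Gv, rov)},
      Fseq k = Fv ∧ Gseq k = Gv ∧ roseq k = rov := by
    intro k hk
    simpa [Prod.ext_iff] using hk
  obtain ⟨k₁, hk₁⟩ := hv.nonempty
  obtain ⟨hFk₁, hGk₁, _⟩ := hfib k₁ hk₁
  have hFvT : Fv ⊆ T := hFk₁ ▸ (spec k₁).2.2.2.2.2.1
  have hGvT : Gv ⊆ T := hGk₁ ▸ (spec k₁).2.2.2.2.2.2.1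
  have hdv : Disjoint Fv Gv := hFk₁ ▸ hGk₁ ▸ (spec k₁).2.2.2.2.2.2.2.1
  set Mo : Set ℕ := nseq '' {k | (Fseq k, Gseq k, roseq k) = (Fv, Gv, rov)} with hMo
  have hMoinf : Mo.Infinite := hv.image (hsm.injective.injOn)
  have hMosub : Mo ⊆ M := by rintro m ⟨k, _, rfl⟩; exact hnM k
  obtain ⟨x, hx⟩ := hInv.2 Fv Gv hFvT hGvT hdv Mo hMosub hMoinf
  obtain ⟨hxF, hxG, hInfA, hInfB⟩ := hx
  -- a helper to transfer the infinite membership into a residual reservoir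
  have htrans : ∀ (C : ℕ → Set S), InfOn C Mo x → ∀ k₀, InfOn C (Mres k₀) x := by
    intro C hC k₀
    have hsub : ({n | n ∈ Mo ∧ x ∈ C n} \ Set.Iic (nseq k₀)) ⊆ {n | n ∈ Mres k₀ ∧ x ∈ C n} := by
      rintro m ⟨⟨hmMo, hmC⟩, hmgt⟩
      obtain ⟨j, _, rfl⟩ := hmMo
      have : k₀ < j := by
        by_contra hle
        exact hmgt (Set.mem_Iic.2 (hsm.le_iff_le.2 (not_lt.1 hle)))
      exact ⟨hmemchain k₀ j this, hmC⟩
    exact Set.Infinite.mono hsub (hC.diff (Set.finite_Iic _))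
  cases hrov : rov with
  | true =>
    obtain ⟨m₀, hm₀Mo, hm₀A⟩ := hInfA.nonempty
    obtain ⟨k₀, hk₀fib, rfl⟩ := hm₀Mo
    obtain ⟨hF₀, hG₀, hro₀⟩ := hfib k₀ hk₀fib
    have hemp : dlim A B (if roseq k₀ = true then insert (nseq k₀) (Fseq k₀) else Fseq k₀)
        (if roseq k₀ = true then Gseq k₀ else insert (nseq k₀) (Gseq k₀)) (Mres k₀) = ∅ :=
      (spec k₀).2.2.2.2.2.2.2.2
    rw [hF₀, hG₀, hro₀, hrov] at hemp
    simp only [if_true] at hemp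
    have hxmem : x ∈ dlim A B (insert (nseq k₀) Fv) Gv (Mres k₀) := by
      refine ⟨?_, hxG, htrans A hInfA k₀, htrans B hInfB k₀⟩
      intro n hn
      rcases Finset.mem_insert.1 hn with rfl | hn'
      · exact hm₀A
      · exact hxF n hn'
    rw [hemp] at hxmem
    exact hxmem
  | false =>
    obtain ⟨m₀, hm₀Mo, hm₀B⟩ := hInfB.nonempty
    obtain ⟨k₀, hk₀fib, rfl⟩ := hm₀Mo
    obtain ⟨hF₀, hG₀, hro₀⟩ := hfib k₀ hk₀fib
    have hemp : dlim A B (if roseq k₀ = true then insert (nseq k₀) (Fseq k₀) else Fseq k₀)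
        (if roseq k₀ = true then Gseq k₀ else insert (nseq k₀) (Gseq k₀)) (Mres k₀) = ∅ :=
      (spec k₀).2.2.2.2.2.2.2.2
    rw [hF₀, hG₀, hro₀, hrov] at hemp
    simp only [Bool.false_eq_true, if_false] at hemp
    have hxmem : x ∈ dlim A B Fv (insert (nseq k₀) Gv) (Mres k₀) := by
      refine ⟨hxF, ?_, htrans A hInfA k₀, htrans B hInfB k₀⟩
      intro n hn
      rcases Finset.mem_insert.1 hn with rfl | hn'
      · exact hm₀B
      · exact hxG n hn'
    rw [hemp] at hxmem
    exact hxmem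

/-- From a rich reservoir, construct a fully independent subsequence. -/
theorem exists_indep {M : Set ℕ} (hM : M.Infinite) (hR : Rich A B ∅ ∅ M) :
    ∃ ψ : ℕ → ℕ, StrictMono ψ ∧ ∀ F G : Finset ℕ, Disjoint F G →
      ∃ x, (∀ j ∈ F, x ∈ A (ψ j)) ∧ (∀ j ∈ G, x ∈ B (ψ j)) := by
  classical
  have hInv0 : Inv A B ∅ M := by
    refine ⟨hM, fun F G hF hG _ => ?_⟩
    rw [Finset.subset_empty] at hF hG
    subst hF; subst hG
    exact hR
  have hstep : ∀ (T : Finset ℕ) (Mc : Set ℕ) (b : ℕ), ∃ d : ℕ × Set ℕ,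
      Inv A B T Mc → (d.1 ∈ Mc ∧ b < d.1 ∧ d.2 ⊆ Mc ∧ Inv A B (insert d.1 T) d.2) := by
    intro T Mc b
    by_cases h : Inv A B T Mc
    · obtain ⟨n, hn, hb, M', hsub, hI⟩ := step h b
      exact ⟨(n, M'), fun _ => ⟨hn, hb, hsub, hI⟩⟩
    · exact ⟨(0, ∅), fun h' => absurd h' h⟩
  choose sf hsf using hstep
  let st : ℕ → Finset ℕ × Set ℕ × ℕ := fun k => Nat.rec (∅, M, 0)
    (fun _ c => (insert (sf c.1 c.2.1 c.2.2).1 c.1, (sf c.1 c.2.1 c.2.2).2,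
      (sf c.1 c.2.1 c.2.2).1)) k
  have hst : ∀ k, st (k+1) = (insert (sf (st k).1 (st k).2.1 (st k).2.2).1 (st k).1,
      (sf (st k).1 (st k).2.1 (st k).2.2).2, (sf (st k).1 (st k).2.1 (st k).2.2).1) :=
    fun _ => rfl
  have hgood : ∀ k, Inv A B (st k).1 (st k).2.1 ∧ (∀ m ∈ (st k).1, m ≤ (st k).2.2) := by
    intro k
    induction k with
    | zero => exact ⟨hInv0, by simp [st]⟩
    | succ k ih =>
      have hspec := hsf (st k).1 (st k).2.1 (st k).2.2 ih.1
      rw [hst k]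
      refine ⟨hspec.2.2.2, ?_⟩
      intro m hm
      rcases Finset.mem_insert.1 hm with rfl | hm'
      · exact le_refl _
      · exact le_of_lt (lt_of_le_of_lt (ih.2 m hm') hspec.2.1)
  have hspec := fun k => hsf (st k).1 (st k).2.1 (st k).2.2 (hgood k).1
  set ψ : ℕ → ℕ := fun k => (st (k+1)).2.2 with hψ
  have hψeq : ∀ k, ψ k = (sf (st k).1 (st k).2.1 (st k).2.2).1 := by
    intro k
    show (st (k+1)).2.2 = _
    rw [hst k]
  have hψmono : StrictMono ψ := by
    apply strictMono_nat_of_lt_succ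
    intro k
    have := (hspec (k+1)).2.1
    rw [← hψeq (k+1)] at this
    exact this
  have hTmono : ∀ k, (st k).1 ⊆ (st (k+1)).1 := by
    intro k
    rw [hst k]
    exact Finset.subset_insert _ _
  have hTchain : ∀ k j, k ≤ j → (st k).1 ⊆ (st j).1 := by
    intro k j hkj
    induction j, hkj using Nat.le_induction with
    | base => exact subset_rfl
    | succ j _ ih => exact ih.trans (hTmono j)
  have hψT : ∀ j k, j < k → ψ j ∈ (st k).1 := by
    intro j k hjk
    have h1 : ψ j ∈ (st (j+1)).1 := by
      rw [hst j, ← hψeq j]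
      exact Finset.mem_insert_self _ _
    exact hTchain (j+1) k hjk h1
  refine ⟨ψ, hψmono, ?_⟩
  intro F G hFG
  set K : ℕ := (F ∪ G).sup id + 1 with hK
  have hbound : ∀ j ∈ F ∪ G, j < K := by
    intro j hj
    exact Nat.lt_succ_of_le (Finset.le_sup (f := id) hj)
  have hFsub : F.image ψ ⊆ (st K).1 := by
    intro n hn
    obtain ⟨j, hj, rfl⟩ := Finset.mem_image.1 hn
    exact hψT j K (hbound j (Finset.mem_union_left _ hj))
  have hGsub : G.image ψ ⊆ (st K).1 := by
    intro n hn
    obtain ⟨j, hj, rfl⟩ := Finset.mem_image.1 hn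
    exact hψT j K (hbound j (Finset.mem_union_right _ hj))
  have hdisj : Disjoint (F.image ψ) (G.image ψ) :=
    (Finset.disjoint_image hψmono.injective).2 hFG
  obtain ⟨x, hx⟩ := (hgood K).1.2 _ _ hFsub hGsub hdisj (st K).2.1 subset_rfl (hgood K).1.1
  refine ⟨x, ?_, ?_⟩
  · intro j hj
    exact hx.1 _ (Finset.mem_image_of_mem ψ hj)
  · intro j hj
    exact hx.2.1 _ (Finset.mem_image_of_mem ψ hj)

/-- Main abstract dichotomy over a countable family of pair-systems. -/
theorem main_dichotomy {S' : Type*} (A' B' : ℚ × ℚ → ℕ → Set S') :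
    (∃ q : ℚ × ℚ, q.1 < q.2 ∧ ∃ M : Set ℕ, M.Infinite ∧ Rich (A' q) (B' q) ∅ ∅ M) ∨
    (∃ m : ℕ → ℕ, StrictMono m ∧ ∀ q : ℚ × ℚ, q.1 < q.2 → ∀ x : S',
      ¬(InfOn (A' q) (Set.range m) x ∧ InfOn (B' q) (Set.range m) x)) := by
  classical
  by_cases hmain : ∃ q : ℚ × ℚ, q.1 < q.2 ∧ ∃ M : Set ℕ, M.Infinite ∧ Rich (A' q) (B' q) ∅ ∅ M
  · exact Or.inl hmain
  right
  push_neg at hmain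
  have h' : ∀ (q : ℚ × ℚ) (Mc : Set ℕ), ∃ M' : Set ℕ,
      (q.1 < q.2 → Mc.Infinite → (M' ⊆ Mc ∧ M'.Infinite ∧ dlim (A' q) (B' q) ∅ ∅ M' = ∅)) ∧
      (¬(q.1 < q.2) ∨ ¬Mc.Infinite → M' = Mc) := by
    intro q Mc
    by_cases hq : q.1 < q.2
    · by_cases hMc : Mc.Infinite
      · rcases dichotomy (A := A' q) (B := B' q) ∅ ∅ Mc with hR | ⟨M', h1, h2, h3⟩
        · exact absurd hR (hmain q hq Mc hMc)
        · exact ⟨M', fun _ _ => ⟨h1, h2, h3⟩, fun h => by tauto⟩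
      · exact ⟨Mc, fun _ h => absurd h hMc, fun _ => rfl⟩
    · exact ⟨Mc, fun h => absurd h hq, fun _ => rfl⟩
  choose Df hDf1 hDf2 using h'
  obtain ⟨e, he⟩ := exists_surjective_nat (ℚ × ℚ)
  let Mseq : ℕ → Set ℕ := fun k => Nat.rec Set.univ (fun k' Mc => Df (e k') Mc) k
  have hMseq : ∀ k, Mseq (k+1) = Df (e k) (Mseq k) := fun _ => rfl
  have hMgood : ∀ k, (Mseq k).Infinite ∧ Mseq (k+1) ⊆ Mseq k ∧
      ((e k).1 < (e k).2 → dlim (A' (e k)) (B' (e k)) ∅ ∅ (Mseq (k+1)) = ∅) := by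
    intro k
    induction k with
    | zero =>
      constructor
      · exact Set.infinite_univ
      · by_cases hq : (e 0).1 < (e 0).2
        · have := hDf1 (e 0) (Mseq 0) hq Set.infinite_univ
          rw [← hMseq 0] at this
          exact ⟨this.1, fun _ => this.2.2⟩
        · rw [hMseq 0, hDf2 (e 0) (Mseq 0) (Or.inl hq)]
          exact ⟨subset_rfl, fun h => absurd h hq⟩
    | succ k ih =>
      have hinf : (Mseq (k+1)).Infinite := by
        by_cases hq : (e k).1 < (e k).2
        · exact ((hDf1 (e k) (Mseq k) hq ih.1).2.1 : _)
        · rw [hMseq k, hDf2 (e k) (Mseq k) (Or.inl hq)]; exact ih.1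
      refine ⟨hinf, ?_⟩
      by_cases hq : (e (k+1)).1 < (e (k+1)).2
      · have := hDf1 (e (k+1)) (Mseq (k+1)) hq hinf
        rw [← hMseq (k+1)] at this
        exact ⟨this.1, fun _ => this.2.2⟩
      · rw [hMseq (k+1), hDf2 (e (k+1)) (Mseq (k+1)) (Or.inl hq)]
        exact ⟨subset_rfl, fun h => absurd h hq⟩
  have hchain : ∀ i j, i ≤ j → Mseq j ⊆ Mseq i := by
    intro i j hij
    induction j, hij using Nat.le_induction with
    | base => exact subset_rfl
    | succ j _ ih => exact ((hMgood j).2.1).trans ih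
  -- the diagonal sequence
  have pick : ∀ (k b : ℕ), ∃ n, n ∈ Mseq (k+1) ∧ b < n := by
    intro k b
    exact (hMgood (k+1)).1.exists_gt b
  choose pf hpf1 hpf2 using pick
  let m : ℕ → ℕ := fun k => Nat.rec (pf 0 0) (fun k' prev => pf (k'+1) prev) k
  have hm0 : m 0 = pf 0 0 := rfl
  have hms : ∀ k, m (k+1) = pf (k+1) (m k) := fun _ => rfl
  have hmmem : ∀ k, m k ∈ Mseq (k+1) := by
    intro k
    cases k with
    | zero => rw [hm0]; exact hpf1 0 0
    | succ k => rw [hms k]; exact hpf1 (k+1) (m k)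
  have hmmono : StrictMono m := by
    apply strictMono_nat_of_lt_succ
    intro k
    rw [hms k]
    exact hpf2 (k+1) (m k)
  refine ⟨m, hmmono, ?_⟩
  rintro q hq x ⟨hA, hB⟩
  obtain ⟨k, rfl⟩ := he q
  have hkey : ∀ (C : ℕ → Set S'), InfOn C (Set.range m) x → InfOn C (Mseq (k+1)) x := by
    intro C hC
    have hsub : ({n | n ∈ Set.range m ∧ x ∈ C n} \ (m '' Set.Iio (k+1))) ⊆
        {n | n ∈ Mseq (k+1) ∧ x ∈ C n} := by
      rintro n ⟨⟨⟨j, rfl⟩, hnC⟩, hnim⟩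
      have hjk : k + 1 ≤ j := by
        by_contra hlt
        exact hnim ⟨j, not_le.1 hlt, rfl⟩
      exact ⟨hchain (k+1) (j+1) (hjk.trans (Nat.le_succ j))
        (hmmem j), hnC⟩
    exact Set.Infinite.mono hsub (hC.diff ((Set.finite_Iio _).image m))
  have hx : x ∈ dlim (A' (e k)) (B' (e k)) ∅ ∅ (Mseq (k+1)) :=
    ⟨by simp, by simp, hkey _ hA, hkey _ hB⟩
  rw [(hMgood k).2.2 hq] at hx
  exact hx

/-- Rosenthal-type alternative: a bounded sequence with no weak-Cauchy subsequence
admits an "independent" subsequence. -/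
theorem indep_of_no_wc {X : Type*} [NormedAddCommGroup X] [NormedSpace ℝ X]
    (z : ℕ → X) (C : ℝ) (hzC : ∀ n, ‖z n‖ ≤ C)
    (hnwc : ¬ ∃ φ : ℕ → ℕ, StrictMono φ ∧
      ∀ f : StrongDual ℝ X, ∃ L : ℝ, Tendsto (fun j => f (z (φ j))) atTop (𝓝 L)) :
    ∃ (r s : ℝ), r < s ∧ ∃ ψ : ℕ → ℕ, StrictMono ψ ∧
      ∀ F G : Finset ℕ, Disjoint F G → ∃ f : StrongDual ℝ X, ‖f‖ ≤ 1 ∧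
        (∀ j ∈ F, f (z (ψ j)) < r) ∧ (∀ j ∈ G, s < f (z (ψ j))) := by
  classical
  set AA : ℚ × ℚ → ℕ → Set (StrongDual ℝ X) :=
    fun q n => {f | ‖f‖ ≤ 1 ∧ f (z n) < (q.1 : ℝ)} with hAA
  set BB : ℚ × ℚ → ℕ → Set (StrongDual ℝ X) :=
    fun q n => {f | ‖f‖ ≤ 1 ∧ (q.2 : ℝ) < f (z n)} with hBB
  rcases main_dichotomy AA BB with ⟨q, hq, M, hM, hRich⟩ | ⟨m, hmmono, hm⟩
  · refine ⟨(q.1 : ℝ), (q.2 : ℝ), by exact_mod_cast hq, ?_⟩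
    obtain ⟨ψ, hψmono, hψ⟩ := exists_indep hM hRich
    refine ⟨ψ, hψmono, ?_⟩
    intro F G hFG
    obtain ⟨f, hfF, hfG⟩ := hψ F G hFG
    by_cases hFne : F.Nonempty
    · obtain ⟨j₀, hj₀⟩ := hFne
      exact ⟨f, (hfF j₀ hj₀).1, fun j hj => (hfF j hj).2, fun j hj => (hfG j hj).2⟩
    · by_cases hGne : G.Nonempty
      · obtain ⟨j₀, hj₀⟩ := hGne
        exact ⟨f, (hfG j₀ hj₀).1, fun j hj => (hfF j hj).2, fun j hj => (hfG j hj).2⟩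
      · refine ⟨0, by simp, ?_, ?_⟩
        · intro j hj
          exact absurd ⟨j, hj⟩ hFne
        · intro j hj
          exact absurd ⟨j, hj⟩ hGne
  · exfalso
    apply hnwc
    refine ⟨m, hmmono, ?_⟩
    intro f
    by_cases hf0 : f = 0
    · exact ⟨0, by simp [hf0]⟩
    have hfn : (0 : ℝ) < ‖f‖ := norm_pos_iff.2 hf0
    set u : StrongDual ℝ X := ‖f‖⁻¹ • f with hu
    have hun : ‖u‖ ≤ 1 := by
      rw [hu, norm_smul, norm_inv, norm_norm, inv_mul_cancel₀ (ne_of_gt hfn)]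
    set seq : ℕ → ℝ := fun j => u (z (m j)) with hseq
    have hbd : ∀ j, |seq j| ≤ ‖u‖ * C := by
      intro j
      calc |seq j| = ‖u (z (m j))‖ := (Real.norm_eq_abs _).symm
      _ ≤ ‖u‖ * ‖z (m j)‖ := u.le_opNorm _
      _ ≤ ‖u‖ * C := by
          apply mul_le_mul_of_nonneg_left (hzC _) (norm_nonneg _)
    have hbdd_above : IsBoundedUnder (· ≤ ·) atTop seq :=
      isBoundedUnder_of ⟨‖u‖ * C, fun j => (le_abs_self _).trans (hbd j)⟩
    have hbdd_below : IsBoundedUnder (· ≥ ·) atTop seq :=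
      isBoundedUnder_of ⟨-(‖u‖ * C), fun j => neg_le_of_abs_le (hbd j)⟩
    have hinf_of_freq : ∀ (P : ℕ → Prop), (∃ᶠ j in atTop, P (m j)) →
        {n | n ∈ Set.range m ∧ P n}.Infinite := by
      intro P hP
      have h1 : {j | P (m j)}.Infinite := Nat.frequently_atTop_iff_infinite.1 hP
      have h2 : (m '' {j | P (m j)}).Infinite := h1.image (hmmono.injective.injOn)
      apply h2.mono
      rintro n ⟨j, hj, rfl⟩
      exact ⟨⟨j, rfl⟩, hj⟩
    have heq : liminf seq atTop = limsup seq atTop := by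
      by_contra hne
      have hlt : liminf seq atTop < limsup seq atTop :=
        lt_of_le_of_ne (liminf_le_limsup hbdd_above hbdd_below) hne
      obtain ⟨r, hr1, hr2⟩ := exists_rat_btwn hlt
      obtain ⟨s, hs1, hs2⟩ := exists_rat_btwn hr2
      refine hm (r, s) (by exact_mod_cast hs1) u ⟨?_, ?_⟩
      · apply hinf_of_freq (fun n => ‖u‖ ≤ 1 ∧ u (z n) < (r : ℝ))
        have := frequently_lt_of_liminf_lt hbdd_above.isCoboundedUnder_ge hr1
        exact this.mono (fun j hj => ⟨hun, hj⟩)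
      · apply hinf_of_freq (fun n => ‖u‖ ≤ 1 ∧ (s : ℝ) < u (z n))
        have := frequently_lt_of_lt_limsup hbdd_below.isCoboundedUnder_le hs2
        exact this.mono (fun j hj => ⟨hun, hj⟩)
    have htend : Tendsto seq atTop (𝓝 (liminf seq atTop)) :=
      tendsto_of_liminf_eq_limsup rfl heq.symm hbdd_above hbdd_below
    refine ⟨‖f‖ * liminf seq atTop, ?_⟩
    have : (fun j => f (z (m j))) = fun j => ‖f‖ * seq j := by
      funext j
      rw [hseq]
      simp only [hu, ContinuousLinearMap.smul_apply, smul_eq_mul]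
      rw [← mul_assoc, mul_inv_cancel₀ (ne_of_gt hfn), one_mul]
    rw [this]
    exact (tendsto_const_nhds.mul htend)

/-- A weakly precompact set is bounded. -/
theorem bounded_of_wpc {X : Type*} [NormedAddCommGroup X] [NormedSpace ℝ X]
    (W : Set X)
    (hW : ∀ x : ℕ → X, (∀ n, x n ∈ W) → ∃ φ : ℕ → ℕ, StrictMono φ ∧
      ∀ f : StrongDual ℝ X, ∃ L : ℝ, Tendsto (fun j => f (x (φ j))) atTop (𝓝 L)) :
    ∃ C : ℝ, 0 < C ∧ ∀ w ∈ W, ‖w‖ ≤ C := by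
  by_contra h
  push_neg at h
  have hex : ∀ n : ℕ, ∃ w, w ∈ W ∧ (n : ℝ) < ‖w‖ := by
    intro n
    obtain ⟨w, hw, hlt⟩ := h ((n : ℝ) + 1) (by positivity)
    exact ⟨w, hw, lt_of_le_of_lt (by linarith) hlt⟩
  choose u hu hn using hex
  obtain ⟨φ, hφ, hconv⟩ := hW u hu
  set g : ℕ → StrongDual ℝ (StrongDual ℝ X) :=
    fun i => NormedSpace.inclusionInDoubleDualLi ℝ (u (φ i)) with hg
  have hpt : ∀ f : StrongDual ℝ X, ∃ Cf, ∀ i, ‖g i f‖ ≤ Cf := by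
    intro f
    obtain ⟨L, hL⟩ := hconv f
    obtain ⟨Cf, hCf⟩ := (hL.norm : Tendsto (fun j => ‖f (u (φ j))‖) atTop (𝓝 ‖L‖)).bddAbove_range
    refine ⟨Cf, fun i => ?_⟩
    have : g i f = f (u (φ i)) := by
      rw [hg]
      exact NormedSpace.dual_def ℝ X (u (φ i)) f
    rw [this]
    exact hCf ⟨i, rfl⟩
  obtain ⟨C', hC'⟩ := banach_steinhaus hpt
  obtain ⟨n, hnC⟩ := exists_nat_gt C'
  have h1 : ‖g n‖ = ‖u (φ n)‖ := (NormedSpace.inclusionInDoubleDualLi ℝ).norm_map _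
  have h2 : (n : ℝ) ≤ (φ n : ℝ) := by exact_mod_cast hφ.le_apply
  have h3 : (φ n : ℝ) < ‖u (φ n)‖ := hn (φ n)
  have := hC' n
  rw [h1] at this
  linarith

/-- The coin-flipping (Haar) probability measure on `ℕ → ZMod 2` gives each two-coordinate
cylinder measure `1/4`. -/
theorem exists_coin_measure :
    ∃ μ : MeasureTheory.Measure (ℕ → ZMod 2), MeasureTheory.IsProbabilityMeasure μ ∧
      ∀ t t' : ℕ, t ≠ t' →
        μ {σ | σ t = 0 ∧ σ t' = 1} = 1/4 := by
  classical
  set μ : MeasureTheory.Measure (ℕ → ZMod 2) :=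
    MeasureTheory.Measure.addHaarMeasure (⊤ : TopologicalSpace.PositiveCompacts (ℕ → ZMod 2))
    with hμ
  have hprob : MeasureTheory.IsProbabilityMeasure μ := by
    constructor
    have := MeasureTheory.Measure.addHaarMeasure_self
      (K₀ := (⊤ : TopologicalSpace.PositiveCompacts (ℕ → ZMod 2)))
    simpa using this
  refine ⟨μ, hprob, ?_⟩
  intro t t' htt
  set E : ZMod 2 → ZMod 2 → Set (ℕ → ZMod 2) := fun a b => {σ | σ t = a ∧ σ t' = b} with hE
  have hEmeas : ∀ a b, MeasurableSet (E a b) := by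
    intro a b
    have h1 := measurable_pi_apply (X := fun _ : ℕ => ZMod 2) t (measurableSet_singleton a)
    have h2 := measurable_pi_apply (X := fun _ : ℕ => ZMod 2) t' (measurableSet_singleton b)
    exact h1.inter h2
  have hEeq : ∀ a b : ZMod 2, μ (E a b) = μ (E 0 1) := by
    intro a b
    set v : ℕ → ZMod 2 := fun i => if i = t then -a else if i = t' then 1 - b else 0 with hv
    have hvt : v t = -a := by simp [hv]
    have hvt' : v t' = 1 - b := by simp [hv, Ne.symm htt]
    have hpre : E a b = (fun σ => v + σ) ⁻¹' (E 0 1) := by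
      ext σ
      simp only [hE, Set.mem_setOf_eq, Set.mem_preimage, Pi.add_apply, hvt, hvt']
      constructor
      · rintro ⟨h1, h2⟩
        rw [h1, h2]
        constructor
        · ring
        · ring
      · rintro ⟨h1, h2⟩
        constructor
        · linear_combination h1
        · linear_combination h2
    rw [hpre]
    exact MeasureTheory.measure_preimage_add μ v (E 0 1)
  have hcover : (Set.univ : Set (ℕ → ZMod 2)) = ⋃ p : ZMod 2 × ZMod 2, E p.1 p.2 := by
    ext σ
    simp only [Set.mem_univ, Set.mem_iUnion, true_iff]
    exact ⟨(σ t, σ t'), rfl, rfl⟩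
  have hdisj : Pairwise (Function.onFun Disjoint (fun p : ZMod 2 × ZMod 2 => E p.1 p.2)) := by
    rintro ⟨a, b⟩ ⟨a', b'⟩ hne
    rw [Function.onFun]
    rw [Set.disjoint_left]
    rintro σ ⟨h1, h2⟩ ⟨h3, h4⟩
    exact hne (by rw [Prod.ext_iff]; exact ⟨h1 ▸ h3 ▸ rfl, h2 ▸ h4 ▸ rfl⟩)
  have hsum : μ Set.univ = ∑ p : ZMod 2 × ZMod 2, μ (E p.1 p.2) := by
    rw [hcover, MeasureTheory.measure_iUnion hdisj (fun p => hEmeas p.1 p.2), tsum_fintype]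
  have huniv : μ Set.univ = 1 := hprob.measure_univ
  rw [huniv] at hsum
  have hconst : ∑ p : ZMod 2 × ZMod 2, μ (E p.1 p.2) = 4 * μ (E 0 1) := by
    calc ∑ p : ZMod 2 × ZMod 2, μ (E p.1 p.2)
        = ∑ _p : ZMod 2 × ZMod 2, μ (E 0 1) := Finset.sum_congr rfl (fun p _ => hEeq p.1 p.2)
      _ = ((Finset.univ : Finset (ZMod 2 × ZMod 2)).card : ℕ) • μ (E 0 1) := Finset.sum_const _
      _ = 4 * μ (E 0 1) := by
          rw [show (Finset.univ : Finset (ZMod 2 × ZMod 2)).card = 4 from by decide]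
          rw [nsmul_eq_mul]
          norm_num
  rw [hconst] at hsum
  rw [ENNReal.eq_div_iff (by norm_num) (by norm_num)]
  exact hsum.symm

section Selection

/-- The strictly convex functional used to select points measurably. -/
def Qfun (C : ℝ) : (ℕ → ℝ) → ℝ := fun p => ∑' k, (1/2 : ℝ)^k * (min |p k| (C+1))^2

theorem Qfun_term_nonneg (C : ℝ) (p : ℕ → ℝ) (k : ℕ) :
    0 ≤ (1/2 : ℝ)^k * (min |p k| (C+1))^2 :=
  mul_nonneg (pow_nonneg (by norm_num) _) (sq_nonneg _)

theorem Qfun_term_bound {C : ℝ} (hC : 0 ≤ C) (p : ℕ → ℝ) (k : ℕ) :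
    ‖(1/2 : ℝ)^k * (min |p k| (C+1))^2‖ ≤ (1/2 : ℝ)^k * (C+1)^2 := by
  rw [Real.norm_eq_abs, abs_of_nonneg (Qfun_term_nonneg C p k)]
  apply mul_le_mul_of_nonneg_left _ (pow_nonneg (by norm_num) _)
  have h1 : 0 ≤ min |p k| (C+1) := le_min (abs_nonneg _) (by linarith)
  have h2 : min |p k| (C+1) ≤ C + 1 := min_le_right _ _
  nlinarith

theorem Qfun_bound_summable {C : ℝ} : Summable (fun k : ℕ => (1/2 : ℝ)^k * (C+1)^2) :=
  summable_geometric_two.mul_right _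

theorem Qfun_summable {C : ℝ} (hC : 0 ≤ C) (p : ℕ → ℝ) :
    Summable (fun k => (1/2 : ℝ)^k * (min |p k| (C+1))^2) := by
  apply Summable.of_norm
  apply Summable.of_nonneg_of_le (fun k => norm_nonneg _) (Qfun_term_bound hC p)
  exact Qfun_bound_summable

theorem Qfun_continuous {C : ℝ} (hC : 0 ≤ C) : Continuous (Qfun C) := by
  apply continuous_tsum _ Qfun_bound_summable (fun k p => Qfun_term_bound hC p k)
  intro k
  have h1 : Continuous fun p : ℕ → ℝ => p k := continuous_apply k
  continuity

theorem Qfun_mid {C : ℝ} (hC : 0 ≤ C) {p q : ℕ → ℝ} (hp : ∀ k, |p k| ≤ C)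
    (hq : ∀ k, |q k| ≤ C) (hne : p ≠ q) :
    Qfun C ((1/2 : ℝ) • p + (1/2 : ℝ) • q) < (Qfun C p + Qfun C q) / 2 := by
  have hco : ∀ k, ((1/2 : ℝ) • p + (1/2 : ℝ) • q) k = (p k + q k) / 2 := by
    intro k
    simp only [Pi.add_apply, Pi.smul_apply, smul_eq_mul]
    ring
  have hmidb : ∀ k, |((1/2 : ℝ) • p + (1/2 : ℝ) • q) k| ≤ C := by
    intro k
    have h1 := abs_le.1 (hp k)
    have h2 := abs_le.1 (hq k)
    rw [hco k, abs_le]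
    constructor
    · nlinarith [h1.1, h2.1]
    · nlinarith [h1.2, h2.2]
  have hmin : ∀ (r : ℕ → ℝ), (∀ k, |r k| ≤ C) → ∀ k,
      (min |r k| (C+1))^2 = (r k)^2 := by
    intro r hr k
    rw [min_eq_left (le_trans (hr k) (by linarith)), sq_abs]
  obtain ⟨k₀, hk₀⟩ : ∃ k, p k ≠ q k := by
    by_contra hcon
    push_neg at hcon
    exact hne (funext hcon)
  have key : ∀ (t x y : ℝ), 0 ≤ t → t * ((x + y)/2)^2 ≤ (t * x^2 + t * y^2) / 2 := by
    intro t x y ht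
    nlinarith [mul_nonneg ht (sq_nonneg (x - y))]
  have keylt : ∀ (t x y : ℝ), 0 < t → x ≠ y → t * ((x + y)/2)^2 < (t * x^2 + t * y^2) / 2 := by
    intro t x y ht hxy
    have h0 : (0:ℝ) < (x - y)^2 :=
      lt_of_le_of_ne (sq_nonneg _) (Ne.symm (pow_ne_zero 2 (sub_ne_zero.2 hxy)))
    nlinarith [mul_pos ht h0]
  have hptle : ∀ k, (1/2 : ℝ)^k * (min |((1/2 : ℝ) • p + (1/2 : ℝ) • q) k| (C+1))^2 ≤
      ((1/2 : ℝ)^k * (min |p k| (C+1))^2 + (1/2 : ℝ)^k * (min |q k| (C+1))^2) / 2 := by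
    intro k
    rw [hmin _ hmidb, hmin _ hp, hmin _ hq, hco]
    exact key _ _ _ (by positivity)
  have hptlt : (1/2 : ℝ)^k₀ * (min |((1/2 : ℝ) • p + (1/2 : ℝ) • q) k₀| (C+1))^2 <
      ((1/2 : ℝ)^k₀ * (min |p k₀| (C+1))^2 + (1/2 : ℝ)^k₀ * (min |q k₀| (C+1))^2) / 2 := by
    rw [hmin _ hmidb, hmin _ hp, hmin _ hq, hco]
    exact keylt _ _ _ (by positivity) hk₀
  have hsum2 : Summable (fun k => ((1/2 : ℝ)^k * (min |p k| (C+1))^2 +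
      (1/2 : ℝ)^k * (min |q k| (C+1))^2) / 2) :=
    ((Qfun_summable hC p).add (Qfun_summable hC q)).div_const _
  have hlt := Summable.tsum_lt_tsum hptle hptlt (Qfun_summable hC _) hsum2
  calc Qfun C ((1/2 : ℝ) • p + (1/2 : ℝ) • q) < _ := hlt
    _ = (Qfun C p + Qfun C q) / 2 := by
        rw [tsum_div_const, Summable.tsum_add (Qfun_summable hC p) (Qfun_summable hC q)]
        rfl

/-- measurability of functions on the coin space determined by finitely many coordinates. -/
theorem measurable_of_finitely_determined {β : Type*} [MeasurableSpace β]
    (f : (ℕ → ZMod 2) → β) (m : ℕ)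
    (h : ∀ σ σ', (∀ t, t < m → σ t = σ' t) → f σ = f σ') : Measurable f := by
  classical
  set F : (Fin m → ZMod 2) → β := fun v => f (fun t => if ht : t < m then v ⟨t, ht⟩ else 0)
    with hF
  have hfe : f = fun σ => F (fun i => σ i.val) := by
    funext σ
    rw [hF]
    apply h
    intro t ht
    simp [ht]
  rw [hfe]
  exact (measurable_of_countable F).comp
    (measurable_pi_lambda (fun (σ : ℕ → ZMod 2) (i : Fin m) => σ i.val)
      (fun i => measurable_pi_apply i.val))

/-- Measurable selection of points in compact convex sections. -/
theorem exists_measurable_selection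
    (KH : Set (ℕ → ℝ)) (hKcomp : IsCompact KH) (hKconv : Convex ℝ KH)
    (C : ℝ) (hC : 0 ≤ C) (hKbd : ∀ p ∈ KH, ∀ k, |p k| ≤ C)
    (Scon : ℕ → ZMod 2 → Set (ℕ → ℝ))
    (hScl : ∀ t b, IsClosed (Scon t b)) (hSconv : ∀ t b, Convex ℝ (Scon t b))
    (hne : ∀ (σ : ℕ → ZMod 2) (m : ℕ),
      (KH ∩ ⋂ t ∈ Finset.range m, Scon t (σ t)).Nonempty) :
    ∃ g : (ℕ → ZMod 2) → (ℕ → ℝ), Measurable g ∧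
      ∀ σ, g σ ∈ KH ∧ ∀ t, g σ ∈ Scon t (σ t) := by
  classical
  set KS : (ℕ → ZMod 2) → ℕ → Set (ℕ → ℝ) :=
    fun σ m => KH ∩ ⋂ t ∈ Finset.range m, Scon t (σ t) with hKS
  have hKSclosed : ∀ σ m, IsClosed (KS σ m) :=
    fun σ m => hKcomp.isClosed.inter (isClosed_biInter (fun t _ => hScl t (σ t)))
  have hKScomp : ∀ σ m, IsCompact (KS σ m) :=
    fun σ m => hKcomp.inter_right (isClosed_biInter (fun t _ => hScl t (σ t)))
  have hKSconv : ∀ σ m, Convex ℝ (KS σ m) :=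
    fun σ m => hKconv.inter (convex_iInter (fun t => convex_iInter (fun _ => hSconv t (σ t))))
  have hKSanti : ∀ σ (m m' : ℕ), m ≤ m' → KS σ m' ⊆ KS σ m := by
    intro σ m m' hmm x hx
    refine ⟨hx.1, ?_⟩
    have h2 := Set.mem_iInter₂.1 hx.2
    apply Set.mem_iInter₂.2
    intro t ht
    exact h2 t (Finset.mem_range.2 (lt_of_lt_of_le (Finset.mem_range.1 ht) hmm))
  have hKStrunc : ∀ (σ σ' : ℕ → ZMod 2) (m : ℕ), (∀ t, t < m → σ t = σ' t) →
      KS σ m = KS σ' m := by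
    intro σ σ' m h
    show KH ∩ (⋂ t ∈ Finset.range m, Scon t (σ t)) =
      KH ∩ (⋂ t ∈ Finset.range m, Scon t (σ' t))
    congr 1
    exact Set.iInter₂_congr (fun t ht => by rw [h t (Finset.mem_range.1 ht)])
  have hmin : ∀ (σ : ℕ → ZMod 2) (m : ℕ), ∃ p, p ∈ KS σ m ∧ IsMinOn (Qfun C) (KS σ m) p :=
    fun σ m => (hKScomp σ m).exists_isMinOn (hne σ m) (Qfun_continuous hC).continuousOn
  choose msel hmsel₁ hmsel₂ using hmin
  set selm : ℕ → (ℕ → ZMod 2) → (ℕ → ℝ) :=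
    fun m σ => msel (fun t => if t < m then σ t else 0) m with hselm
  have htr : ∀ m (σ : ℕ → ZMod 2), KS (fun t => if t < m then σ t else 0) m = KS σ m := by
    intro m σ
    apply hKStrunc
    intro t ht
    simp [ht]
  have hselm_mem : ∀ m σ, selm m σ ∈ KS σ m := by
    intro m σ
    rw [hselm, ← htr m σ]
    exact hmsel₁ _ m
  have hselm_min : ∀ m σ, IsMinOn (Qfun C) (KS σ m) (selm m σ) := by
    intro m σ
    rw [hselm, ← htr m σ]
    exact hmsel₂ _ m
  have hselm_meas : ∀ m, Measurable (selm m) := by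
    intro m
    apply measurable_of_finitely_determined _ m
    intro σ σ' h
    show msel (fun t => if t < m then σ t else 0) m = msel (fun t => if t < m then σ' t else 0) m
    have harg : (fun t => if t < m then σ t else 0) = (fun t => if t < m then σ' t else 0) := by
      funext t
      by_cases ht : t < m
      · simp [ht, h t ht]
      · simp [ht]
    rw [harg]
  set Kinf : (ℕ → ZMod 2) → Set (ℕ → ℝ) := fun σ => KH ∩ ⋂ t, Scon t (σ t) with hKinf
  have hKinf_eq : ∀ σ, (⋂ m, KS σ m) = Kinf σ := by
    intro σ
    ext p
    simp only [Set.mem_iInter, hKinf, Set.mem_inter_iff, hKS, Set.mem_iInter₂]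
    constructor
    · intro h
      refine ⟨(h 0).1, fun t => (h (t+1)).2 t (Finset.mem_range.2 (Nat.lt_succ_self t))⟩
    · intro h m
      exact ⟨h.1, fun t _ => h.2 t⟩
  have hKinf_ne : ∀ σ, (Kinf σ).Nonempty := by
    intro σ
    rw [← hKinf_eq σ]
    apply IsCompact.nonempty_iInter_of_directed_nonempty_isCompact_isClosed
    · intro m m'
      exact ⟨max m m', hKSanti σ m _ (le_max_left _ _), hKSanti σ m' _ (le_max_right _ _)⟩
    · exact fun m => hne σ m
    · exact fun m => hKScomp σ m
    · exact fun m => hKSclosed σ m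
  have hKinf_comp : ∀ σ, IsCompact (Kinf σ) :=
    fun σ => hKcomp.inter_right (isClosed_iInter (fun t => hScl t (σ t)))
  have hKinf_conv : ∀ σ, Convex ℝ (Kinf σ) :=
    fun σ => hKconv.inter (convex_iInter (fun t => hSconv t (σ t)))
  have hminK : ∀ σ, ∃ p, p ∈ Kinf σ ∧ IsMinOn (Qfun C) (Kinf σ) p :=
    fun σ => (hKinf_comp σ).exists_isMinOn (hKinf_ne σ) (Qfun_continuous hC).continuousOn
  choose gsel hg₁ hg₂ using hminK
  have hgKS : ∀ σ m, gsel σ ∈ KS σ m := by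
    intro σ m
    have := (hg₁ σ)
    rw [← hKinf_eq σ] at this
    exact Set.mem_iInter.1 this m
  have htends : ∀ σ, Tendsto (fun m => selm m σ) atTop (𝓝 (gsel σ)) := by
    intro σ
    apply tendsto_of_subseq_tendsto
    intro ns hns
    obtain ⟨a, haK, ms, hms, hmstend⟩ :=
      hKcomp.tendsto_subseq (x := fun j => selm (ns j) σ) (fun j => (hselm_mem (ns j) σ).1)
    refine ⟨ms, ?_⟩
    have hns' : Tendsto (fun j => ns (ms j)) atTop atTop := hns.comp hms.tendsto_atTop
    have haKinf : a ∈ Kinf σ := by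
      refine ⟨haK, ?_⟩
      rw [Set.mem_iInter]
      intro t
      apply (hScl t (σ t)).mem_of_tendsto hmstend
      filter_upwards [hns'.eventually_ge_atTop (t+1)] with j hj
      have hmem := hselm_mem (ns (ms j)) σ
      have := Set.mem_iInter₂.1 hmem.2 t (Finset.mem_range.2 (Nat.lt_of_lt_of_le (Nat.lt_succ_self t) hj))
      exact this
    have hQle : ∀ m, Qfun C (selm m σ) ≤ Qfun C (gsel σ) :=
      fun m => isMinOn_iff.1 (hselm_min m σ) _ (hgKS σ m)
    have hQa : Tendsto (fun j => Qfun C (selm (ns (ms j)) σ)) atTop (𝓝 (Qfun C a)) :=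
      ((Qfun_continuous hC).tendsto a).comp hmstend
    have h1 : Qfun C a ≤ Qfun C (gsel σ) :=
      le_of_tendsto hQa (Eventually.of_forall (fun j => hQle _))
    have h2 : Qfun C (gsel σ) ≤ Qfun C a := isMinOn_iff.1 (hg₂ σ) _ haKinf
    have heq : a = gsel σ := by
      by_contra hnea
      have hmid : (1/2 : ℝ) • a + (1/2 : ℝ) • gsel σ ∈ Kinf σ := by
        apply (hKinf_conv σ) haKinf (hg₁ σ) (by norm_num) (by norm_num)
        norm_num
      have hlt := Qfun_mid hC (fun k => hKbd a haK k) (fun k => hKbd _ (hg₁ σ).1 k) hnea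
      have hge := isMinOn_iff.1 (hg₂ σ) _ hmid
      linarith
    rw [← heq]
    exact hmstend
  refine ⟨gsel, ?_, fun σ => ⟨(hg₁ σ).1, fun t => Set.mem_iInter.1 (hg₁ σ).2 t⟩⟩
  exact measurable_of_tendsto_metrizable' atTop hselm_meas (tendsto_pi_nhds.2 htends)

end Selection

end WPCaux

/-- A subset `W` of a normed space is weakly precompact if every sequence in `W` has a
weak-Cauchy subsequence. -/
def IsWeaklyPrecompact {X : Type*} [NormedAddCommGroup X] [NormedSpace ℝ X]
    (W : Set X) : Prop :=
  ∀ x : ℕ → X, (∀ n, x n ∈ W) →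
    ∃ φ : ℕ → ℕ, StrictMono φ ∧
      ∀ f : StrongDual ℝ X, ∃ L : ℝ, Tendsto (fun j => f (x (φ j))) atTop (𝓝 L)

set_option maxHeartbeats 2000000 in
/-- The norm-closed convex hull of a weakly precompact subset of a real
Banach space is weakly precompact. -/
theorem isWeaklyPrecompact_closure_convexHull
    (X : Type*) [NormedAddCommGroup X] [NormedSpace ℝ X] [CompleteSpace X]
    (W : Set X) (hW : IsWeaklyPrecompact W) :
    IsWeaklyPrecompact (closure (convexHull ℝ W)) := by
  classical
  intro x hx
  by_contra hcon
  -- `W` is nonempty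
  rcases Set.eq_empty_or_nonempty W with rfl | ⟨w₀, hw₀⟩
  · rw [convexHull_empty, closure_empty] at hx
    exact absurd (hx 0) (Set.notMem_empty _)
  -- `W` is bounded
  obtain ⟨C, hCpos, hCW⟩ := WPCaux.bounded_of_wpc W hW
  have hCc : ∀ y ∈ closure (convexHull ℝ W), ‖y‖ ≤ C := by
    have h1 : convexHull ℝ W ⊆ Metric.closedBall 0 C := by
      apply convexHull_min _ (convex_closedBall 0 C)
      intro w hw
      rw [Metric.mem_closedBall, dist_zero_right]
      exact hCW w hw
    have h2 : closure (convexHull ℝ W) ⊆ Metric.closedBall 0 C :=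
      closure_minimal h1 Metric.isClosed_closedBall
    intro y hy
    have := h2 hy
    rwa [Metric.mem_closedBall, dist_zero_right] at this
  -- approximants from the convex hull
  have happrox : ∀ n : ℕ, ∃ w ∈ convexHull ℝ W, ‖x n - w‖ < 1/(n+1) := by
    intro n
    obtain ⟨w, hw1, hw2⟩ := Metric.mem_closure_iff.1 (hx n) (1/(n+1)) (by positivity)
    exact ⟨w, hw1, by rwa [dist_eq_norm] at hw2⟩
  choose z hzW hzx using happrox
  have hzC : ∀ n, ‖z n‖ ≤ C := fun n => hCc _ (subset_closure (hzW n))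
  -- z has no weak-Cauchy subsequence either
  have hznwc : ¬ ∃ φ : ℕ → ℕ, StrictMono φ ∧ ∀ f : StrongDual ℝ X, ∃ L : ℝ,
      Tendsto (fun j => f (z (φ j))) atTop (𝓝 L) := by
    rintro ⟨φ, hφ, hL⟩
    apply hcon
    refine ⟨φ, hφ, fun f => ?_⟩
    obtain ⟨L, hLf⟩ := hL f
    refine ⟨L, ?_⟩
    have hdiff : Tendsto (fun j => f (x (φ j)) - f (z (φ j))) atTop (𝓝 0) := by
      have hbound : ∀ j, ‖f (x (φ j)) - f (z (φ j))‖ ≤ ‖f‖ * (1/((φ j : ℝ) + 1)) := by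
        intro j
        calc ‖f (x (φ j)) - f (z (φ j))‖ = ‖f (x (φ j) - z (φ j))‖ := by rw [map_sub]
          _ ≤ ‖f‖ * ‖x (φ j) - z (φ j)‖ := f.le_opNorm _
          _ ≤ ‖f‖ * (1/((φ j : ℝ) + 1)) := by
              apply mul_le_mul_of_nonneg_left _ (norm_nonneg f)
              have := hzx (φ j)
              push_cast
              push_cast at this
              linarith
      have h1 : Tendsto (fun j : ℕ => ((φ j : ℝ) + 1)) atTop atTop := by
        apply tendsto_atTop_add_const_right
        exact tendsto_natCast_atTop_atTop.comp hφ.tendsto_atTop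
      have h2 : Tendsto (fun j : ℕ => 1/((φ j : ℝ) + 1)) atTop (𝓝 0) :=
        tendsto_const_nhds.div_atTop h1
      have h3 : Tendsto (fun j : ℕ => ‖f‖ * (1/((φ j : ℝ) + 1))) atTop (𝓝 0) := by
        have := h2.const_mul ‖f‖
        simpa using this
      exact squeeze_zero_norm hbound h3
    have := hdiff.add hLf
    simp only [sub_add_cancel, zero_add] at this
    exact this
  -- independence
  obtain ⟨r, s, hrs, ψ, hψmono, hind⟩ := WPCaux.indep_of_no_wc z C hzC hznwc
  set y : ℕ → X := fun t => z (ψ t) with hy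
  -- convex representations
  have hrep : ∀ t : ℕ, ∃ (N : ℕ) (a : ℕ → ℝ) (v : ℕ → X),
      (∀ i, 0 ≤ a i) ∧ (∀ i, v i ∈ W) ∧ (∑ i ∈ Finset.range N, a i) = 1 ∧
      (∑ i ∈ Finset.range N, a i • v i) = y t := by
    intro t
    have hmem := hzW (ψ t)
    rw [convexHull_eq] at hmem
    obtain ⟨ι, tset, wgt, pts, h0, h1, hPts, hcm⟩ := hmem
    set N := tset.card with hN
    set e : Fin N → {i // i ∈ tset} := fun i => tset.equivFin.symm i with he
    refine ⟨N, (fun i => if h : i < N then wgt (e ⟨i, h⟩) else 0),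
      (fun i => if h : i < N then pts (e ⟨i, h⟩) else w₀), ?_, ?_, ?_, ?_⟩
    · intro i
      by_cases h : i < N
      · simp only [dif_pos h]
        exact h0 _ (e ⟨i, h⟩).2
      · simp [h]
    · intro i
      by_cases h : i < N
      · simp only [dif_pos h]
        exact hPts _ (e ⟨i, h⟩).2
      · simp [h, hw₀]
    · rw [← Fin.sum_univ_eq_sum_range]
      have : ∀ i : Fin N, (if h : (i : ℕ) < N then wgt (e ⟨i, h⟩) else 0) = wgt (e i) := by
        intro i
        rw [dif_pos i.2]
      rw [Finset.sum_congr rfl (fun i _ => this i)]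
      rw [Equiv.sum_comp tset.equivFin.symm (fun s => wgt s)]
      rw [← h1]
      exact Finset.sum_coe_sort tset wgt
    · rw [← Fin.sum_univ_eq_sum_range]
      have : ∀ i : Fin N, (if h : (i : ℕ) < N then wgt (e ⟨i, h⟩) else 0) •
          (if h : (i : ℕ) < N then pts (e ⟨i, h⟩) else w₀) = wgt (e i) • pts (e i) := by
        intro i
        rw [dif_pos i.2, dif_pos i.2]
      rw [Finset.sum_congr rfl (fun i _ => this i)]
      rw [Equiv.sum_comp tset.equivFin.symm (fun s => wgt s • pts s)]
      have hfin : ∑ i : { x // x ∈ tset }, wgt ↑i • pts ↑i = ∑ i ∈ tset, wgt i • pts i :=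
        Finset.sum_coe_sort tset (fun i => wgt i • pts i)
      rw [hfin, ← Finset.centerMass_eq_of_sum_1 tset pts h1, hcm]
  choose Nt af vf haf0 hvfW hafsum hafrep using hrep
  -- the global countable family
  set D : ℕ → X := fun k => vf (Nat.unpair k).1 (Nat.unpair k).2 with hD
  have hDW : ∀ k, D k ∈ W := fun k => hvfW _ _
  have hDC : ∀ k, ‖D k‖ ≤ C := fun k => hCW _ (hDW k)
  have hyD : ∀ t, ∑ i ∈ Finset.range (Nt t), af t i • D (Nat.pair t i) = y t := by
    intro t
    rw [← hafrep t]
    apply Finset.sum_congr rfl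
    intro i _
    rw [hD]
    simp only [Nat.unpair_pair]
  -- the compact convex set of coordinate profiles
  set Kball : Set (WeakDual ℝ X) := WeakDual.toStrongDual ⁻¹' Metric.closedBall 0 1 with hKball
  have hKballcomp : IsCompact Kball := WeakDual.isCompact_closedBall (𝕜 := ℝ) 0 1
  set Φ : WeakDual ℝ X → (ℕ → ℝ) := fun f => fun k => f (D k) with hΦ
  have hΦcont : Continuous Φ := continuous_pi (fun k => WeakDual.eval_continuous (D k))
  set KH : Set (ℕ → ℝ) := Φ '' Kball with hKH
  have hKHcomp : IsCompact KH := hKballcomp.image hΦcont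
  have hKballconv : Convex ℝ Kball := by
    intro p hp q hq a b ha hb hab
    rw [hKball, Set.mem_preimage, Metric.mem_closedBall, dist_zero_right] at hp hq ⊢
    calc ‖WeakDual.toStrongDual (a • p + b • q)‖
        = ‖a • WeakDual.toStrongDual p + b • WeakDual.toStrongDual q‖ := by
          rw [map_add, map_smul, map_smul]
      _ ≤ a * ‖WeakDual.toStrongDual p‖ + b * ‖WeakDual.toStrongDual q‖ := by
          refine le_trans (norm_add_le _ _) ?_
          rw [norm_smul, norm_smul, Real.norm_eq_abs, Real.norm_eq_abs,
            abs_of_nonneg ha, abs_of_nonneg hb]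
      _ ≤ a * 1 + b * 1 := by
          apply add_le_add
          · exact mul_le_mul_of_nonneg_left hp ha
          · exact mul_le_mul_of_nonneg_left hq hb
      _ = 1 := by rw [mul_one, mul_one, hab]
  have hKHconv : Convex ℝ KH := by
    apply hKballconv.is_linear_image
    constructor
    · intro f g
      funext k
      rfl
    · intro c f
      funext k
      rfl
  have hKHbd : ∀ p ∈ KH, ∀ k, |p k| ≤ C := by
    rintro p ⟨f, hf, rfl⟩ k
    rw [hKball, Set.mem_preimage, Metric.mem_closedBall, dist_zero_right] at hf
    calc |Φ f k| = ‖(WeakDual.toStrongDual f) (D k)‖ := by rw [Real.norm_eq_abs]; rfl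
      _ ≤ ‖WeakDual.toStrongDual f‖ * ‖D k‖ := (WeakDual.toStrongDual f).le_opNorm _
      _ ≤ 1 * C := by
          apply mul_le_mul hf (hDC k) (norm_nonneg _) zero_le_one
      _ = C := one_mul C
  -- the constraint sets
  set Scon : ℕ → ZMod 2 → Set (ℕ → ℝ) := fun t b =>
    if b = 0 then {p | ∑ i ∈ Finset.range (Nt t), af t i * p (Nat.pair t i) ≤ r}
    else {p | s ≤ ∑ i ∈ Finset.range (Nt t), af t i * p (Nat.pair t i)} with hScon
  have hsumlin : ∀ t, IsLinearMap ℝ (fun p : ℕ → ℝ =>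
      ∑ i ∈ Finset.range (Nt t), af t i * p (Nat.pair t i)) := by
    intro t
    constructor
    · intro p q
      rw [← Finset.sum_add_distrib]
      apply Finset.sum_congr rfl
      intro i _
      simp [mul_add]
    · intro c p
      rw [Finset.smul_sum]
      apply Finset.sum_congr rfl
      intro i _
      simp only [Pi.smul_apply, smul_eq_mul]
      ring
  have hsumcont : ∀ t, Continuous (fun p : ℕ → ℝ =>
      ∑ i ∈ Finset.range (Nt t), af t i * p (Nat.pair t i)) := by
    intro t
    apply continuous_finset_sum
    intro i _
    exact continuous_const.mul (continuous_apply _)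
  have hScl : ∀ t b, IsClosed (Scon t b) := by
    intro t b
    simp only [hScon]
    by_cases hb : b = 0
    · rw [if_pos hb]
      exact isClosed_le (hsumcont t) continuous_const
    · rw [if_neg hb]
      exact isClosed_le continuous_const (hsumcont t)
  have hSconv : ∀ t b, Convex ℝ (Scon t b) := by
    intro t b
    simp only [hScon]
    by_cases hb : b = 0
    · rw [if_pos hb]
      exact convex_halfSpace_le (hsumlin t) r
    · rw [if_neg hb]
      exact convex_halfSpace_ge (hsumlin t) s
  -- nonemptiness of the finite stages
  have hzero_one : ∀ b : ZMod 2, b ≠ 0 → b = 1 := by decide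
  have hstage : ∀ (σ : ℕ → ZMod 2) (m : ℕ),
      (KH ∩ ⋂ t ∈ Finset.range m, Scon t (σ t)).Nonempty := by
    intro σ m
    classical
    set F : Finset ℕ := (Finset.range m).filter (fun t => σ t = 0) with hF
    set G : Finset ℕ := (Finset.range m).filter (fun t => σ t ≠ 0) with hG
    have hFG : Disjoint F G := by
      rw [Finset.disjoint_left]
      intro t htF htG
      rw [hF, Finset.mem_filter] at htF
      rw [hG, Finset.mem_filter] at htG
      exact htG.2 htF.2
    obtain ⟨f, hf1, hfF, hfG⟩ := hind F G hFG
    refine ⟨Φ (StrongDual.toWeakDual f), ⟨StrongDual.toWeakDual f, ?_, rfl⟩, ?_⟩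
    · rw [hKball, Set.mem_preimage, Metric.mem_closedBall, dist_zero_right]
      exact hf1
    · apply Set.mem_iInter₂.2
      intro t ht
      have hsum : ∑ i ∈ Finset.range (Nt t), af t i *
          (Φ (StrongDual.toWeakDual f)) (Nat.pair t i) = f (y t) := by
        have : ∀ i, af t i * (Φ (StrongDual.toWeakDual f)) (Nat.pair t i)
            = f (af t i • D (Nat.pair t i)) := by
          intro i
          rw [map_smul, smul_eq_mul]
          rfl
        rw [Finset.sum_congr rfl (fun i _ => this i), ← map_sum, hyD t]
      simp only [hScon]
      by_cases hb : σ t = 0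
      · rw [if_pos hb]
        show ∑ i ∈ Finset.range (Nt t), af t i *
          (Φ (StrongDual.toWeakDual f)) (Nat.pair t i) ≤ r
        rw [hsum]
        apply le_of_lt
        apply hfF
        rw [hF, Finset.mem_filter]
        exact ⟨ht, hb⟩
      · rw [if_neg hb]
        show s ≤ ∑ i ∈ Finset.range (Nt t), af t i *
          (Φ (StrongDual.toWeakDual f)) (Nat.pair t i)
        rw [hsum]
        apply le_of_lt
        apply hfG
        rw [hG, Finset.mem_filter]
        exact ⟨ht, hb⟩
  -- measurable selection
  obtain ⟨g, hgmeas, hgmem⟩ := WPCaux.exists_measurable_selection KH hKHcomp hKHconv C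
    hCpos.le hKHbd Scon hScl hSconv hstage
  -- the coin measure
  obtain ⟨μ, hμprob, hμquarter⟩ := WPCaux.exists_coin_measure
  haveI : MeasureTheory.IsProbabilityMeasure μ := hμprob
  -- the integrand families
  set h : ℕ → (ℕ → ZMod 2) → ℝ := fun k σ => g σ k with hh
  have hhmeas : ∀ k, Measurable (h k) := fun k => (measurable_pi_apply k).comp hgmeas
  have hhbd : ∀ k σ, |h k σ| ≤ C := fun k σ => hKHbd _ (hgmem σ).1 k
  set H : ℕ → (ℕ → ZMod 2) → ℝ :=
    fun t σ => ∑ i ∈ Finset.range (Nt t), af t i * h (Nat.pair t i) σ with hH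
  have hHmeas : ∀ t, Measurable (H t) := by
    intro t
    apply Finset.measurable_sum
    intro i _
    exact (measurable_const.mul (hhmeas _))
  have hHbd : ∀ t σ, |H t σ| ≤ C := by
    intro t σ
    calc |∑ i ∈ Finset.range (Nt t), af t i * h (Nat.pair t i) σ|
        ≤ ∑ i ∈ Finset.range (Nt t), |af t i * h (Nat.pair t i) σ| :=
          Finset.abs_sum_le_sum_abs _ _
      _ ≤ ∑ i ∈ Finset.range (Nt t), af t i * C := by
          apply Finset.sum_le_sum
          intro i _
          rw [abs_mul, abs_of_nonneg (haf0 t i)]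
          exact mul_le_mul_of_nonneg_left (hhbd _ σ) (haf0 t i)
      _ = C := by rw [← Finset.sum_mul, hafsum t, one_mul]
  have hHle : ∀ t σ, σ t = 0 → H t σ ≤ r := by
    intro t σ h0
    have hmem := (hgmem σ).2 t
    rw [h0] at hmem
    simp only [hScon] at hmem
    exact hmem
  have hHge : ∀ t σ, σ t ≠ 0 → s ≤ H t σ := by
    intro t σ h0
    have hmem := (hgmem σ).2 t
    simp only [hScon] at hmem
    rw [if_neg h0] at hmem
    exact hmem
  -- the L¹ pseudo-distance
  set Idist : ((ℕ → ZMod 2) → ℝ) → ((ℕ → ZMod 2) → ℝ) → ℝ :=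
    fun u v => ∫ σ, |u σ - v σ| ∂μ with hId
  have hint : ∀ (u : (ℕ → ZMod 2) → ℝ) (c : ℝ), Measurable u → (∀ σ, |u σ| ≤ c) →
      MeasureTheory.Integrable u μ := by
    intro u c hu hb
    apply MeasureTheory.Integrable.mono' (MeasureTheory.integrable_const c)
      hu.aestronglyMeasurable
    apply Filter.Eventually.of_forall
    intro σ
    rw [Real.norm_eq_abs]
    exact hb σ
  have hintd : ∀ (u v : (ℕ → ZMod 2) → ℝ) (cu cv : ℝ), Measurable u → Measurable v →
      (∀ σ, |u σ| ≤ cu) → (∀ σ, |v σ| ≤ cv) →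
      MeasureTheory.Integrable (fun σ => |u σ - v σ|) μ := by
    intro u v cu cv hu hv hbu hbv
    apply hint _ (cu + cv) ((hu.sub hv).abs)
    intro σ
    rw [abs_abs]
    calc |u σ - v σ| ≤ |u σ| + |v σ| := abs_sub _ _
      _ ≤ cu + cv := add_le_add (hbu σ) (hbv σ)
  have hIdsymm : ∀ u v, Idist u v = Idist v u := by
    intro u v
    rw [hId]
    simp only
    congr 1
    funext σ
    rw [abs_sub_comm]
  have htri : ∀ (u v w : (ℕ → ZMod 2) → ℝ) (cu cv cw : ℝ), Measurable u → Measurable v →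
      Measurable w → (∀ σ, |u σ| ≤ cu) → (∀ σ, |v σ| ≤ cv) → (∀ σ, |w σ| ≤ cw) →
      Idist u w ≤ Idist u v + Idist v w := by
    intro u v w cu cv cw hu hv hw hbu hbv hbw
    rw [hId]
    simp only
    rw [← MeasureTheory.integral_add (hintd u v cu cv hu hv hbu hbv)
      (hintd v w cv cw hv hw hbv hbw)]
    apply MeasureTheory.integral_mono (hintd u w cu cw hu hw hbu hbw)
      ((hintd u v cu cv hu hv hbu hbv).add (hintd v w cv cw hv hw hbv hbw))
    intro σ
    exact abs_sub_le _ _ _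
  -- separation of the H's
  have hsep : ∀ t t', t ≠ t' → (s - r)/4 ≤ Idist (H t) (H t') := by
    intro t t' htt
    have hQ := hμquarter t t' htt
    set Qtt : Set (ℕ → ZMod 2) := {σ | σ t = 0 ∧ σ t' = 1} with hQtt
    have hQmeas : MeasurableSet Qtt := by
      have h1 := measurable_pi_apply (X := fun _ : ℕ => ZMod 2) t (measurableSet_singleton 0)
      have h2 := measurable_pi_apply (X := fun _ : ℕ => ZMod 2) t' (measurableSet_singleton 1)
      exact h1.inter h2
    have hlow : ∀ σ ∈ Qtt, s - r ≤ |H t σ - H t' σ| := by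
      intro σ hσ
      have h1 : H t σ ≤ r := hHle t σ hσ.1
      have h2 : s ≤ H t' σ := hHge t' σ (by rw [hσ.2]; exact one_ne_zero)
      calc s - r ≤ H t' σ - H t σ := by linarith
        _ ≤ |H t σ - H t' σ| := by
            rw [abs_sub_comm]
            exact le_abs_self _
    have hquarter_real : (μ Qtt).toReal = 1/4 := by
      rw [hQ]
      rw [ENNReal.toReal_div]
      norm_num
    calc (s - r)/4 = (μ Qtt).toReal • (s - r) := by
          rw [hquarter_real, smul_eq_mul]
          ring
      _ = ∫ σ in Qtt, (s - r) ∂μ := (MeasureTheory.setIntegral_const _).symm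
      _ ≤ ∫ σ in Qtt, |H t σ - H t' σ| ∂μ := by
          apply MeasureTheory.setIntegral_mono_on
          · exact (MeasureTheory.integrable_const _).integrableOn
          · exact (hintd (H t) (H t') C C (hHmeas t) (hHmeas t') (hHbd t) (hHbd t')).integrableOn
          · exact hQmeas
          · exact hlow
      _ ≤ ∫ σ, |H t σ - H t' σ| ∂μ := by
          apply MeasureTheory.setIntegral_le_integral
            (hintd (H t) (H t') C C (hHmeas t) (hHmeas t') (hHbd t) (hHbd t'))
          exact Filter.Eventually.of_forall (fun σ => abs_nonneg _)
  -- total boundedness of the h-family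
  have hTB : ∀ ε : ℝ, 0 < ε → ∃ κ : Finset ℕ, κ.Nonempty ∧
      ∀ k : ℕ, ∃ k' ∈ κ, Idist (h k) (h k') < ε := by
    intro ε hε
    by_contra hTBc
    push_neg at hTBc
    have hTBc' : ∀ κ : Finset ℕ, ∃ k : ℕ, ∀ k' ∈ κ, ε ≤ Idist (h k) (h k') := by
      intro κ
      by_cases hκ : κ.Nonempty
      · obtain ⟨k, hk⟩ := hTBc κ hκ
        refine ⟨k, fun k' hk' => ?_⟩
        exact hk k' hk'
      · exact ⟨0, fun k' hk' => absurd ⟨k', hk'⟩ hκ⟩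
    choose bad hbad using hTBc'
    set st : ℕ → Finset ℕ := fun j => Nat.rec ∅ (fun _ sprev => insert (bad sprev) sprev) j
      with hst
    have hst_succ : ∀ j, st (j+1) = insert (bad (st j)) (st j) := fun _ => rfl
    set u : ℕ → ℕ := fun j => bad (st j) with hu
    have humem : ∀ j, u j ∈ st (j+1) := by
      intro j
      rw [hst_succ j]
      exact Finset.mem_insert_self _ _
    have hstmono : ∀ j j', j ≤ j' → st j ⊆ st j' := by
      intro j j' hjj
      induction j', hjj using Nat.le_induction with
      | base => exact subset_rfl
      | succ j' _ ih =>
        refine ih.trans ?_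
        rw [hst_succ j']
        exact Finset.subset_insert _ _
    have hpair : ∀ i j, i < j → ε ≤ Idist (h (u j)) (h (u i)) := by
      intro i j hij
      apply hbad (st j)
      exact hstmono (i+1) j hij (humem i)
    obtain ⟨φ, hφ, hwc⟩ := hW (fun j => D (u j)) (fun j => hDW _)
    have hptconv : ∀ σ : ℕ → ZMod 2, ∃ L, Tendsto (fun j => h (u (φ j)) σ) atTop (𝓝 L) := by
      intro σ
      obtain ⟨f, hfK, hfeq⟩ := (hgmem σ).1
      have heval : ∀ k, h k σ = (WeakDual.toStrongDual f) (D k) := by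
        intro k
        rw [hh]
        simp only
        rw [← hfeq]
        rfl
      obtain ⟨L, hL⟩ := hwc (WeakDual.toStrongDual f)
      refine ⟨L, ?_⟩
      have : (fun j => h (u (φ j)) σ) = fun j => (WeakDual.toStrongDual f) (D (u (φ j))) := by
        funext j
        exact heval _
      rw [this]
      exact hL
    choose Lf hLf using hptconv
    have hLmeas : Measurable Lf :=
      measurable_of_tendsto_metrizable' atTop (fun j => hhmeas (u (φ j)))
        (tendsto_pi_nhds.2 hLf)
    have hLbd : ∀ σ, |Lf σ| ≤ C := by
      intro σ
      have habs : Tendsto (fun j => |h (u (φ j)) σ|) atTop (𝓝 |Lf σ|) :=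
        (continuous_abs.tendsto _).comp (hLf σ)
      exact le_of_tendsto habs (Filter.Eventually.of_forall (fun j => hhbd _ σ))
    have hdom : Tendsto (fun j => Idist (h (u (φ j))) Lf) atTop (𝓝 0) := by
      have h0 : (0:ℝ) = ∫ _σ, (0:ℝ) ∂μ := by simp
      rw [hId]
      simp only
      rw [h0]
      apply MeasureTheory.tendsto_integral_of_dominated_convergence (fun _ => 2*C)
      · intro j
        exact ((hhmeas (u (φ j))).sub hLmeas).abs.aestronglyMeasurable
      · exact MeasureTheory.integrable_const _
      · intro j
        apply Filter.Eventually.of_forall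
        intro σ
        rw [Real.norm_eq_abs, abs_abs]
        calc |h (u (φ j)) σ - Lf σ| ≤ |h (u (φ j)) σ| + |Lf σ| := abs_sub _ _
          _ ≤ C + C := add_le_add (hhbd _ σ) (hLbd σ)
          _ = 2*C := by ring
      · apply Filter.Eventually.of_forall
        intro σ
        have : Tendsto (fun j => h (u (φ j)) σ - Lf σ) atTop (𝓝 (Lf σ - Lf σ)) :=
          (hLf σ).sub tendsto_const_nhds
        rw [sub_self] at this
        have := (continuous_abs.tendsto _).comp this
        simpa [Function.comp_def] using this
    have hev := hdom.eventually_lt_const (show (0:ℝ) < ε/2 by linarith)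
    obtain ⟨J, hJ⟩ := hev.exists_forall_of_atTop
    have h1 : Idist (h (u (φ J))) Lf < ε/2 := hJ J (le_refl J)
    have h2 : Idist (h (u (φ (J+1)))) Lf < ε/2 := hJ (J+1) (Nat.le_succ J)
    have h3 : ε ≤ Idist (h (u (φ (J+1)))) (h (u (φ J))) :=
      hpair (φ J) (φ (J+1)) (hφ (Nat.lt_succ_self J))
    have h4 : Idist (h (u (φ (J+1)))) (h (u (φ J))) ≤
        Idist (h (u (φ (J+1)))) Lf + Idist Lf (h (u (φ J))) :=
      htri _ _ _ C C C (hhmeas _) hLmeas (hhmeas _) (hhbd _) hLbd (hhbd _)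
    rw [hIdsymm Lf (h (u (φ J)))] at h4
    linarith
  -- build the finite net and reach the contradiction
  set ε : ℝ := (s - r)/100 with hε
  have hεpos : 0 < ε := by rw [hε]; linarith
  obtain ⟨κ, hκne, hκ⟩ := hTB ε hεpos
  choose π hπmem hπd using hκ
  -- regrouped coefficients
  set cf : ℕ → ℕ → ℝ := fun t k' =>
    ∑ i ∈ (Finset.range (Nt t)).filter (fun i => π (Nat.pair t i) = k'), af t i with hcf
  have hcf0 : ∀ t k', 0 ≤ cf t k' :=
    fun t k' => Finset.sum_nonneg (fun i _ => haf0 t i)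
  have hcf1 : ∀ t k', cf t k' ≤ 1 := by
    intro t k'
    rw [hcf]
    calc ∑ i ∈ (Finset.range (Nt t)).filter (fun i => π (Nat.pair t i) = k'), af t i
        ≤ ∑ i ∈ Finset.range (Nt t), af t i :=
          Finset.sum_le_sum_of_subset_of_nonneg (Finset.filter_subset _ _)
            (fun i hi _ => haf0 t i)
      _ = 1 := hafsum t
  set Lam : (ℕ → ℝ) → (ℕ → ZMod 2) → ℝ := fun c σ => ∑ k' ∈ κ, c k' * h k' σ with hLam
  have hLam_eq : ∀ t σ, Lam (cf t) σ =
      ∑ i ∈ Finset.range (Nt t), af t i * h (π (Nat.pair t i)) σ := by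
    intro t σ
    rw [hLam, hcf]
    simp only
    rw [← Finset.sum_fiberwise_of_maps_to (fun i _ => hπmem (Nat.pair t i))
      (fun i => af t i * h (π (Nat.pair t i)) σ)]
    apply Finset.sum_congr rfl
    intro k' _
    rw [Finset.sum_mul]
    apply Finset.sum_congr rfl
    intro i hi
    rw [Finset.mem_filter] at hi
    rw [hi.2]
  have hLam_meas : ∀ t, Measurable (Lam (cf t)) := by
    intro t
    apply Finset.measurable_sum
    intro k' _
    exact measurable_const.mul (hhmeas k')
  have hLam_bd : ∀ t σ, |Lam (cf t) σ| ≤ (κ.card : ℝ) * C := by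
    intro t σ
    rw [hLam]
    simp only
    calc |∑ k' ∈ κ, cf t k' * h k' σ| ≤ ∑ k' ∈ κ, |cf t k' * h k' σ| :=
          Finset.abs_sum_le_sum_abs _ _
      _ ≤ ∑ _k' ∈ κ, C := by
          apply Finset.sum_le_sum
          intro k' _
          rw [abs_mul, abs_of_nonneg (hcf0 t k')]
          calc cf t k' * |h k' σ| ≤ 1 * C := by
                apply mul_le_mul (hcf1 t k') (hhbd k' σ) (abs_nonneg _) zero_le_one
            _ = C := one_mul C
      _ = (κ.card : ℝ) * C := by rw [Finset.sum_const, nsmul_eq_mul]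
  -- each H t is ε-close to its regrouped version
  have hclose : ∀ t, Idist (H t) (Lam (cf t)) ≤ ε := by
    intro t
    rw [hId]
    simp only
    have hptw : ∀ σ, |H t σ - Lam (cf t) σ| ≤
        ∑ i ∈ Finset.range (Nt t), af t i * |h (Nat.pair t i) σ - h (π (Nat.pair t i)) σ| := by
      intro σ
      rw [hLam_eq t σ, hH]
      simp only
      rw [← Finset.sum_sub_distrib]
      calc |∑ i ∈ Finset.range (Nt t), (af t i * h (Nat.pair t i) σ -
            af t i * h (π (Nat.pair t i)) σ)|
          ≤ ∑ i ∈ Finset.range (Nt t), |af t i * h (Nat.pair t i) σ -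
            af t i * h (π (Nat.pair t i)) σ| := Finset.abs_sum_le_sum_abs _ _
        _ = ∑ i ∈ Finset.range (Nt t), af t i * |h (Nat.pair t i) σ -
            h (π (Nat.pair t i)) σ| := by
            apply Finset.sum_congr rfl
            intro i _
            rw [← mul_sub, abs_mul, abs_of_nonneg (haf0 t i)]
    calc ∫ σ, |H t σ - Lam (cf t) σ| ∂μ
        ≤ ∫ σ, ∑ i ∈ Finset.range (Nt t), af t i *
            |h (Nat.pair t i) σ - h (π (Nat.pair t i)) σ| ∂μ := by
          apply MeasureTheory.integral_mono
          · exact hintd (H t) (Lam (cf t)) C ((κ.card : ℝ) * C) (hHmeas t) (hLam_meas t)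
              (hHbd t) (hLam_bd t)
          · apply MeasureTheory.integrable_finset_sum
            intro i _
            exact (hintd _ _ C C (hhmeas _) (hhmeas _) (hhbd _) (hhbd _)).const_mul _
          · exact hptw
      _ = ∑ i ∈ Finset.range (Nt t), af t i *
            ∫ σ, |h (Nat.pair t i) σ - h (π (Nat.pair t i)) σ| ∂μ := by
          rw [MeasureTheory.integral_finset_sum]
          · apply Finset.sum_congr rfl
            intro i _
            rw [MeasureTheory.integral_const_mul]
          · intro i _
            exact (hintd _ _ C C (hhmeas _) (hhmeas _) (hhbd _) (hhbd _)).const_mul _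
      _ ≤ ∑ i ∈ Finset.range (Nt t), af t i * ε := by
          apply Finset.sum_le_sum
          intro i _
          apply mul_le_mul_of_nonneg_left _ (haf0 t i)
          exact le_of_lt (hπd (Nat.pair t i))
      _ = ε := by rw [← Finset.sum_mul, hafsum t, one_mul]
  -- discretization of coefficient vectors
  have hκcard : (0:ℝ) < κ.card := by
    rw [Nat.cast_pos, Finset.card_pos]
    exact hκne
  set Mq : ℕ := Nat.ceil ((κ.card : ℝ) * (C+1) / ε) + 1 with hMq
  have hMqpos : (0:ℝ) < Mq := by
    rw [hMq]
    push_cast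
    positivity
  have hMqbig : (κ.card : ℝ) * (C+1) / ε ≤ Mq := by
    rw [hMq]
    push_cast
    exact le_trans (Nat.le_ceil _) (by linarith)
  set disc : ℕ → (↥κ → Fin (Mq + 1)) := fun t k' =>
    ⟨Nat.floor (cf t k'.val * Mq), by
      apply Nat.lt_succ_of_le
      apply Nat.floor_le_of_le
      calc cf t k'.val * (Mq:ℝ) ≤ 1 * Mq :=
            mul_le_mul_of_nonneg_right (hcf1 t _) (le_of_lt hMqpos)
        _ = (Mq:ℝ) := one_mul _⟩ with hdisc
  obtain ⟨t₁, t₂, ht12, hdeq⟩ := Finite.exists_ne_map_eq_of_infinite disc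
  have hcfclose : ∀ k' ∈ κ, |cf t₁ k' - cf t₂ k'| ≤ 1 / Mq := by
    intro k' hk'
    have heqf : Nat.floor (cf t₁ k' * Mq) = Nat.floor (cf t₂ k' * Mq) := by
      have := congrFun hdeq ⟨k', hk'⟩
      rwa [hdisc, Fin.mk.injEq] at this
    have hb1 : (Nat.floor (cf t₁ k' * Mq) : ℝ) ≤ cf t₁ k' * Mq ∧
        cf t₁ k' * Mq < Nat.floor (cf t₁ k' * Mq) + 1 :=
      ⟨Nat.floor_le (mul_nonneg (hcf0 t₁ k') (le_of_lt hMqpos)), Nat.lt_floor_add_one _⟩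
    have hb2 : (Nat.floor (cf t₂ k' * Mq) : ℝ) ≤ cf t₂ k' * Mq ∧
        cf t₂ k' * Mq < Nat.floor (cf t₂ k' * Mq) + 1 :=
      ⟨Nat.floor_le (mul_nonneg (hcf0 t₂ k') (le_of_lt hMqpos)), Nat.lt_floor_add_one _⟩
    rw [heqf] at hb1
    have habs : |cf t₁ k' * Mq - cf t₂ k' * Mq| ≤ 1 := by
      rw [abs_le]
      constructor
      · linarith [hb1.1, hb1.2, hb2.1, hb2.2]
      · linarith [hb1.1, hb1.2, hb2.1, hb2.2]
    rw [← sub_mul, abs_mul, abs_of_nonneg (le_of_lt hMqpos)] at habs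
    rw [le_div_iff₀ hMqpos]
    linarith [habs]
  have hLamclose : Idist (Lam (cf t₁)) (Lam (cf t₂)) ≤ ε := by
    rw [hId]
    simp only
    have hptw : ∀ σ, |Lam (cf t₁) σ - Lam (cf t₂) σ| ≤ (κ.card : ℝ) * (1/Mq) * C := by
      intro σ
      rw [hLam]
      simp only
      rw [← Finset.sum_sub_distrib]
      calc |∑ k' ∈ κ, (cf t₁ k' * h k' σ - cf t₂ k' * h k' σ)|
          ≤ ∑ k' ∈ κ, |cf t₁ k' * h k' σ - cf t₂ k' * h k' σ| :=
            Finset.abs_sum_le_sum_abs _ _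
        _ ≤ ∑ _k' ∈ κ, (1/Mq) * C := by
            apply Finset.sum_le_sum
            intro k' hk'
            rw [← sub_mul, abs_mul]
            apply mul_le_mul (hcfclose k' hk') (hhbd k' σ) (abs_nonneg _)
            positivity
        _ = (κ.card : ℝ) * ((1/Mq) * C) := by rw [Finset.sum_const, nsmul_eq_mul]
        _ = (κ.card : ℝ) * (1/Mq) * C := by ring
    calc ∫ σ, |Lam (cf t₁) σ - Lam (cf t₂) σ| ∂μ
        ≤ ∫ _σ, (κ.card : ℝ) * (1/Mq) * C ∂μ := by
          apply MeasureTheory.integral_mono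
          · exact hintd _ _ ((κ.card : ℝ) * C) ((κ.card : ℝ) * C) (hLam_meas t₁)
              (hLam_meas t₂) (hLam_bd t₁) (hLam_bd t₂)
          · exact MeasureTheory.integrable_const _
          · exact hptw
      _ = (κ.card : ℝ) * (1/Mq) * C := by
          rw [MeasureTheory.integral_const]
          simp
      _ ≤ ε := by
          rw [div_le_iff₀ hεpos] at hMqbig
          rw [mul_one_div, div_mul_eq_mul_div, div_le_iff₀ hMqpos]
          calc (κ.card : ℝ) * C ≤ (κ.card : ℝ) * (C + 1) := by
                apply mul_le_mul_of_nonneg_left _ (le_of_lt hκcard)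
                linarith
            _ ≤ ε * Mq := by linarith [hMqbig]
  -- final contradiction
  have hfinal : Idist (H t₁) (H t₂) ≤ 3 * ε := by
    have h1 := hclose t₁
    have h2 := hclose t₂
    have h3 := hLamclose
    have t1 : Idist (H t₁) (Lam (cf t₂)) ≤ Idist (H t₁) (Lam (cf t₁)) +
        Idist (Lam (cf t₁)) (Lam (cf t₂)) :=
      htri _ _ _ C ((κ.card : ℝ) * C) ((κ.card : ℝ) * C) (hHmeas t₁) (hLam_meas t₁)
        (hLam_meas t₂) (hHbd t₁) (hLam_bd t₁) (hLam_bd t₂)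
    have t2 : Idist (H t₁) (H t₂) ≤ Idist (H t₁) (Lam (cf t₂)) +
        Idist (Lam (cf t₂)) (H t₂) :=
      htri _ _ _ C ((κ.card : ℝ) * C) C (hHmeas t₁) (hLam_meas t₂) (hHmeas t₂)
        (hHbd t₁) (hLam_bd t₂) (hHbd t₂)
    rw [hIdsymm (Lam (cf t₂)) (H t₂)] at t2
    linarith
  have := hsep t₁ t₂ ht12
  rw [hε] at hfinal
  linarith
end
end

section
/- Let X and Z be real Banach spaces, and suppose Z is an ℒ∞ space which is isomorphic to a quotient of a closed linear subspace of X. Then Z* is isomorphic to a closed linear subspace of X*. -/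
open Filter Topology

set_option maxHeartbeats 1000000
set_option synthInstance.maxHeartbeats 400000

noncomputable section

/-- `Z` is an `ℒ∞` space: for some `λ ≥ 1`, every finite-dimensional subspace of `Z` is
contained in a finite-dimensional subspace `F` whose Banach–Mazur distance to `ℓ∞ⁿ`
(`n = dim F`) is at most `λ`. -/
def IsLInftySpace (Z : Type*) [NormedAddCommGroup Z] [NormedSpace ℝ Z] : Prop :=
  ∃ lam : ℝ, 1 ≤ lam ∧
    ∀ E : Submodule ℝ Z, FiniteDimensional ℝ E →
      ∃ F : Submodule ℝ Z, E ≤ F ∧ FiniteDimensional ℝ F ∧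
        ∃ (n : ℕ) (S : F ≃L[ℝ] PiLp ⊤ (fun _ : Fin n => ℝ)),
          ‖(S : F →L[ℝ] PiLp ⊤ (fun _ : Fin n => ℝ))‖ *
            ‖(S.symm : PiLp ⊤ (fun _ : Fin n => ℝ) →L[ℝ] F)‖ ≤ lam

lemma pil_apply_le {n : ℕ} (y : PiLp ⊤ (fun _ : Fin n => ℝ)) (i : Fin n) : ‖y i‖ ≤ ‖y‖ := by
  rw [PiLp.norm_eq_ciSup]
  exact le_ciSup (f := fun i => ‖y i‖) (Set.Finite.bddAbove (Set.finite_range _)) i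

lemma pil_norm_le {n : ℕ} (y : PiLp ⊤ (fun _ : Fin n => ℝ)) {C : ℝ} (hC : 0 ≤ C)
    (h : ∀ i, ‖y i‖ ≤ C) : ‖y‖ ≤ C := by
  rw [PiLp.norm_eq_ciSup]
  rcases isEmpty_or_nonempty (Fin n) with h0 | h1
  · simpa [Real.iSup_of_isEmpty] using hC
  · exact ciSup_le h

lemma exists_local_ext {X Z : Type*} [NormedAddCommGroup X] [NormedSpace ℝ X]
    [NormedAddCommGroup Z] [NormedSpace ℝ Z]
    (X' : Submodule ℝ X) (T : X' →L[ℝ] Z) {lam : ℝ} (hlam : 1 ≤ lam)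
    (hloc : ∀ E : Submodule ℝ Z, FiniteDimensional ℝ E →
      ∃ F : Submodule ℝ Z, E ≤ F ∧ FiniteDimensional ℝ F ∧
        ∃ (n : ℕ) (S : F ≃L[ℝ] PiLp ⊤ (fun _ : Fin n => ℝ)),
          ‖(S : F →L[ℝ] PiLp ⊤ (fun _ : Fin n => ℝ))‖ *
            ‖(S.symm : PiLp ⊤ (fun _ : Fin n => ℝ) →L[ℝ] F)‖ ≤ lam)
    (G : Submodule ℝ X) (hG : FiniteDimensional ℝ G) :
    ∃ u : X →L[ℝ] Z, (∀ x, ‖u x‖ ≤ lam * ‖T‖ * ‖x‖) ∧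
      ∀ (x : X) (hx : x ∈ X') (hxG : x ∈ G), u x = T ⟨x, hx⟩ := by
  classical
  set W : Submodule ℝ X := X' ⊓ G with hW
  haveI : FiniteDimensional ℝ W := Submodule.finiteDimensional_of_le inf_le_right
  -- inclusion of W into X' as continuous linear map
  let incl : W →L[ℝ] X' :=
    LinearMap.mkContinuous (Submodule.inclusion inf_le_left) 1 (fun w => by
      simp [Submodule.inclusion])
  have hincl : ∀ w : W, (incl w : X) = (w : X) := fun w => rfl
  let tC : W →L[ℝ] Z := T.comp incl
  have htC : ∀ w : W, ‖tC w‖ ≤ ‖T‖ * ‖w‖ := by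
    intro w
    calc ‖tC w‖ ≤ ‖T‖ * ‖incl w‖ := T.le_opNorm _
    _ = ‖T‖ * ‖w‖ := by
        congr 1
  set E : Submodule ℝ Z := LinearMap.range (tC : W →ₗ[ℝ] Z) with hE
  haveI : FiniteDimensional ℝ E := inferInstance
  obtain ⟨F, hEF, hFfd, n, Sf, hS⟩ := hloc E inferInstance
  have hSn : (0:ℝ) ≤ ‖(Sf : F →L[ℝ] PiLp ⊤ (fun _ : Fin n => ℝ))‖ := ContinuousLinearMap.opNorm_nonneg _
  have hSsn : (0:ℝ) ≤ ‖(Sf.symm : PiLp ⊤ (fun _ : Fin n => ℝ) →L[ℝ] F)‖ := ContinuousLinearMap.opNorm_nonneg _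
  -- restrict codomain of tC to F
  have hmem : ∀ w : W, tC w ∈ F := fun w => hEF ⟨w, rfl⟩
  let tF : W →L[ℝ] F := tC.codRestrict F hmem
  let ξ : W →L[ℝ] PiLp ⊤ (fun _ : Fin n => ℝ) :=
    (Sf : F →L[ℝ] PiLp ⊤ (fun _ : Fin n => ℝ)).comp tF
  have hξ : ∀ w : W, ‖ξ w‖ ≤ ‖(Sf : F →L[ℝ] PiLp ⊤ (fun _ : Fin n => ℝ))‖ * (‖T‖ * ‖w‖) := by
    intro w
    calc ‖ξ w‖ ≤ ‖(Sf : F →L[ℝ] PiLp ⊤ (fun _ : Fin n => ℝ))‖ * ‖tF w‖ :=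
      (Sf : F →L[ℝ] PiLp ⊤ (fun _ : Fin n => ℝ)).le_opNorm _
    _ ≤ _ := by
        apply mul_le_mul_of_nonneg_left _ hSn
        have : ‖tF w‖ = ‖tC w‖ := rfl
        rw [this]; exact htC w
  -- coordinate functionals and Hahn-Banach extensions
  let φ : Fin n → (W →L[ℝ] ℝ) := fun i => (PiLp.proj (𝕜 := ℝ) ⊤ (fun _ : Fin n => ℝ) i).comp ξ
  have hφ : ∀ i, ‖φ i‖ ≤ ‖(Sf : F →L[ℝ] PiLp ⊤ (fun _ : Fin n => ℝ))‖ * ‖T‖ := by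
    intro i
    apply ContinuousLinearMap.opNorm_le_bound _ (by positivity)
    intro w
    calc ‖φ i w‖ = ‖(ξ w) i‖ := rfl
    _ ≤ ‖ξ w‖ := pil_apply_le _ i
    _ ≤ _ := by rw [mul_assoc]; exact hξ w
  choose ψ hψeq hψnorm using fun i => exists_extension_norm_eq W (φ i)
  let Ψ : X →L[ℝ] PiLp ⊤ (fun _ : Fin n => ℝ) :=
    ((PiLp.continuousLinearEquiv ⊤ ℝ (fun _ : Fin n => ℝ)).symm :
      (∀ _ : Fin n, ℝ) →L[ℝ] PiLp ⊤ (fun _ : Fin n => ℝ)).comp (ContinuousLinearMap.pi ψ)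
  have hΨapp : ∀ (x : X) (i : Fin n), Ψ x i = ψ i x := fun x i => rfl
  have hΨ : ∀ x : X, ‖Ψ x‖ ≤ ‖(Sf : F →L[ℝ] PiLp ⊤ (fun _ : Fin n => ℝ))‖ * ‖T‖ * ‖x‖ := by
    intro x
    apply pil_norm_le _ (by positivity)
    intro i
    calc ‖Ψ x i‖ = ‖ψ i x‖ := rfl
    _ ≤ ‖ψ i‖ * ‖x‖ := (ψ i).le_opNorm x
    _ ≤ _ := by
        apply mul_le_mul_of_nonneg_right _ (norm_nonneg x)
        rw [hψnorm i]; exact hφ i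
  refine ⟨F.subtypeL.comp
    (((Sf.symm : PiLp ⊤ (fun _ : Fin n => ℝ) →L[ℝ] F)).comp Ψ), ?_, ?_⟩
  · intro x
    have h1 : ‖(Sf.symm (Ψ x) : Z)‖ = ‖Sf.symm (Ψ x)‖ := rfl
    calc ‖(Sf.symm (Ψ x) : Z)‖
        ≤ ‖(Sf.symm : PiLp ⊤ (fun _ : Fin n => ℝ) →L[ℝ] F)‖ * ‖Ψ x‖ := by
          rw [h1]
          exact (Sf.symm : PiLp ⊤ (fun _ : Fin n => ℝ) →L[ℝ] F).le_opNorm _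
    _ ≤ ‖(Sf.symm : PiLp ⊤ (fun _ : Fin n => ℝ) →L[ℝ] F)‖ *
          (‖(Sf : F →L[ℝ] PiLp ⊤ (fun _ : Fin n => ℝ))‖ * ‖T‖ * ‖x‖) :=
        mul_le_mul_of_nonneg_left (hΨ x) hSsn
    _ ≤ lam * ‖T‖ * ‖x‖ := by
        have hTn : (0:ℝ) ≤ ‖T‖ := ContinuousLinearMap.opNorm_nonneg _
        have hxn : (0:ℝ) ≤ ‖x‖ := norm_nonneg x
        nlinarith [hS, mul_nonneg hTn hxn]
  · intro x hx hxG
    have hwx : x ∈ W := ⟨hx, hxG⟩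
    set w : W := ⟨x, hwx⟩ with hwdef
    have hΨξ : Ψ x = ξ w := by
      apply (PiLp.continuousLinearEquiv ⊤ ℝ (fun _ : Fin n => ℝ)).injective
      funext i
      show Ψ x i = ξ w i
      rw [hΨapp x i]
      have := hψeq i w
      exact this
    show (Sf.symm (Ψ x) : Z) = T ⟨x, hx⟩
    rw [hΨξ]
    have : Sf.symm (ξ w) = tF w := by
      show Sf.symm (Sf (tF w)) = tF w
      exact Sf.symm_apply_apply _
    rw [this]
    show tC w = T ⟨x, hx⟩
    rfl

lemma ultrafilter_lim_exists {ι : Type*} (U : Ultrafilter ι) (g : ι → ℝ) {M : ℝ}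
    (hb : ∀ i, |g i| ≤ M) : ∃ a, |a| ≤ M ∧ Tendsto g (U : Filter ι) (𝓝 a) := by
  have hmem : (U.map g : Filter ℝ) ≤ Filter.principal (Set.Icc (-M) M) := by
    rw [le_principal_iff]
    exact Filter.mem_map.2 (Filter.univ_mem' (fun i => abs_le.1 (hb i)))
  obtain ⟨a, ha, hle⟩ := (isCompact_Icc (a := -M) (b := M)).ultrafilter_le_nhds (U.map g) hmem
  exact ⟨a, abs_le.2 ⟨ha.1, ha.2⟩, hle⟩

/-- If `Z` is an `ℒ∞` space isomorphic to a quotient of a closed subspace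
of `X`, then `Z*` is isomorphic to a closed subspace of `X*`. -/
theorem dual_of_LInfty_quotient_of_subspace_embeds_in_dual
    (X Z : Type*) [NormedAddCommGroup X] [NormedSpace ℝ X] [CompleteSpace X]
    [NormedAddCommGroup Z] [NormedSpace ℝ Z] [CompleteSpace Z]
    (hZ : IsLInftySpace Z)
    (hquot : ∃ X' : Submodule ℝ X, IsClosed (X' : Set X) ∧
      ∃ T : X' →L[ℝ] Z, Function.Surjective T) :
    ∃ S : StrongDual ℝ Z →L[ℝ] StrongDual ℝ X,
      ∃ c : ℝ, 0 < c ∧ ∀ f : StrongDual ℝ Z, c * ‖f‖ ≤ ‖S f‖ := by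
  classical
  obtain ⟨lam, hlam, hloc⟩ := hZ
  obtain ⟨X', hX'c, T, hTsurj⟩ := hquot
  haveI : CompleteSpace X' := hX'c.completeSpace_coe
  obtain ⟨C, hC, hCx⟩ := T.exists_preimage_norm_le hTsurj
  set K : ℝ := lam * ‖T‖ with hKdef
  have hK0 : (0:ℝ) ≤ K := mul_nonneg (le_trans zero_le_one hlam) (ContinuousLinearMap.opNorm_nonneg T)
  -- directed index set of finite-dimensional subspaces of X
  let ι := {G : Submodule ℝ X // FiniteDimensional ℝ G}
  haveI : SemilatticeSup ι := Subtype.semilatticeSup (fun a b ha hb => by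
    haveI := ha; haveI := hb; exact Submodule.finiteDimensional_sup a b)
  haveI : Nonempty ι := ⟨⟨⊥, inferInstance⟩⟩
  haveI : IsDirected ι (· ≤ ·) := ⟨fun a b =>
    ⟨⟨a.1 ⊔ b.1, by haveI := a.2; haveI := b.2; exact Submodule.finiteDimensional_sup _ _⟩,
      (le_sup_left : a.1 ≤ a.1 ⊔ b.1), (le_sup_right : b.1 ≤ a.1 ⊔ b.1)⟩⟩
  haveI : (atTop : Filter ι).NeBot := atTop_neBot
  let U : Ultrafilter ι := Ultrafilter.of atTop
  have hU : (U : Filter ι) ≤ atTop := Ultrafilter.of_le _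
  choose u hub huagree using fun G : ι => exists_local_ext X' T hlam hloc G.1 G.2
  -- bound on the net
  have hbnd : ∀ (f : StrongDual ℝ Z) (x : X) (G : ι),
      |f (u G x)| ≤ ‖f‖ * (K * ‖x‖) := by
    intro f x G
    calc |f (u G x)| ≤ ‖f‖ * ‖u G x‖ := f.le_opNorm _
    _ ≤ ‖f‖ * (K * ‖x‖) := mul_le_mul_of_nonneg_left (hub G x) (norm_nonneg f)
  have key : ∀ (f : StrongDual ℝ Z) (x : X), ∃ a, |a| ≤ ‖f‖ * (K * ‖x‖) ∧
      Tendsto (fun G : ι => f (u G x)) (U : Filter ι) (𝓝 a) :=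
    fun f x => ultrafilter_lim_exists U _ (hbnd f x)
  let s : StrongDual ℝ Z → X → ℝ := fun f x => (key f x).choose
  have hsb : ∀ f x, |s f x| ≤ ‖f‖ * (K * ‖x‖) := fun f x => (key f x).choose_spec.1
  have htend : ∀ f x, Tendsto (fun G : ι => f (u G x)) (U : Filter ι) (𝓝 (s f x)) :=
    fun f x => (key f x).choose_spec.2
  -- linearity in x
  have hadd : ∀ f x y, s f (x + y) = s f x + s f y := by
    intro f x y
    refine tendsto_nhds_unique (htend f (x + y)) ?_
    have := (htend f x).add (htend f y)
    refine this.congr (fun G => ?_)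
    simp [map_add]
  have hsmul : ∀ (f : StrongDual ℝ Z) (c : ℝ) (x : X), s f (c • x) = c * s f x := by
    intro f c x
    refine tendsto_nhds_unique (htend f (c • x)) ?_
    have := (htend f x).const_mul c
    refine this.congr (fun G => ?_)
    simp [map_smul]
  -- linearity in f
  have haddf : ∀ f g x, s (f + g) x = s f x + s g x := by
    intro f g x
    refine tendsto_nhds_unique (htend (f + g) x) ?_
    exact ((htend f x).add (htend g x)).congr (fun G => rfl)
  have hsmulf : ∀ (c : ℝ) f x, s (c • f) x = c * s f x := by
    intro c f x
    refine tendsto_nhds_unique (htend (c • f) x) ?_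
    exact ((htend f x).const_mul c).congr (fun G => rfl)
  -- package as continuous linear maps
  let S1 : StrongDual ℝ Z → StrongDual ℝ X := fun f =>
    LinearMap.mkContinuous
      { toFun := s f
        map_add' := hadd f
        map_smul' := fun c x => hsmul f c x } (‖f‖ * K)
      (fun x => by
        have := hsb f x
        rw [Real.norm_eq_abs]
        calc |s f x| ≤ ‖f‖ * (K * ‖x‖) := this
        _ = ‖f‖ * K * ‖x‖ := by ring)
  have hS1app : ∀ f x, S1 f x = s f x := fun f x => rfl
  have hS1norm : ∀ f, ‖S1 f‖ ≤ ‖f‖ * K :=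
    fun f => LinearMap.mkContinuous_norm_le _ (mul_nonneg (norm_nonneg f) hK0) _
  let S : StrongDual ℝ Z →L[ℝ] StrongDual ℝ X :=
    LinearMap.mkContinuous
      { toFun := S1
        map_add' := fun f g => by
          ext x
          exact haddf f g x
        map_smul' := fun c f => by
          ext x
          exact hsmulf c f x } K
      (fun f => by
        calc ‖S1 f‖ ≤ ‖f‖ * K := hS1norm f
        _ = K * ‖f‖ := mul_comm _ _)
  have hSapp : ∀ f x, S f x = s f x := fun f x => rfl
  -- agreement with T on X'
  have hagree : ∀ (f : StrongDual ℝ Z) (x : X'), S f (x : X) = f (T x) := by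
    intro f x
    have hfd : FiniteDimensional ℝ (Submodule.span ℝ {(x : X)}) :=
      FiniteDimensional.span_of_finite ℝ (Set.finite_singleton _)
    have hev : ∀ᶠ G in (U : Filter ι), f (u G (x : X)) = f (T x) := by
      have h1 : ∀ᶠ G in (atTop : Filter ι), (⟨Submodule.span ℝ {(x : X)}, hfd⟩ : ι) ≤ G :=
        eventually_ge_atTop _
      have h2 : ∀ᶠ G in (U : Filter ι), (⟨Submodule.span ℝ {(x : X)}, hfd⟩ : ι) ≤ G := hU h1
      refine h2.mono (fun G hG => ?_)
      have hx'G : (x : X) ∈ G.1 := hG (Submodule.mem_span_singleton_self _)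
      rw [huagree G (x : X) x.2 hx'G]
    have : Tendsto (fun G : ι => f (u G (x : X))) (U : Filter ι) (𝓝 (f (T x))) :=
      tendsto_const_nhds.congr' (by filter_upwards [hev] with G h using h.symm)
    rw [hSapp]
    exact tendsto_nhds_unique (htend f (x : X)) this
  refine ⟨S, C⁻¹, inv_pos.2 hC, fun f => ?_⟩
  have hfle : ‖f‖ ≤ C * ‖S f‖ := by
    apply ContinuousLinearMap.opNorm_le_bound f
      (mul_nonneg hC.le (norm_nonneg _))
    intro z
    obtain ⟨x, hTx, hxn⟩ := hCx z
    calc ‖f z‖ = ‖f (T x)‖ := by rw [hTx]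
    _ = ‖S f (x : X)‖ := by rw [hagree f x]
    _ ≤ ‖S f‖ * ‖(x : X)‖ := (S f).le_opNorm _
    _ = ‖S f‖ * ‖x‖ := rfl
    _ ≤ ‖S f‖ * (C * ‖z‖) := mul_le_mul_of_nonneg_left hxn (norm_nonneg _)
    _ = C * ‖S f‖ * ‖z‖ := by ring
  calc C⁻¹ * ‖f‖ ≤ C⁻¹ * (C * ‖S f‖) :=
    mul_le_mul_of_nonneg_left hfle (inv_nonneg.2 hC.le)
  _ = ‖S f‖ := by field_simp
end
end

section
/- Let κ be an infinite cardinal number and let X be a real Banach space containing a closed linear subspace isomorphic to ℓ¹(κ). Then for every ε > 0, X contains a closed linear subspace that is (1+ε)-isomorphic to ℓ¹(κ). -/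
open Filter Topology

noncomputable section

namespace JamesEllOne

variable {ι : Type*} [DecidableEq ι] {X : Type*} [NormedAddCommGroup X] [NormedSpace ℝ X]

local notation "E" => lp (fun _ : ι => ℝ) 1

lemma norm_eq_tsum_abs (y : E) : ‖y‖ = ∑' α, |y α| := by
  have h := lp.norm_eq_tsum_rpow (p := 1) (by norm_num) y
  simpa [Real.norm_eq_abs] using h

lemma summable_abs_coe (y : E) : Summable fun α => |y α| := by
  have h := Memℓp.summable (p := 1) (by norm_num) (lp.memℓp y)
  simpa [Real.norm_eq_abs] using h

/-- The sum `∑ y α • u α` associated to a bounded family `u` in `X`. -/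
def Ssum (u : ι → X) (y : E) : X := ∑' α, y α • u α

variable [CompleteSpace X]

lemma summable_norm_term {u : ι → X} (hu : ∀ α, ‖u α‖ ≤ 1) (y : E) :
    Summable fun α => ‖y α • u α‖ := by
  refine Summable.of_nonneg_of_le (fun _ => norm_nonneg _) (fun α => ?_) (summable_abs_coe y)
  rw [norm_smul, Real.norm_eq_abs]
  exact mul_le_of_le_one_right (abs_nonneg _) (hu α)

lemma summable_term {u : ι → X} (hu : ∀ α, ‖u α‖ ≤ 1) (y : E) :
    Summable fun α => y α • u α :=
  Summable.of_norm (summable_norm_term hu y)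

lemma norm_Ssum_le {u : ι → X} (hu : ∀ α, ‖u α‖ ≤ 1) (y : E) : ‖Ssum u y‖ ≤ ‖y‖ := by
  rw [norm_eq_tsum_abs]
  refine (norm_tsum_le_tsum_norm (summable_norm_term hu y)).trans ?_
  refine Summable.tsum_le_tsum (fun α => ?_) (summable_norm_term hu y) (summable_abs_coe y)
  rw [norm_smul, Real.norm_eq_abs]
  exact mul_le_of_le_one_right (abs_nonneg _) (hu α)

lemma Ssum_smul {u : ι → X} (hu : ∀ α, ‖u α‖ ≤ 1) (a : ℝ) (y : E) :
    Ssum u (a • y) = a • Ssum u y := by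
  unfold Ssum
  have hc : ∀ α, (a • y) α • u α = a • (y α • u α) := by
    intro α
    rw [lp.coeFn_smul, Pi.smul_apply, smul_smul, smul_eq_mul]
  rw [tsum_congr hc]
  exact ((summable_term hu y).hasSum.const_smul a).tsum_eq

lemma Ssum_add {u : ι → X} (hu : ∀ α, ‖u α‖ ≤ 1) (y z : E) :
    Ssum u (y + z) = Ssum u y + Ssum u z := by
  unfold Ssum
  have hc : ∀ α, (y + z) α • u α = y α • u α + z α • u α := by
    intro α
    rw [lp.coeFn_add, Pi.add_apply, add_smul]
  rw [tsum_congr hc]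
  exact Summable.tsum_add (summable_term hu y) (summable_term hu z)

/-- The set of lower `ℓ¹`-constants achievable by bounded families in `X`. -/
def constSet (ι X : Type*) [NormedAddCommGroup X] [NormedSpace ℝ X] : Set ℝ :=
  {c | ∃ u : ι → X, (∀ α, ‖u α‖ ≤ 1) ∧
    ∀ y : lp (fun _ : ι => ℝ) 1, c * ‖y‖ ≤ ‖Ssum u y‖}

lemma norm_single_one (α₀ : ι) : ‖(lp.single 1 α₀ (1 : ℝ) : E)‖ = 1 := by
  have h : ‖(lp.single 1 α₀ (1 : ℝ) : E)‖ = ‖(1 : ℝ)‖ := lp.norm_single (by norm_num) α₀ _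
  simpa using h

lemma le_one_of_mem_constSet [Nonempty ι] {c : ℝ} (hc : c ∈ constSet ι X) : c ≤ 1 := by
  obtain ⟨u, hu, hlow⟩ := hc
  obtain α₀ : ι := Classical.arbitrary ι
  have h1 : ‖(lp.single 1 α₀ (1 : ℝ) : E)‖ = 1 := norm_single_one α₀
  have h2 := (hlow (lp.single 1 α₀ (1 : ℝ))).trans
    (norm_Ssum_le hu (lp.single 1 α₀ (1 : ℝ)))
  rw [h1, mul_one] at h2
  exact h2

lemma bddAbove_constSet [Nonempty ι] : BddAbove (constSet ι X) :=
  ⟨1, fun _ hc => le_one_of_mem_constSet hc⟩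

/-- Transfer a summable function on `ι × ι` to an element of `ℓ¹(ι)` along a bijection. -/
def transfer (e : ι × ι ≃ ι) (g : ι × ι → ℝ) (hg : Summable fun p => |g p|) : E :=
  ⟨fun β => g (e.symm β), by
    apply memℓp_gen (p := 1)
    have : Summable ((fun p => |g p|) ∘ e.symm) := (e.symm.summable_iff).2 hg
    simpa [Real.norm_eq_abs, Function.comp_def] using this⟩

lemma transfer_apply (e : ι × ι ≃ ι) (g : ι × ι → ℝ) (hg : Summable fun p => |g p|) (β : ι) :
    (transfer e g hg : ∀ _ : ι, ℝ) β = g (e.symm β) := rfl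

lemma norm_transfer (e : ι × ι ≃ ι) (g : ι × ι → ℝ) (hg : Summable fun p => |g p|) :
    ‖transfer e g hg‖ = ∑' p, |g p| := by
  rw [norm_eq_tsum_abs]
  exact e.symm.tsum_eq fun p => |g p|

lemma Ssum_transfer (u : ι → X) (e : ι × ι ≃ ι) (g : ι × ι → ℝ)
    (hg : Summable fun p => |g p|) :
    Ssum u (transfer e g hg) = ∑' p, g p • u (e p) := by
  unfold Ssum
  have hc : ∀ β, (transfer e g hg : ∀ _ : ι, ℝ) β • u β =
      (fun p => g p • u (e p)) (e.symm β) := by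
    intro β
    simp [transfer_apply]
  rw [tsum_congr hc]
  exact e.symm.tsum_eq fun p => g p • u (e p)

lemma summable_blockFun {a : ι → ℝ} {w : ι → E} (ha : Summable fun j => |a j|)
    (hw : ∀ j, ‖w j‖ ≤ 1) :
    Summable fun p : ι × ι => |a p.1 * (w p.1 : ∀ _ : ι, ℝ) p.2| := by
  rw [summable_prod_of_nonneg fun _ => abs_nonneg _]
  have heq : ∀ j, (∑' α, |a j * (w j : ∀ _ : ι, ℝ) α|) = |a j| * ‖w j‖ := by
    intro j
    simp_rw [abs_mul]
    rw [tsum_mul_left, ← norm_eq_tsum_abs]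
  constructor
  · intro j
    have := (summable_abs_coe (w j)).mul_left |a j|
    simpa [abs_mul] using this
  · refine Summable.of_nonneg_of_le (fun j => tsum_nonneg fun α => abs_nonneg _)
      (fun j => ?_) ha
    rw [heq j]
    exact mul_le_of_le_one_right (abs_nonneg _) (hw j)

lemma tsum_blockFun {a : ι → ℝ} {w : ι → E} (ha : Summable fun j => |a j|)
    (hw : ∀ j, ‖w j‖ ≤ 1) :
    (∑' p : ι × ι, |a p.1 * (w p.1 : ∀ _ : ι, ℝ) p.2|) = ∑' j, |a j| * ‖w j‖ := by
  rw [Summable.tsum_prod (summable_blockFun ha hw)]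
  refine tsum_congr fun j => ?_
  simp_rw [abs_mul]
  rw [tsum_mul_left, ← norm_eq_tsum_abs]

lemma Ssum_blockFun (u : ι → X) (hu : ∀ α, ‖u α‖ ≤ 1) (e : ι × ι ≃ ι)
    {a : ι → ℝ} {w : ι → E} (ha : Summable fun j => |a j|) (hw : ∀ j, ‖w j‖ ≤ 1) :
    (∑' p : ι × ι, (a p.1 * (w p.1 : ∀ _ : ι, ℝ) p.2) • u (e p)) =
      ∑' j, a j • Ssum (fun α => u (e (j, α))) (w j) := by
  have hsum : Summable fun p : ι × ι => (a p.1 * (w p.1 : ∀ _ : ι, ℝ) p.2) • u (e p) := by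
    refine Summable.of_norm (Summable.of_nonneg_of_le (fun _ => norm_nonneg _)
      (fun p => ?_) (summable_blockFun ha hw))
    rw [norm_smul, Real.norm_eq_abs]
    exact mul_le_of_le_one_right (abs_nonneg _) (hu _)
  rw [Summable.tsum_prod hsum]
  refine tsum_congr fun j => ?_
  have hin : Summable fun α => (w j : ∀ _ : ι, ℝ) α • u (e (j, α)) :=
    summable_term (fun α => hu _) (w j)
  calc (∑' α, (a j * (w j : ∀ _ : ι, ℝ) α) • u (e (j, α)))
      = ∑' α, a j • ((w j : ∀ _ : ι, ℝ) α • u (e (j, α))) := by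
        refine tsum_congr fun α => ?_
        rw [smul_smul]
    _ = a j • Ssum (fun α => u (e (j, α))) (w j) := (hin.hasSum.const_smul (a j)).tsum_eq

/-- The transport of `w ∈ ℓ¹(ι)` into the `j`-th block. -/
lemma exists_transport (e : ι × ι ≃ ι) (u : ι → X) (hu : ∀ α, ‖u α‖ ≤ 1) (j : ι) (w : E) :
    ∃ z : E, ‖z‖ = ‖w‖ ∧ Ssum u z = Ssum (fun α => u (e (j, α))) w := by
  classical
  set a : ι → ℝ := fun j' => if j' = j then 1 else 0 with ha_def
  have ha : Summable fun j' => |a j'| := by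
    refine summable_of_ne_finset_zero (s := {j}) fun j' hj' => ?_
    simp only [Finset.mem_singleton] at hj'
    simp [ha_def, hj']
  by_cases hwz : ‖w‖ = 0
  · refine ⟨0, by simpa using hwz.symm, ?_⟩
    have hw0 : w = 0 := by
      ext α
      have := norm_eq_tsum_abs w
      rw [hwz] at this
      have hz : ∀ α, |(w : ∀ _ : ι, ℝ) α| = 0 := by
        intro α
        have hle : |(w : ∀ _ : ι, ℝ) α| ≤ ∑' α, |(w : ∀ _ : ι, ℝ) α| :=
          Summable.le_tsum (summable_abs_coe w) α fun _ _ => abs_nonneg _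
        have : (∑' α, |(w : ∀ _ : ι, ℝ) α|) = 0 := this.symm
        nlinarith [abs_nonneg ((w : ∀ _ : ι, ℝ) α)]
      simpa [abs_eq_zero] using hz α
    subst hw0
    show Ssum u 0 = Ssum _ 0
    unfold Ssum
    simp [lp.coeFn_zero]
  -- use blockFun with the single-index family
  set w' : ι → E := fun _ => (‖w‖⁻¹ : ℝ) • w with hw'_def
  have hw' : ∀ j', ‖w' j'‖ ≤ 1 := by
    intro j'
    rw [hw'_def]
    simp only [norm_smul, norm_inv, norm_norm]
    rw [inv_mul_cancel₀ hwz]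
  set a' : ι → ℝ := fun j' => if j' = j then ‖w‖ else 0 with ha'_def
  have ha' : Summable fun j' => |a' j'| := by
    refine summable_of_ne_finset_zero (s := {j}) fun j' hj' => ?_
    simp only [Finset.mem_singleton] at hj'
    simp [ha'_def, hj']
  refine ⟨transfer e (fun p => a' p.1 * (w' p.1 : ∀ _ : ι, ℝ) p.2)
    (summable_blockFun ha' hw'), ?_, ?_⟩
  · rw [norm_transfer, tsum_blockFun ha' hw']
    rw [tsum_eq_single j]
    · rw [hw'_def]
      simp only [ha'_def, if_pos rfl, abs_norm]
      simp only [norm_smul, norm_inv, norm_norm]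
      rw [inv_mul_cancel₀ hwz, mul_one]
    · intro j' hj'
      simp [ha'_def, hj']
  · rw [Ssum_transfer, Ssum_blockFun u hu e ha' hw']
    rw [tsum_eq_single j]
    · have hj : a' j = ‖w‖ := by simp [ha'_def]
      have h2 : Ssum (fun α => u (e (j, α))) (w' j) =
          Ssum (fun α => u (e (j, α))) ((‖w‖⁻¹ : ℝ) • w) := rfl
      rw [hj, h2, Ssum_smul (fun α => hu _) _ w, smul_smul, mul_inv_cancel₀ hwz, one_smul]
    · intro j' hj'
      simp [ha'_def, hj']

/-- The key lemma: the supremum of achievable constants is at least 1. -/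
lemma exists_good_constant [Infinite ι] (hne : ∃ c ∈ constSet ι X, 0 < c)
    {ε : ℝ} (hε : 0 < ε) : ∃ c ∈ constSet ι X, 0 < c ∧ 1 < c * (1 + ε) := by
  classical
  obtain ⟨e⟩ : Nonempty (ι × ι ≃ ι) := by
    refine Cardinal.eq.mp ?_
    simpa using Cardinal.mul_eq_self (Cardinal.aleph0_le_mk ι)
  set lam : ℝ := sSup (constSet ι X) with hlam_def
  obtain ⟨c₀, hc₀A, hc₀pos⟩ := hne
  have hbdd : BddAbove (constSet ι X) := bddAbove_constSet
  have hAne : (constSet ι X).Nonempty := ⟨c₀, hc₀A⟩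
  have hlam_pos : 0 < lam := lt_of_lt_of_le hc₀pos (le_csSup hbdd hc₀A)
  -- core blocking estimate
  have key : ∀ δ : ℝ, 0 < δ → ∀ c ∈ constSet ι X, c ≤ lam * (lam * (1 + δ)) := by
    intro δ hδ c hcA
    rcases le_or_gt c 0 with hc0 | hcpos
    · have : 0 < lam * (lam * (1 + δ)) := by positivity
      linarith
    set μ : ℝ := lam * (1 + δ) with hμ_def
    have hμ_pos : 0 < μ := by positivity
    have hlamμ : lam < μ := by
      rw [hμ_def]
      nlinarith [mul_pos hlam_pos hδ]
    obtain ⟨u, hu, hlow⟩ := hcA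
    -- choose near-optimal blocks
    have hchoice : ∀ j : ι, ∃ w : E, ‖w‖ = 1 ∧ ‖Ssum (fun α => u (e (j, α))) w‖ < μ := by
      intro j
      by_contra hcon
      push_neg at hcon
      have hmem : μ ∈ constSet ι X := by
        refine ⟨fun α => u (e (j, α)), fun α => hu _, fun y => ?_⟩
        rcases eq_or_ne y 0 with rfl | hy0
        · simp
        · have hy_pos : 0 < ‖y‖ := norm_pos_iff.mpr hy0
          set w : E := (‖y‖⁻¹ : ℝ) • y with hw_def
          have hw1 : ‖w‖ = 1 := by
            rw [hw_def]
            simp only [norm_smul, norm_inv, norm_norm]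
            rw [inv_mul_cancel₀ hy_pos.ne']
          have h := hcon w hw1
          rw [hw_def, Ssum_smul (fun α => hu _) _ y, norm_smul, norm_inv, norm_norm] at h
          calc μ * ‖y‖ ≤ ‖y‖⁻¹ * ‖Ssum (fun α => u (e (j, α))) y‖ * ‖y‖ := by
                exact mul_le_mul_of_nonneg_right h hy_pos.le
            _ = ‖Ssum (fun α => u (e (j, α))) y‖ := by
                field_simp
      have : μ ≤ lam := le_csSup hbdd hmem
      linarith
    choose w hw1 hw2 using hchoice
    set n : ι → ℝ := fun j => ‖Ssum (fun α => u (e (j, α))) (w j)‖ with hn_def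
    have hn_lt : ∀ j, n j < μ := hw2
    have hn_ge : ∀ j, c ≤ n j := by
      intro j
      obtain ⟨z, hz_norm, hz_eq⟩ := exists_transport e u hu j (w j)
      have := hlow z
      rw [hz_norm, hw1 j, mul_one, hz_eq] at this
      exact this
    have hn_pos : ∀ j, 0 < n j := fun j => lt_of_lt_of_le hcpos (hn_ge j)
    set t : ι → ℝ := fun j => (n j)⁻¹ with ht_def
    have ht_pos : ∀ j, 0 < t j := fun j => inv_pos.mpr (hn_pos j)
    have ht_le : ∀ j, t j ≤ c⁻¹ := fun j => inv_anti₀ hcpos (hn_ge j)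
    have ht_ge : ∀ j, μ⁻¹ ≤ t j := fun j => inv_anti₀ (hn_pos j) (hn_lt j).le
    set u' : ι → X := fun j => t j • Ssum (fun α => u (e (j, α))) (w j) with hu'_def
    have hu'_norm : ∀ j, ‖u' j‖ ≤ 1 := by
      intro j
      rw [hu'_def]
      simp only [norm_smul, Real.norm_eq_abs, abs_of_pos (ht_pos j)]
      rw [ht_def]
      rw [inv_mul_cancel₀ (hn_pos j).ne']
    -- the new system has constant ≥ c / μ
    have hmem' : c * μ⁻¹ ∈ constSet ι X := by
      refine ⟨u', hu'_norm, fun y => ?_⟩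
      set a : ι → ℝ := fun j => y j * t j with ha_def
      have ha : Summable fun j => |a j| := by
        refine Summable.of_nonneg_of_le (fun j => abs_nonneg _) (fun j => ?_)
          ((summable_abs_coe y).mul_right c⁻¹)
        rw [ha_def]
        simp only [abs_mul, abs_of_pos (ht_pos j)]
        exact mul_le_mul_of_nonneg_left (ht_le j) (abs_nonneg _)
      have hwle : ∀ j, ‖w j‖ ≤ 1 := fun j => (hw1 j).le
      set z : E := transfer e (fun p => a p.1 * (w p.1 : ∀ _ : ι, ℝ) p.2)
        (summable_blockFun ha hwle) with hz_def
      have hz_eq : Ssum u z = Ssum u' y := by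
        rw [hz_def, Ssum_transfer, Ssum_blockFun u hu e ha hwle]
        unfold Ssum
        refine tsum_congr fun j => ?_
        rw [ha_def, hu'_def]
        simp only
        rw [smul_smul]
        rfl
      have hz_norm : ‖z‖ = ∑' j, |(y : ∀ _ : ι, ℝ) j| * t j := by
        rw [hz_def, norm_transfer, tsum_blockFun ha hwle]
        refine tsum_congr fun j => ?_
        rw [hw1 j, mul_one, ha_def]
        simp only [abs_mul, abs_of_pos (ht_pos j)]
      have hsum_yt : Summable fun j => |(y : ∀ _ : ι, ℝ) j| * t j := by
        refine Summable.of_nonneg_of_le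
          (fun j => mul_nonneg (abs_nonneg _) (ht_pos j).le) (fun j => ?_)
          ((summable_abs_coe y).mul_right c⁻¹)
        exact mul_le_mul_of_nonneg_left (ht_le j) (abs_nonneg _)
      have hz_ge : μ⁻¹ * ‖y‖ ≤ ‖z‖ := by
        rw [hz_norm, norm_eq_tsum_abs, ← tsum_mul_left]
        refine Summable.tsum_le_tsum (fun j => ?_) ((summable_abs_coe y).mul_left μ⁻¹) hsum_yt
        rw [mul_comm]
        exact mul_le_mul_of_nonneg_left (ht_ge j) (abs_nonneg _)
      calc c * μ⁻¹ * ‖y‖ = c * (μ⁻¹ * ‖y‖) := by ring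
        _ ≤ c * ‖z‖ := mul_le_mul_of_nonneg_left hz_ge hcpos.le
        _ ≤ ‖Ssum u z‖ := hlow z
        _ = ‖Ssum u' y‖ := by rw [hz_eq]
    have hle : c * μ⁻¹ ≤ lam := le_csSup hbdd hmem'
    calc c = c * μ⁻¹ * μ := by field_simp
      _ ≤ lam * μ := mul_le_mul_of_nonneg_right hle hμ_pos.le
      _ = lam * (lam * (1 + δ)) := by rw [hμ_def]
  -- conclude lam ≥ 1
  have hlam_sq : lam ≤ lam * lam := by
    refine le_of_forall_pos_le_add fun η hη => ?_
    have hδ : 0 < η / (lam * lam) := by positivity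
    have h1 : lam ≤ lam * (lam * (1 + η / (lam * lam))) :=
      csSup_le hAne fun c hc => key _ hδ c hc
    have h2 : lam * (lam * (1 + η / (lam * lam))) = lam * lam + η := by
      field_simp
    linarith
  have hlam_ge_one : 1 ≤ lam := by
    have := (mul_le_mul_iff_right₀ hlam_pos).mp (by linarith [hlam_sq] : lam * 1 ≤ lam * lam)
    exact this
  -- extract a good constant
  have hlt : (1 + ε)⁻¹ < lam := by
    have h1 : (1 + ε)⁻¹ < 1 := by
      rw [inv_lt_one_iff₀]
      right
      linarith
    linarith
  obtain ⟨c, hcA, hclt⟩ := exists_lt_of_lt_csSup hAne hlt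
  refine ⟨c, hcA, lt_trans (by positivity) hclt, ?_⟩
  have := mul_lt_mul_of_pos_right hclt (by linarith : (0:ℝ) < 1 + ε)
  rwa [inv_mul_cancel₀ (by linarith : (1:ℝ) + ε ≠ 0)] at this

end JamesEllOne

set_option maxHeartbeats 1000000 in
set_option synthInstance.maxHeartbeats 400000 in
open JamesEllOne in
/-- Let `κ` be an infinite cardinal, realized as the cardinality of the
infinite index type `ι`. If a real Banach space `X` contains a subspace isomorphic to
`ℓ¹(κ)`, then for every `ε > 0`, `X` contains a closed subspace `(1+ε)`-isomorphic to
`ℓ¹(κ)`. -/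
theorem contains_almost_isometric_ellOne_of_contains_isomorphic_ellOne
    (ι : Type*) [Infinite ι]
    (X : Type*) [NormedAddCommGroup X] [NormedSpace ℝ X] [CompleteSpace X]
    (hembed : ∃ T : lp (fun _ : ι => ℝ) 1 →L[ℝ] X,
      ∃ c : ℝ, 0 < c ∧ ∀ y, c * ‖y‖ ≤ ‖T y‖)
    (ε : ℝ) (hε : 0 < ε) :
    ∃ Z : Submodule ℝ X, IsClosed (Z : Set X) ∧
      ∃ T : lp (fun _ : ι => ℝ) 1 ≃L[ℝ] Z,
        ‖(T : lp (fun _ : ι => ℝ) 1 →L[ℝ] Z)‖ *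
          ‖(T.symm : Z →L[ℝ] lp (fun _ : ι => ℝ) 1)‖ ≤ 1 + ε := by
  classical
  obtain ⟨T₀, c₀, hc₀pos, hlow₀⟩ := hembed
  haveI : Fact ((1 : ENNReal) ≤ 1) := ⟨le_rfl⟩
  -- `X` contains a system with positive constant
  have hT₀_pos : 0 < ‖T₀‖ := by
    obtain α₀ : ι := Classical.arbitrary ι
    have h1 : ‖(lp.single 1 α₀ (1:ℝ) : lp (fun _ : ι => ℝ) 1)‖ = 1 := norm_single_one α₀
    have h2 := hlow₀ (lp.single 1 α₀ (1:ℝ))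
    rw [h1, mul_one] at h2
    have h3 := T₀.le_opNorm (lp.single 1 α₀ (1:ℝ))
    rw [h1, mul_one] at h3
    linarith
  have hne : ∃ c ∈ constSet ι X, 0 < c := by
    refine ⟨c₀ * ‖T₀‖⁻¹, ⟨fun α => ‖T₀‖⁻¹ • T₀ (lp.single 1 α (1:ℝ)), fun α => ?_, fun y => ?_⟩,
      by positivity⟩
    · rw [norm_smul, norm_inv, norm_norm]
      have h3 := T₀.le_opNorm (lp.single 1 α (1:ℝ))
      rw [norm_single_one α, mul_one] at h3
      calc ‖T₀‖⁻¹ * ‖T₀ (lp.single 1 α 1)‖ ≤ ‖T₀‖⁻¹ * ‖T₀‖ :=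
            mul_le_mul_of_nonneg_left h3 (by positivity)
        _ = 1 := inv_mul_cancel₀ hT₀_pos.ne'
    · have hSsum : Ssum (fun α => ‖T₀‖⁻¹ • T₀ (lp.single 1 α (1:ℝ))) y = ‖T₀‖⁻¹ • T₀ y := by
        unfold Ssum
        have hc : ∀ α, (y : ∀ _ : ι, ℝ) α • (‖T₀‖⁻¹ • T₀ (lp.single 1 α (1:ℝ))) =
            ‖T₀‖⁻¹ • T₀ (lp.single 1 α ((y : ∀ _ : ι, ℝ) α)) := by
          intro α
          rw [smul_comm]
          congr 1
          rw [← map_smul]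
          congr 1
          have : (lp.single 1 α ((y : ∀ _ : ι, ℝ) α) : lp (fun _ : ι => ℝ) 1) =
              lp.single 1 α ((y : ∀ _ : ι, ℝ) α • (1:ℝ)) := by
            rw [smul_eq_mul, mul_one]
          rw [this, lp.single_smul]
        rw [tsum_congr hc]
        have hs : HasSum (fun α => lp.single 1 α ((y : ∀ _ : ι, ℝ) α))
            (y : lp (fun _ : ι => ℝ) 1) := lp.hasSum_single (by norm_num) y
        have hs2 : HasSum (fun α => T₀ (lp.single 1 α ((y : ∀ _ : ι, ℝ) α))) (T₀ y) :=
          hs.mapL T₀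
        exact (hs2.const_smul (‖T₀‖⁻¹ : ℝ)).tsum_eq
      rw [hSsum, norm_smul, norm_inv, norm_norm]
      calc c₀ * ‖T₀‖⁻¹ * ‖y‖ = ‖T₀‖⁻¹ * (c₀ * ‖y‖) := by ring
        _ ≤ ‖T₀‖⁻¹ * ‖T₀ y‖ := mul_le_mul_of_nonneg_left (hlow₀ y) (by positivity)
  -- find a good system
  obtain ⟨c, hcA, hcpos, hclarge⟩ := exists_good_constant hne hε
  obtain ⟨u, hu, hlow⟩ := hcA
  -- bundle `Ssum u` into a continuous linear map
  let Slin : lp (fun _ : ι => ℝ) 1 →ₗ[ℝ] X :=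
    { toFun := Ssum u
      map_add' := Ssum_add hu
      map_smul' := Ssum_smul hu }
  let S : lp (fun _ : ι => ℝ) 1 →L[ℝ] X :=
    LinearMap.mkContinuous Slin 1 fun y => by
      rw [one_mul]; exact norm_Ssum_le hu y
  have hS_apply : ∀ y, S y = Ssum u y := fun y => rfl
  have hS_low : ∀ y, c * ‖y‖ ≤ ‖S y‖ := fun y => hlow y
  have hS_anti : AntilipschitzWith (⟨c⁻¹, by positivity⟩ : NNReal) S := by
    refine ContinuousLinearMap.antilipschitz_of_bound S fun y => ?_
    show ‖y‖ ≤ c⁻¹ * ‖S y‖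
    calc ‖y‖ = c⁻¹ * (c * ‖y‖) := by
          rw [← mul_assoc, inv_mul_cancel₀ hcpos.ne', one_mul]
      _ ≤ c⁻¹ * ‖S y‖ := mul_le_mul_of_nonneg_left (hS_low y) (by positivity)
  have hclosed : IsClosed ((LinearMap.range (S : lp (fun _ : ι => ℝ) 1 →ₗ[ℝ] X) : Submodule ℝ X) : Set X) := by
    have := hS_anti.isClosed_range S.uniformContinuous
    convert this using 1
    ext x; simp [LinearMap.mem_range]
  refine ⟨LinearMap.range (S : lp (fun _ : ι => ℝ) 1 →ₗ[ℝ] X), hclosed, ?_⟩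
  haveI : CompleteSpace (LinearMap.range (S : lp (fun _ : ι => ℝ) 1 →ₗ[ℝ] X) : Submodule ℝ X) :=
    hclosed.completeSpace_coe
  -- the co-restriction of S
  let Scod : lp (fun _ : ι => ℝ) 1 →L[ℝ] (LinearMap.range (S : lp (fun _ : ι => ℝ) 1 →ₗ[ℝ] X) : Submodule ℝ X) :=
    S.codRestrict (LinearMap.range (S : lp (fun _ : ι => ℝ) 1 →ₗ[ℝ] X)) fun y => LinearMap.mem_range_self _ y
  have hScod_inj : LinearMap.ker (Scod : lp (fun _ : ι => ℝ) 1 →ₗ[ℝ] (LinearMap.range (S : lp (fun _ : ι => ℝ) 1 →ₗ[ℝ] X) : Submodule ℝ X)) = ⊥ := by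
    rw [LinearMap.ker_eq_bot']
    intro y hy
    have h1 : S y = 0 := by
      have : (Scod y : X) = 0 := by rw [show Scod y = 0 from hy]; rfl
      exact this
    by_contra hy0
    have hy_pos : 0 < ‖y‖ := norm_pos_iff.mpr hy0
    have := hS_low y
    rw [h1, norm_zero] at this
    nlinarith
  have hScod_surj : LinearMap.range (Scod : lp (fun _ : ι => ℝ) 1 →ₗ[ℝ] (LinearMap.range (S : lp (fun _ : ι => ℝ) 1 →ₗ[ℝ] X) : Submodule ℝ X)) = ⊤ := by
    rw [Submodule.eq_top_iff']
    rintro ⟨x, hx⟩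
    obtain ⟨y, hy⟩ := LinearMap.mem_range.mp hx
    exact ⟨y, Subtype.ext hy⟩
  let T : lp (fun _ : ι => ℝ) 1 ≃L[ℝ] (LinearMap.range (S : lp (fun _ : ι => ℝ) 1 →ₗ[ℝ] X) : Submodule ℝ X) :=
    ContinuousLinearEquiv.ofBijective Scod hScod_inj hScod_surj
  refine ⟨T, ?_⟩
  have hT_apply : ∀ y, ((T y : (LinearMap.range (S : lp (fun _ : ι => ℝ) 1 →ₗ[ℝ] X) : Submodule ℝ X)) : X) = S y := fun y => rfl
  have hT_norm : ‖(T : lp (fun _ : ι => ℝ) 1 →L[ℝ] (LinearMap.range (S : lp (fun _ : ι => ℝ) 1 →ₗ[ℝ] X) : Submodule ℝ X))‖ ≤ 1 := by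
    refine ContinuousLinearMap.opNorm_le_bound _ zero_le_one fun y => ?_
    rw [one_mul, ContinuousLinearEquiv.coe_coe]
    show ‖((T y : (LinearMap.range (S : lp (fun _ : ι => ℝ) 1 →ₗ[ℝ] X) : Submodule ℝ X)) : X)‖ ≤ ‖y‖
    rw [hT_apply y, hS_apply]
    exact norm_Ssum_le hu y
  have hTsymm_norm : ‖(T.symm : (LinearMap.range (S : lp (fun _ : ι => ℝ) 1 →ₗ[ℝ] X) : Submodule ℝ X) →L[ℝ]
      lp (fun _ : ι => ℝ) 1)‖ ≤ c⁻¹ := by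
    refine ContinuousLinearMap.opNorm_le_bound _ (by positivity) fun z => ?_
    rw [ContinuousLinearEquiv.coe_coe]
    have hnorm : ∀ v : (LinearMap.range (S : lp (fun _ : ι => ℝ) 1 →ₗ[ℝ] X) : Submodule ℝ X), ‖v‖ = ‖(v : X)‖ := fun v => rfl
    have h1 : ‖z‖ = ‖S (T.symm z)‖ := by
      conv_lhs => rw [hnorm z, ← T.apply_symm_apply z]
      rw [hT_apply]
    have h2 := hS_low (T.symm z)
    rw [← h1] at h2
    have h3 : c⁻¹ * (c * ‖T.symm z‖) ≤ c⁻¹ * ‖z‖ := mul_le_mul_of_nonneg_left h2 (by positivity)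
    rwa [← mul_assoc, inv_mul_cancel₀ hcpos.ne', one_mul] at h3
  have hfin : c⁻¹ ≤ 1 + ε := by
    have h3 : c⁻¹ * 1 ≤ c⁻¹ * (c * (1 + ε)) := mul_le_mul_of_nonneg_left hclarge.le (by positivity)
    rwa [mul_one, ← mul_assoc, inv_mul_cancel₀ hcpos.ne', one_mul] at h3
  have hmul := mul_le_mul hT_norm hTsymm_norm (ContinuousLinearMap.opNorm_nonneg _) zero_le_one
  rw [one_mul] at hmul
  exact hmul.trans hfin
end
end
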